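/- arXiv:1507.02496 — 8 statements merged into one kernel-verified Lean document; each statement's English description precedes it below -/
import Mathlib

section
/- There exists a maximal almost disjoint (m.a.d.) family of functions in the Baire space ω^ω which is not s-measurable. -/
open Filter

/-- Two functions in Baire space are eventually different. -/
def EvDiff (f g : ℕ → ℕ) : Prop := ∀ᶠ n in atTop, f n ≠ g n

/-- An almost disjoint (a.d.) family of functions in Baire space. -/
def ADFamily (A : Set (ℕ → ℕ)) : Prop := A.Pairwise EvDiff

/-- A maximal almost disjoint (m.a.d.) family. -/
def MADFamily (A : Set (ℕ → ℕ)) : Prop :=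
  ADFamily A ∧ ∀ B : Set (ℕ → ℕ), ADFamily B → A ⊆ B → B = A

/-- s-measurability (Marczewski measurability). -/
def SMeasurable (A : Set (ℕ → ℕ)) : Prop :=
  ∀ P : Set (ℕ → ℕ), Perfect P → P.Nonempty →
    ∃ Q : Set (ℕ → ℕ), Perfect Q ∧ Q.Nonempty ∧ Q ⊆ P ∧ (Q ⊆ A ∨ Q ∩ A = ∅)

/-- A tree on ω: a set of finite sequences closed under initial segments. -/
def IsTree (T : Set (List ℕ)) : Prop := ∀ s ∈ T, ∀ t : List ℕ, t <+: s → t ∈ T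

/-- The set of branches `[T]` of a tree `T`. -/
def branches (T : Set (List ℕ)) : Set (ℕ → ℕ) :=
  {x | ∀ n : ℕ, (List.ofFn fun i : Fin n => x i) ∈ T}

/-- A node `t` is infinitely splitting in `T`. -/
def InfSplitting (T : Set (List ℕ)) (t : List ℕ) : Prop :=
  {n : ℕ | t ++ [n] ∈ T}.Infinite

/-- A Laver tree: there is a stem `s ∈ T` such that every node extending `s`
is infinitely splitting. -/
def IsLaver (T : Set (List ℕ)) : Prop :=
  IsTree T ∧ ∃ s ∈ T, ∀ t ∈ T, s <+: t → InfSplitting T t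

/-- A Miller tree: there is a node `s ∈ T` such that every node extending `s`
has an infinitely splitting extension in `T`. -/
def IsMiller (T : Set (List ℕ)) : Prop :=
  IsTree T ∧ ∃ s ∈ T, ∀ t ∈ T, s <+: t → ∃ t' ∈ T, t <+: t' ∧ InfSplitting T t'

/-- l-measurability. -/
def LMeasurable (A : Set (ℕ → ℕ)) : Prop :=
  ∀ T : Set (List ℕ), IsLaver T →
    ∃ S : Set (List ℕ), IsLaver S ∧ S ⊆ T ∧ (branches S ⊆ A ∨ branches S ∩ A = ∅)

/-- m-measurability. -/
def MMeasurable (A : Set (ℕ → ℕ)) : Prop :=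
  ∀ T : Set (List ℕ), IsMiller T →
    ∃ S : Set (List ℕ), IsMiller S ∧ S ⊆ T ∧ (branches S ⊆ A ∨ branches S ∩ A = ∅)

/-- A dominating family in Baire space. -/
def Dominating (D : Set (ℕ → ℕ)) : Prop :=
  ∀ x : ℕ → ℕ, ∃ d ∈ D, ∀ᶠ n in atTop, x n ≤ d n

/-- The dominating number 𝔡. -/
noncomputable def dominatingNumber : Cardinal :=
  sInf {c : Cardinal | ∃ D : Set (ℕ → ℕ), Dominating D ∧ Cardinal.mk ↥D = c}

/-- Eventual domination `f ≤* g`. -/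
def EvLE (f g : ℕ → ℕ) : Prop := ∀ᶠ n in atTop, f n ≤ g n

/-- An unbounded family in Baire space. -/
def UnboundedFamily (B : Set (ℕ → ℕ)) : Prop :=
  ¬ ∃ x : ℕ → ℕ, ∀ f ∈ B, EvLE f x

/-- The bounding number 𝔟. -/
noncomputable def boundingNumber : Cardinal :=
  sInf {c : Cardinal | ∃ B : Set (ℕ → ℕ), UnboundedFamily B ∧ Cardinal.mk ↥B = c}


namespace MadCons

open Set Cardinal

/-! ### The coding functions -/

def res (x : ℕ → Bool) (n : ℕ) : List Bool := List.ofFn fun i : Fin n => x i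

noncomputable def code : List Bool → ℕ := Encodable.encode

lemma code_inj : Function.Injective code := Encodable.encode_injective

noncomputable def F (x : ℕ → Bool) : ℕ → ℕ := fun n => 2 * code (res x n)

noncomputable def G (x : ℕ → Bool) : ℕ → ℕ := fun n =>
  if n % 2 = 0 then 2 * code (res x n) else 2 * code (res x n) + 1

lemma res_eq_iff {x y : ℕ → Bool} {n : ℕ} : res x n = res y n ↔ ∀ i : Fin n, x i = y i := by
  rw [res, res, List.ofFn_inj]
  exact ⟨fun h i => congrFun h i, fun h => funext h⟩

lemma res_ne {x y : ℕ → Bool} (hxy : x ≠ y) : ∃ m, ∀ n, m < n → res x n ≠ res y n := by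
  have : ∃ m, x m ≠ y m := by
    by_contra h; push_neg at h; exact hxy (funext h)
  obtain ⟨m, hm⟩ := this
  exact ⟨m, fun n hn h => hm (res_eq_iff.1 h ⟨m, hn⟩)⟩

lemma F_even (x : ℕ → Bool) (n : ℕ) : F x n % 2 = 0 := by simp [F, Nat.mul_mod_right]

lemma G_odd (x : ℕ → Bool) {n : ℕ} (hn : n % 2 = 1) : G x n % 2 = 1 := by
  simp [G, hn]

lemma G_eq_F_even (x : ℕ → Bool) {n : ℕ} (hn : n % 2 = 0) : G x n = F x n := by
  simp [G, F, hn]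

lemma F_inj : Function.Injective F := by
  intro x y h
  by_contra hxy
  obtain ⟨m, hm⟩ := res_ne hxy
  refine hm (m+1) (Nat.lt_succ_self m) (code_inj ?_)
  have := congrFun h (m+1)
  simp only [F] at this
  omega

lemma F_ne_eventually {x y : ℕ → Bool} (hxy : x ≠ y) : ∃ m, ∀ n, m < n → F x n ≠ F y n := by
  obtain ⟨m, hm⟩ := res_ne hxy
  exact ⟨m, fun n hn h => hm n hn (code_inj (by simp only [F] at h; omega))⟩

lemma G_ne_eventually {x y : ℕ → Bool} (hxy : x ≠ y) : ∃ m, ∀ n, m < n → G x n ≠ G y n := by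
  obtain ⟨m, hm⟩ := res_ne hxy
  refine ⟨m, fun n hn h => hm n hn (code_inj ?_)⟩
  by_cases he : n % 2 = 0 <;> simp only [G, he, if_true, if_false] at h <;> omega

lemma F_ne_G_eventually {x y : ℕ → Bool} (hxy : x ≠ y) : ∃ m, ∀ n, m < n → F x n ≠ G y n := by
  obtain ⟨m, hm⟩ := res_ne hxy
  refine ⟨m, fun n hn h => ?_⟩
  by_cases he : n % 2 = 0
  · exact hm n hn (code_inj (by simp only [F, G, he, if_true] at h; omega))
  · simp only [F, G, he, if_false] at h; omega

lemma G_not_mem_range_F (x : ℕ → Bool) : G x ∉ Set.range F := by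
  rintro ⟨y, hy⟩
  have h1 : F y 1 % 2 = 0 := F_even y 1
  have h2 : G x 1 % 2 = 1 := G_odd x (by norm_num)
  rw [← hy] at h2
  omega

/-! ### The range of `F` is a nonempty perfect set -/

lemma F_continuous : Continuous F := by
  apply continuous_pi
  intro n
  have : (fun x : ℕ → Bool => F x n) =
      (fun v : Fin n → Bool => 2 * code (List.ofFn v)) ∘ (fun x i => x i) := rfl
  rw [this]
  exact (continuous_of_discreteTopology).comp (continuous_pi fun i => continuous_apply (i : ℕ))

lemma isClosed_range_F : IsClosed (Set.range F) :=
  (isCompact_range F_continuous).isClosed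

lemma preperfect_range_F : Preperfect (Set.range F) := by
  intro p hp
  rw [accPt_iff_nhds]
  intro U hU
  obtain ⟨x, rfl⟩ := hp
  rw [nhds_pi, Filter.mem_pi] at hU
  obtain ⟨I, hIfin, t, ht, htU⟩ := hU
  obtain ⟨N, hN⟩ : ∃ N, ∀ i ∈ I, i < N := by
    rcases hIfin.bddAbove with ⟨N, hN⟩
    exact ⟨N + 1, fun i hi => Nat.lt_succ_of_le (hN hi)⟩
  set x' := Function.update x N (!x N) with hx'
  have hagree : ∀ n, n ≤ N → F x' n = F x n := by
    intro n hn
    have : res x' n = res x n := by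
      rw [res_eq_iff]
      intro i
      exact Function.update_of_ne (by omega) _ x
    simp [F, this]
  have hne : F x' ≠ F x := by
    intro h
    have := congrFun h (N + 1)
    simp only [F] at this
    have hres : res x' (N+1) = res x (N+1) := code_inj (by omega)
    have := res_eq_iff.1 hres ⟨N, Nat.lt_succ_self N⟩
    simp [hx', Function.update_self] at this
  refine ⟨F x', ⟨htU ?_, ⟨x', rfl⟩⟩, hne⟩
  intro i hi
  have : F x' i = F x i := hagree i (le_of_lt (hN i hi))
  rw [this]
  have := ht i
  rwa [nhds_discrete, Filter.mem_pure] at this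

lemma perfect_range_F : Perfect (Set.range F) := ⟨isClosed_range_F, preperfect_range_F⟩

/-! ### Cardinality facts -/

def tmap (C : Set (ℕ → ℕ)) : Set (List ℕ) :=
  {l | ∃ x ∈ C, ∀ (k : ℕ) (h : k < l.length), l.get ⟨k, h⟩ = x k}

lemma closed_eq_of_tmap_eq {C D : Set (ℕ → ℕ)} (hC : IsClosed C) (hD : IsClosed D)
    (h : tmap C = tmap D) : C = D := by
  have key : ∀ (C D : Set (ℕ → ℕ)), IsClosed D → tmap C ⊆ tmap D → C ⊆ D := by
    intro C D hD hsub x hx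
    have hmem : ∀ n : ℕ, ∃ y ∈ D, ∀ k < n, y k = x k := by
      intro n
      have hl : (List.ofFn fun i : Fin n => x i) ∈ tmap C := by
        refine ⟨x, hx, fun k h => ?_⟩
        simp [List.get_ofFn]
      obtain ⟨y, hy, hyk⟩ := hsub hl
      refine ⟨y, hy, fun k hk => ?_⟩
      have hk' : k < (List.ofFn fun i : Fin n => x i).length := by simpa using hk
      have := hyk k hk'
      simp [List.get_ofFn] at this
      exact this.symm
    choose y hyD hyx using hmem
    have htend : Filter.Tendsto y atTop (nhds x) := by
      rw [tendsto_pi_nhds]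
      intro i
      refine Filter.Tendsto.congr' ?_ (tendsto_const_nhds (x := x i))
      filter_upwards [Filter.eventually_ge_atTop (i+1)] with n hn
      exact (hyx n i (by omega)).symm
    exact hD.mem_of_tendsto htend (Filter.Eventually.of_forall hyD)
  exact le_antisymm (key C D hD h.le) (key D C hC h.ge)

lemma mk_perfect_subsets_le (P : Set (ℕ → ℕ)) :
    #{Q : Set (ℕ → ℕ) | Perfect Q ∧ Q.Nonempty ∧ Q ⊆ P} ≤ Cardinal.continuum := by
  have hinj : Function.Injective
      (fun Q : {Q : Set (ℕ → ℕ) | Perfect Q ∧ Q.Nonempty ∧ Q ⊆ P} => tmap Q.1) := by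
    intro Q R h
    exact Subtype.ext (closed_eq_of_tmap_eq Q.2.1.closed R.2.1.closed h)
  calc #{Q : Set (ℕ → ℕ) | Perfect Q ∧ Q.Nonempty ∧ Q ⊆ P} ≤ #(Set (List ℕ)) :=
        Cardinal.mk_le_of_injective hinj
    _ = 2 ^ (#(List ℕ)) := Cardinal.mk_set
    _ = 2 ^ Cardinal.aleph0 := by rw [Cardinal.mk_list_eq_aleph0]
    _ = Cardinal.continuum := Cardinal.two_power_aleph0

lemma continuum_le_mk_perfect {Q : Set (ℕ → ℕ)} (hQ : Perfect Q) (hne : Q.Nonempty) :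
    Cardinal.continuum ≤ #Q := by
  letI := TopologicalSpace.upgradeIsCompletelyMetrizable (ℕ → ℕ)
  obtain ⟨f, hfr, _, hfi⟩ := hQ.exists_nat_bool_injection hne
  have : Function.Injective (fun z : ℕ → Bool => (⟨f z, hfr ⟨z, rfl⟩⟩ : Q)) := by
    intro a b h
    exact hfi (congrArg Subtype.val h)
  calc Cardinal.continuum = #(ℕ → Bool) := by
        rw [Cardinal.mk_arrow]
        simp [Cardinal.two_power_aleph0]
    _ ≤ #Q := Cardinal.mk_le_of_injective this

/-! ### The Bernstein-type selection lemma -/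

theorem bernstein_aux {M : Type} (κ : Cardinal) (hκ : Cardinal.aleph0 ≤ κ)
    (𝒮 : Set (Set M)) (h1 : #𝒮 ≤ κ) (h2 : ∀ Q ∈ 𝒮, κ ≤ #Q) :
    ∃ a b : 𝒮 → M, (∀ Q : 𝒮, a Q ∈ Q.1) ∧ (∀ Q : 𝒮, b Q ∈ Q.1) ∧
      ∀ Q R : 𝒮, a Q ≠ b R := by
  classical
  rcases 𝒮.eq_empty_or_nonempty with rfl | ⟨Q₀, hQ₀⟩
  · exact ⟨fun Q => ((Set.notMem_empty _ Q.2).elim), fun Q => ((Set.notMem_empty _ Q.2).elim),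
      fun Q => ((Set.notMem_empty _ Q.2).elim), fun Q => ((Set.notMem_empty _ Q.2).elim),
      fun Q R => ((Set.notMem_empty _ Q.2).elim)⟩
  set ι := κ.ord.ToType with hι
  have hmkι : #ι = κ := Cardinal.mk_ord_toType κ
  obtain ⟨e⟩ : Nonempty (𝒮 ↪ ι) := by
    rw [← Cardinal.le_def, hmkι]; exact h1
  set Qof : ι → Set M := fun i =>
    if h : ∃ Q : 𝒮, e Q = i then (h.choose : Set M) else (Q₀ : Set M) with hQof
  have hQofS : ∀ i, Qof i ∈ 𝒮 := by
    intro i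
    simp only [hQof]
    split
    · rename_i h; exact h.choose.2
    · exact hQ₀
  have hQofe : ∀ Q : 𝒮, Qof (e Q) = (Q : Set M) := by
    intro Q
    have h : ∃ R : 𝒮, e R = e Q := ⟨Q, rfl⟩
    simp only [hQof, dif_pos h]
    have : h.choose = Q := e.injective h.choose_spec
    rw [this]
  have hseg : ∀ i : ι, #{j : ι // j < i} < κ := fun i => Cardinal.mk_Iio_ord_toType i
  have key : ∀ (i : ι) (g : ∀ j : ι, j < i → M × M), ∃ p : M × M,
      p.1 ∈ Qof i ∧ p.2 ∈ Qof i ∧ p.1 ≠ p.2 ∧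
      ∀ (j : ι) (hj : j < i),
        p.1 ≠ (g j hj).1 ∧ p.1 ≠ (g j hj).2 ∧ p.2 ≠ (g j hj).1 ∧ p.2 ≠ (g j hj).2 := by
    intro i g
    set V : Set M := (Set.range fun j : {j : ι // j < i} => (g j.1 j.2).1) ∪
      (Set.range fun j : {j : ι // j < i} => (g j.1 j.2).2) with hV
    have hVcard : #V < κ := by
      apply lt_of_le_of_lt (Cardinal.mk_union_le _ _)
      exact Cardinal.add_lt_of_lt hκ
        (lt_of_le_of_lt Cardinal.mk_range_le (hseg i))
        (lt_of_le_of_lt Cardinal.mk_range_le (hseg i))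
    have hQcard : κ ≤ #(Qof i) := h2 _ (hQofS i)
    have hsub : ∀ W : Set M, #W < κ → ¬ (Qof i ⊆ W) := by
      intro W hW hsubW
      exact absurd (hQcard.trans (Cardinal.mk_le_mk_of_subset hsubW)) (not_le.2 hW)
    have hne1 : (Qof i \ V).Nonempty := by
      rw [Set.diff_nonempty]; exact hsub V hVcard
    obtain ⟨a, haQ, haV⟩ := hne1
    have hne2 : (Qof i \ (insert a V)).Nonempty := by
      rw [Set.diff_nonempty]
      apply hsub
      apply lt_of_le_of_lt (Cardinal.mk_insert_le)
      exact Cardinal.add_lt_of_lt hκ hVcard (lt_of_lt_of_le Cardinal.one_lt_aleph0 hκ)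
    obtain ⟨b, hbQ, hbV⟩ := hne2
    have hbV' : b ∉ V := fun h => hbV (Set.mem_insert_of_mem _ h)
    have hba : b ≠ a := fun h => hbV (h ▸ Set.mem_insert _ _)
    refine ⟨(a, b), haQ, hbQ, hba.symm, ?_⟩
    intro j hj
    have hmem1 : (g j hj).1 ∈ V := Set.mem_union_left _ ⟨⟨j, hj⟩, rfl⟩
    have hmem2 : (g j hj).2 ∈ V := Set.mem_union_right _ ⟨⟨j, hj⟩, rfl⟩
    refine ⟨fun h => haV ?_, fun h => haV ?_, fun h => hbV' ?_, fun h => hbV' ?_⟩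
    · rw [show a = (g j hj).1 from h]; exact hmem1
    · rw [show a = (g j hj).2 from h]; exact hmem2
    · rw [show b = (g j hj).1 from h]; exact hmem1
    · rw [show b = (g j hj).2 from h]; exact hmem2
  have wf : WellFounded ((· < ·) : ι → ι → Prop) := wellFounded_lt
  set step : ∀ i : ι, (∀ j : ι, j < i → M × M) → M × M :=
    fun i g => (key i g).choose with hstep
  set pick : ι → M × M := wf.fix step with hpick
  have hfix : ∀ i, pick i = step i fun j _ => pick j := fun i => wf.fix_eq step i
  have spec : ∀ i : ι,
      (pick i).1 ∈ Qof i ∧ (pick i).2 ∈ Qof i ∧ (pick i).1 ≠ (pick i).2 ∧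
      ∀ (j : ι) (hj : j < i),
        (pick i).1 ≠ (pick j).1 ∧ (pick i).1 ≠ (pick j).2 ∧
        (pick i).2 ≠ (pick j).1 ∧ (pick i).2 ≠ (pick j).2 := by
    intro i
    have h := (key i fun j _ => pick j).choose_spec
    rw [hfix i]
    exact h
  refine ⟨fun Q => (pick (e Q)).1, fun Q => (pick (e Q)).2, ?_, ?_, ?_⟩
  · intro Q
    have := (spec (e Q)).1
    rwa [hQofe Q] at this
  · intro Q
    have := (spec (e Q)).2.1
    rwa [hQofe Q] at this
  · intro Q R
    rcases lt_trichotomy (e Q) (e R) with h | h | h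
    · exact fun hc => ((spec (e R)).2.2.2 (e Q) h).2.2.1 hc.symm
    · have hQR : Q = R := e.injective h
      subst hQR
      exact (spec (e Q)).2.2.1
    · exact ((spec (e Q)).2.2.2 (e R) h).2.1

end MadCons

/-! ### Assembly -/

lemma evDiff_of_exists {f g : ℕ → ℕ} (h : ∃ m, ∀ n, m < n → f n ≠ g n) : EvDiff f g := by
  obtain ⟨m, hm⟩ := h
  rw [EvDiff, Filter.eventually_atTop]
  exact ⟨m + 1, fun n hn => hm n (by omega)⟩

theorem exists_mad_not_sMeasurable :
    ∃ A : Set (ℕ → ℕ), MADFamily A ∧ ¬ SMeasurable A := by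
  classical
  open MadCons in
  set P : Set (ℕ → ℕ) := Set.range MadCons.F with hP
  set 𝒮 : Set (Set (ℕ → ℕ)) := {Q : Set (ℕ → ℕ) | Perfect Q ∧ Q.Nonempty ∧ Q ⊆ P} with h𝒮
  obtain ⟨a, b, haQ, hbQ, hab⟩ := MadCons.bernstein_aux Cardinal.continuum
    Cardinal.aleph0_le_continuum 𝒮 (MadCons.mk_perfect_subsets_le P)
    (fun Q hQ => MadCons.continuum_le_mk_perfect hQ.1 hQ.2.1)
  set S : Set (ℕ → ℕ) := Set.range a with hS
  have hSP : S ⊆ P := by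
    rintro _ ⟨Q, rfl⟩
    exact Q.2.2.2 (haQ Q)
  set Bl : Set (ℕ → ℕ) := {g | ∃ x : ℕ → Bool, MadCons.F x ∉ S ∧ g = MadCons.G x} with hBl
  set F₀ : Set (ℕ → ℕ) := S ∪ Bl with hF₀
  have hBlP : ∀ g ∈ Bl, g ∉ P := by
    rintro g ⟨x, _, rfl⟩
    exact MadCons.G_not_mem_range_F x
  -- F₀ is an a.d. family
  have hF₀ad : ADFamily F₀ := by
    rintro u hu v hv huv
    rcases hu with hu | hu <;> rcases hv with hv | hv
    · obtain ⟨x, rfl⟩ := hSP hu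
      obtain ⟨y, rfl⟩ := hSP hv
      exact evDiff_of_exists (MadCons.F_ne_eventually (fun h => huv (by rw [h])))
    · obtain ⟨x, rfl⟩ := hSP hu
      obtain ⟨y, hy, rfl⟩ := hv
      have hxy : x ≠ y := fun h => hy (h ▸ hu)
      exact evDiff_of_exists (MadCons.F_ne_G_eventually hxy)
    · obtain ⟨x, hx, rfl⟩ := hu
      obtain ⟨y, rfl⟩ := hSP hv
      have hxy : y ≠ x := fun h => hx (h ▸ hv)
      obtain ⟨m, hm⟩ := MadCons.F_ne_G_eventually hxy
      exact evDiff_of_exists ⟨m, fun n hn => (hm n hn).symm⟩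
    · obtain ⟨x, hx, rfl⟩ := hu
      obtain ⟨y, hy, rfl⟩ := hv
      have hxy : x ≠ y := fun h => huv (by rw [h])
      exact evDiff_of_exists (MadCons.G_ne_eventually hxy)
  -- the collection for Zorn's lemma
  set 𝔄 : Set (Set (ℕ → ℕ)) :=
    {Y | F₀ ⊆ Y ∧ ADFamily Y ∧ ∀ z ∈ Y, z ∈ P → z ∈ S} with h𝔄
  have hF₀mem : F₀ ∈ 𝔄 := by
    refine ⟨le_refl _, hF₀ad, ?_⟩
    rintro z (hz | hz) hzP
    · exact hz
    · exact absurd hzP (hBlP z hz)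
  have hchain : ∀ c ⊆ 𝔄, IsChain (· ⊆ ·) c → c.Nonempty →
      ∃ ub ∈ 𝔄, ∀ s ∈ c, s ⊆ ub := by
    intro c hc hchain hcne
    refine ⟨⋃₀ c, ⟨?_, ?_, ?_⟩, fun s hs => Set.subset_sUnion_of_mem hs⟩
    · obtain ⟨Y, hY⟩ := hcne
      exact (hc hY).1.trans (Set.subset_sUnion_of_mem hY)
    · rintro u ⟨Y₁, hY₁, hu⟩ v ⟨Y₂, hY₂, hv⟩ huv
      rcases hchain.total hY₁ hY₂ with h | h
      · exact (hc hY₂).2.1 (h hu) hv huv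
      · exact (hc hY₁).2.1 hu (h hv) huv
    · rintro z ⟨Y, hY, hz⟩ hzP
      exact (hc hY).2.2 z hz hzP
  obtain ⟨A, hF₀A, hAmax⟩ := zorn_subset_nonempty 𝔄 hchain F₀ hF₀mem
  have hA𝔄 : A ∈ 𝔄 := hAmax.1
  obtain ⟨hF₀A', hAad, hAconstr⟩ := hA𝔄
  refine ⟨A, ⟨hAad, ?_⟩, ?_⟩
  -- maximality
  · intro B hBad hAB
    refine Set.Subset.antisymm ?_ hAB
    intro f hfB
    by_contra hfA
    by_cases hcase : f ∈ P ∧ f ∉ S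
    · obtain ⟨⟨x, rfl⟩, hfS⟩ := hcase
      have hGx : MadCons.G x ∈ A := hF₀A' (Set.mem_union_right _ ⟨x, hfS, rfl⟩)
      have hne : MadCons.F x ≠ MadCons.G x := by
        intro h
        exact MadCons.G_not_mem_range_F x (h ▸ Set.mem_range_self x)
      have hev : EvDiff (MadCons.F x) (MadCons.G x) := hBad hfB (hAB hGx) hne
      rw [EvDiff, Filter.eventually_atTop] at hev
      obtain ⟨N, hN⟩ := hev
      have h1 : MadCons.G x (2 * N) = MadCons.F x (2 * N) :=
        MadCons.G_eq_F_even x (by omega)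
      exact hN (2 * N) (by omega) h1.symm
    · push_neg at hcase
      have hins : insert f A ∈ 𝔄 := by
        refine ⟨hF₀A'.trans (Set.subset_insert f A), ?_, ?_⟩
        · apply Set.Pairwise.mono _ hBad
          exact Set.insert_subset hfB hAB
        · rintro z (rfl | hz) hzP
          · exact hcase hzP
          · exact hAconstr z hz hzP
      have := hAmax.2 hins (Set.subset_insert f A)
      exact hfA (this (Set.mem_insert f A))
  -- non-s-measurability
  · intro hs
    obtain ⟨Q, hQperf, hQne, hQP, halt⟩ := hs P MadCons.perfect_range_F
      ⟨MadCons.F (fun _ => false), Set.mem_range_self _⟩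
    have hQ𝒮 : Q ∈ 𝒮 := ⟨hQperf, hQne, hQP⟩
    set Qs : 𝒮 := ⟨Q, hQ𝒮⟩ with hQs
    have haA : a Qs ∈ A := hF₀A' (Set.mem_union_left _ ⟨Qs, rfl⟩)
    have hbS : b Qs ∉ S := by
      rintro ⟨R, hR⟩
      exact hab R Qs hR
    have hbP : b Qs ∈ P := hQP (hbQ Qs)
    have hbA : b Qs ∉ A := fun h => hbS (hAconstr _ h hbP)
    rcases halt with h | h
    · exact hbA (h (hbQ Qs))
    · have : a Qs ∈ Q ∩ A := ⟨haQ Qs, haA⟩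
      rw [h] at this
      exact this
end

section
/- For every dominating family D₀ ⊆ ω^ω there exists a maximal almost disjoint family A ⊆ ω^ω which is simultaneously not s-measurable, not l-measurable and not m-measurable, and which contains a dominating subfamily A' ⊆ A of cardinality at most |D₀|. In particular such an A exists with a dominating subfamily of cardinality at most 𝔡, the least cardinality of a dominating family. -/
open Filter

namespace MadAux

open Set List

/-- initial segment of `x` of length `n`. -/
def seg (x : ℕ → ℕ) (n : ℕ) : List ℕ := List.ofFn fun i : Fin n => x i

@[simp] lemma length_seg (x : ℕ → ℕ) (n : ℕ) : (seg x n).length = n := by simp [seg]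

lemma getElem_seg (x : ℕ → ℕ) (n i : ℕ) (h : i < (seg x n).length) :
    (seg x n)[i] = x i := by
  simp [seg]

lemma take_seg (x : ℕ → ℕ) {n m : ℕ} (h : n ≤ m) : (seg x m).take n = seg x n := by
  apply List.ext_getElem (by simp [Nat.min_eq_left, h])
  intro i h1 h2
  simp only [List.getElem_take, getElem_seg]

lemma mem_branches_iff {T : Set (List ℕ)} {x : ℕ → ℕ} :
    x ∈ branches T ↔ ∀ n, seg x n ∈ T := Iff.rfl

lemma branches_mono {S T : Set (List ℕ)} (h : S ⊆ T) : branches S ⊆ branches T :=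
  fun _ hx n => h (hx n)

/-- the value of the `m`-th child of node `t`. -/
def val (t : List ℕ) (m : ℕ) : ℕ := 2 * Nat.pair m (Encodable.encode t)

lemma val_inj {t t' : List ℕ} {m m' : ℕ} (h : val t m = val t' m') : t = t' ∧ m = m' := by
  unfold val at h
  have h2 : Nat.pair m (Encodable.encode t) = Nat.pair m' (Encodable.encode t') := by omega
  rw [Nat.pair_eq_pair] at h2
  exact ⟨Encodable.encode_injective h2.2, h2.1⟩

lemma le_val (t : List ℕ) (m : ℕ) : m ≤ val t m := by
  have := Nat.left_le_pair m (Encodable.encode t)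
  unfold val; omega

lemma val_mod_two (t : List ℕ) (m : ℕ) : val t m % 2 = 0 := by
  unfold val; omega

/-- The Laver tree of `d`-dominating, history-coding sequences. -/
def Td (d : ℕ → ℕ) : Set (List ℕ) :=
  {t | ∀ i : ℕ, ∀ h : i < t.length, ∃ m, d i ≤ m ∧ t[i] = val (t.take i) m}

lemma isTree_Td (d : ℕ → ℕ) : IsTree (Td d) := by
  rintro s hs t ⟨r, rfl⟩ i h
  obtain ⟨m, hm, hv⟩ := hs i (by simp; omega)
  refine ⟨m, hm, ?_⟩
  rwa [List.getElem_append_left h, List.take_append_of_le_length (by omega)] at hv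

lemma extend_mem_Td {d : ℕ → ℕ} {t : List ℕ} (ht : t ∈ Td d) {m : ℕ}
    (hm : d t.length ≤ m) : t ++ [val t m] ∈ Td d := by
  intro i h
  simp only [List.length_append, List.length_singleton] at h
  rcases Nat.lt_or_ge i t.length with h'is | h'is
  · obtain ⟨m', hm', hv⟩ := ht i h'is
    exact ⟨m', hm', by rwa [List.getElem_append_left h'is,
      List.take_append_of_le_length (by omega)]⟩
  · have hi : i = t.length := by omega
    subst hi
    refine ⟨m, hm, ?_⟩
    rw [List.getElem_concat_length, List.take_append_of_le_length (le_refl _),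
      List.take_length]
    rfl

lemma nil_mem_Td (d : ℕ → ℕ) : [] ∈ Td d := by intro i h; simp at h

lemma isLaver_Td (d : ℕ → ℕ) : IsLaver (Td d) := by
  refine ⟨isTree_Td d, [], nil_mem_Td d, fun t ht _ => ?_⟩
  have : (fun m => val t m) '' (Set.Ici (d t.length)) ⊆ {n : ℕ | t ++ [n] ∈ Td d} := by
    rintro n ⟨m, hm, rfl⟩
    exact extend_mem_Td ht hm
  refine Set.Infinite.mono this ?_
  apply Set.Infinite.image _ (Set.Ici_infinite _)
  intro a _ b _ hab
  exact (val_inj hab).2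

lemma Td_subset_T0 (d : ℕ → ℕ) : Td d ⊆ Td (fun _ => 0) := by
  rintro t ht i h
  obtain ⟨m, _, hv⟩ := ht i h
  exact ⟨m, Nat.zero_le m, hv⟩

lemma branch_spec {d : ℕ → ℕ} {x : ℕ → ℕ} (hx : x ∈ branches (Td d)) (n : ℕ) :
    ∃ m, d n ≤ m ∧ x n = val (seg x n) m := by
  have h := (mem_branches_iff.1 hx) (n + 1) n (by simp)
  rwa [getElem_seg, take_seg x (Nat.le_succ n)] at h

lemma branch_dominates {d : ℕ → ℕ} {x : ℕ → ℕ} (hx : x ∈ branches (Td d)) (n : ℕ) :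
    d n ≤ x n := by
  obtain ⟨m, hm, hv⟩ := branch_spec hx n
  exact hm.trans (hv ▸ le_val _ m)


/-- abbreviation for the full tree. -/
def T0 : Set (List ℕ) := Td (fun _ => 0)

lemma branch_ne_of_seg_ne {x y : ℕ → ℕ} (hx : x ∈ branches T0) (hy : y ∈ branches T0)
    {n : ℕ} (h : seg x n ≠ seg y n) : x n ≠ y n := by
  obtain ⟨m, _, hv⟩ := branch_spec hx n
  obtain ⟨m', _, hv'⟩ := branch_spec hy n
  intro he
  exact h (val_inj (by rw [← hv, ← hv', he])).1

lemma seg_ne_of_lt {x y : ℕ → ℕ} {n₀ n : ℕ} (h : x n₀ ≠ y n₀) (hlt : n₀ < n) :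
    seg x n ≠ seg y n := by
  intro he
  apply h
  have h1 : (seg x n)[n₀]'(by simpa using hlt) = (seg y n)[n₀]'(by simpa using hlt) := by
    simp_rw [he]
  rwa [getElem_seg, getElem_seg] at h1

lemma branch_ne_from {x y : ℕ → ℕ} (hx : x ∈ branches T0) (hy : y ∈ branches T0)
    {n₀ : ℕ} (h : x n₀ ≠ y n₀) : ∀ n, n₀ ≤ n → x n ≠ y n := by
  intro n hn
  rcases eq_or_lt_of_le hn with rfl | hlt
  · exact h
  · exact branch_ne_of_seg_ne hx hy (seg_ne_of_lt h hlt)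

lemma branch_evdiff {x y : ℕ → ℕ} (hx : x ∈ branches T0) (hy : y ∈ branches T0)
    (hne : x ≠ y) : EvDiff x y := by
  obtain ⟨n₀, h⟩ := Function.ne_iff.1 hne
  filter_upwards [eventually_ge_atTop n₀] with n hn
  exact branch_ne_from hx hy h n hn

lemma branch_even {x : ℕ → ℕ} (hx : x ∈ branches T0) (n : ℕ) : x n % 2 = 0 := by
  obtain ⟨m, _, hv⟩ := branch_spec hx n
  rw [hv]; exact val_mod_two _ _

/-- the covering function of a branch `b`. -/
def cov (b : ℕ → ℕ) : ℕ → ℕ :=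
  fun n => if n % 2 = 0 then b n else 2 * Encodable.encode (seg b n) + 1

lemma not_evdiff_cov (b : ℕ → ℕ) : ¬ EvDiff b (cov b) := by
  intro h
  rw [EvDiff, eventually_atTop] at h
  obtain ⟨N, hN⟩ := h
  exact hN (2 * N) (by omega) (by simp [cov, Nat.mul_mod_right])

lemma evdiff_branch_cov {x b : ℕ → ℕ} (hx : x ∈ branches T0) (hb : b ∈ branches T0)
    (hne : x ≠ b) : EvDiff x (cov b) := by
  obtain ⟨n₀, h⟩ := Function.ne_iff.1 hne
  filter_upwards [eventually_ge_atTop n₀] with n hn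
  unfold cov
  split
  · exact branch_ne_from hx hb h n hn
  · have := branch_even hx n
    omega

lemma evdiff_cov_cov {b b' : ℕ → ℕ} (hb : b ∈ branches T0) (hb' : b' ∈ branches T0)
    (hne : b ≠ b') : EvDiff (cov b) (cov b') := by
  obtain ⟨n₀, h⟩ := Function.ne_iff.1 hne
  filter_upwards [eventually_ge_atTop (n₀ + 1)] with n hn
  unfold cov
  split
  · exact branch_ne_from hb hb' h n (by omega)
  · have hs : seg b n ≠ seg b' n := seg_ne_of_lt h (by omega)
    have : Encodable.encode (seg b n) ≠ Encodable.encode (seg b' n) :=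
      fun he => hs (Encodable.encode_injective he)
    omega

lemma cov_not_branch (b : ℕ → ℕ) : cov b ∉ branches T0 := by
  intro h
  have h1 := branch_even h 1
  have h2 : cov b 1 = 2 * Encodable.encode (seg b 1) + 1 := by simp [cov]
  omega

lemma evdiff_symm {f g : ℕ → ℕ} (h : EvDiff f g) : EvDiff g f := by
  filter_upwards [h] with n hn; exact fun he => hn he.symm

lemma not_evdiff_self (f : ℕ → ℕ) : ¬ EvDiff f f := by
  intro h
  obtain ⟨N, hN⟩ := eventually_atTop.1 h
  exact hN N le_rfl rfl


section Scheme

variable {T : Set (List ℕ)} {s : List ℕ}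

/-- a node of `T` above `s` which is infinitely splitting. -/
structure SNode (T : Set (List ℕ)) (s : List ℕ) where
  t : List ℕ
  mem : t ∈ T
  pre : s <+: t
  split : InfSplitting T t

variable (H : ∀ t ∈ T, s <+: t → ∃ t' ∈ T, t <+: t' ∧ InfSplitting T t')

/-- splitting extension of a node above the stem. -/
noncomputable def extSplit (t : List ℕ) (ht : t ∈ T) (hp : s <+: t) : SNode T s :=
  ⟨(H t ht hp).choose, (H t ht hp).choose_spec.1,
    hp.trans (H t ht hp).choose_spec.2.1, (H t ht hp).choose_spec.2.2⟩

lemma extSplit_pre (t : List ℕ) (ht : t ∈ T) (hp : s <+: t) :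
    t <+: (extSplit H t ht hp).t := (H t ht hp).choose_spec.2.1

lemma two_children (u : SNode T s) :
    ∃ a b : ℕ, u.t ++ [a] ∈ T ∧ u.t ++ [b] ∈ T ∧ a ≠ b := by
  obtain ⟨a, ha, b, hb, hab⟩ := u.split.nontrivial
  exact ⟨a, b, ha, hb, hab⟩

/-- two distinct children values of a splitting node. -/
noncomputable def ch (u : SNode T s) (i : Bool) : ℕ :=
  if i then (two_children u).choose else (two_children u).choose_spec.choose

lemma ch_mem (u : SNode T s) (i : Bool) : u.t ++ [ch u i] ∈ T := by
  cases i
  · simpa [ch] using (two_children u).choose_spec.choose_spec.2.1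
  · simpa [ch] using (two_children u).choose_spec.choose_spec.1

lemma ch_ne (u : SNode T s) : ch u true ≠ ch u false := by
  simpa [ch] using (two_children u).choose_spec.choose_spec.2.2

/-- successor node in the Cantor scheme. -/
noncomputable def stepN (u : SNode T s) (i : Bool) : SNode T s :=
  extSplit H (u.t ++ [ch u i]) (ch_mem u i) (u.pre.trans (u.t.prefix_append [ch u i]))

lemma stepN_pre (u : SNode T s) (i : Bool) : u.t ++ [ch u i] <+: (stepN H u i).t :=
  extSplit_pre H _ _ _

lemma stepN_pre' (u : SNode T s) (i : Bool) : u.t <+: (stepN H u i).t :=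
  (u.t.prefix_append [ch u i]).trans (stepN_pre H u i)

lemma stepN_length (u : SNode T s) (i : Bool) : u.t.length + 1 ≤ (stepN H u i).t.length := by
  have := (stepN_pre H u i).length_le
  simpa using this

/-- the Cantor scheme of splitting nodes, indexed by reversed bit lists. -/
noncomputable def nodeN (root : SNode T s) : List Bool → SNode T s
  | [] => root
  | i :: σ => stepN H (nodeN root σ) i

variable (root : SNode T s)

lemma nodeN_cons (i : Bool) (σ : List Bool) :
    nodeN H root (i :: σ) = stepN H (nodeN H root σ) i := rfl

lemma nodeN_length (σ : List Bool) : σ.length ≤ (nodeN H root σ).t.length := by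
  induction σ with
  | nil => simp
  | cons i σ ih =>
    have := stepN_length H (nodeN H root σ) i
    rw [nodeN_cons]
    simp only [List.length_cons]
    omega

lemma nodeN_pre (τ σ : List Bool) : (nodeN H root σ).t <+: (nodeN H root (τ ++ σ)).t := by
  induction τ with
  | nil => simp
  | cons i τ ih =>
    rw [List.cons_append, nodeN_cons]
    exact ih.trans (stepN_pre' H (nodeN H root (τ ++ σ)) i)

/-- reversed bit segment. -/
def bits (x : ℕ → Bool) (n : ℕ) : List Bool := (List.ofFn fun i : Fin n => x i).reverse

@[simp] lemma length_bits (x : ℕ → Bool) (n : ℕ) : (bits x n).length = n := by simp [bits]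

lemma bits_succ (x : ℕ → Bool) (n : ℕ) : bits x (n + 1) = x n :: bits x n := by
  rw [bits, List.ofFn_succ' (fun i : Fin (n+1) => x i), List.concat_eq_append,
    List.reverse_append]
  rfl

lemma bits_append (x : ℕ → Bool) {n m : ℕ} (h : n ≤ m) :
    ∃ τ, bits x m = τ ++ bits x n := by
  induction m with
  | zero =>
    have : n = 0 := by omega
    subst this
    exact ⟨[], rfl⟩
  | succ m ih =>
    rcases Nat.lt_or_ge n (m+1) with hlt | hge
    · obtain ⟨τ, hτ⟩ := ih (by omega)
      exact ⟨x m :: τ, by rw [bits_succ, hτ]; rfl⟩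
    · have : n = m + 1 := by omega
      subst this
      exact ⟨[], rfl⟩

lemma bits_congr {x y : ℕ → Bool} {n : ℕ} (h : ∀ i < n, x i = y i) : bits x n = bits y n := by
  unfold bits
  exact congrArg List.reverse (congrArg List.ofFn (funext fun i => h i i.isLt))

/-- the branch function of the Cantor scheme. -/
noncomputable def fBr (x : ℕ → Bool) (n : ℕ) : ℕ := (nodeN H root (bits x (n + 1))).t.getD n 0

lemma fBr_eq (x : ℕ → Bool) {n m : ℕ} (h : n < m) :
    fBr H root x n = (nodeN H root (bits x m)).t.getD n 0 := by
  obtain ⟨τ, hτ⟩ := bits_append x (show n + 1 ≤ m by omega)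
  rw [hτ]
  obtain ⟨r, hr⟩ := nodeN_pre H root τ (bits x (n+1))
  rw [fBr, ← hr]
  have hlen : n < (nodeN H root (bits x (n+1))).t.length := by
    have := nodeN_length H root (bits x (n+1)); simp at this; omega
  rw [List.getD_eq_getElem _ _ hlen,
    List.getD_eq_getElem _ _ (by simp only [List.length_append]; omega)]
  exact (List.getElem_append_left hlen).symm

lemma seg_fBr (x : ℕ → Bool) (m : ℕ) :
    seg (fBr H root x) m = (nodeN H root (bits x m)).t.take m := by
  have hlen : m ≤ (nodeN H root (bits x m)).t.length := by
    have := nodeN_length H root (bits x m); simpa using this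
  apply List.ext_getElem (by simp [Nat.min_eq_left hlen])
  intro i h1 h2
  rw [getElem_seg, List.getElem_take]
  have h3 := fBr_eq H root x (show i < m by simpa using h1)
  have him : i < m := by simpa using h1
  rw [h3, List.getD_eq_getElem _ _ (by omega)]

lemma fBr_mem_branches (hT : IsTree T) (x : ℕ → Bool) : fBr H root x ∈ branches T := by
  intro m
  have h : (List.ofFn fun i : Fin m => fBr H root x i) = seg (fBr H root x) m := rfl
  rw [h, seg_fBr]
  exact hT _ (nodeN H root (bits x m)).mem _ (List.take_prefix _ _)

lemma fBr_congr {x y : ℕ → Bool} {n : ℕ} (h : ∀ i < n + 1, x i = y i) :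
    fBr H root x n = fBr H root y n := by
  unfold fBr
  rw [bits_congr h]

lemma fBr_inj : Function.Injective (fBr H root) := by
  intro x y hxy
  by_contra hne
  have hex : ∃ k, x k ≠ y k := Function.ne_iff.1 hne
  classical
  have hk : x (Nat.find hex) ≠ y (Nat.find hex) := Nat.find_spec hex
  generalize hkdef : Nat.find hex = k at hk
  have hmin : ∀ i < k, x i = y i := fun i hi => by
    by_contra h'; exact Nat.find_min hex (hkdef ▸ hi) h'
  have hbits : bits x k = bits y k := bits_congr hmin
  have hcomp : ∀ z : ℕ → Bool, bits z k = bits x k →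
      fBr H root z ((nodeN H root (bits x k)).t.length) =
        ch (nodeN H root (bits x k)) (z k) := by
    intro z hz
    obtain ⟨τ, hτ⟩ := bits_append z
      (show k + 1 ≤ (nodeN H root (bits x k)).t.length + 1 by
        have := nodeN_length H root (bits x k); simp at this; omega)
    have hstep : (stepN H (nodeN H root (bits x k)) (z k)).t =
        (nodeN H root (bits z (k+1))).t := by
      rw [bits_succ, hz, nodeN_cons]
    have hpre1 : (nodeN H root (bits x k)).t ++ [ch (nodeN H root (bits x k)) (z k)] <+:
        (nodeN H root (bits z (k+1))).t := hstep ▸ stepN_pre H (nodeN H root (bits x k)) (z k)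
    have hpre2 : (nodeN H root (bits z (k+1))).t <+:
        (nodeN H root (bits z ((nodeN H root (bits x k)).t.length + 1))).t := by
      rw [hτ]; exact nodeN_pre H root τ _
    obtain ⟨r, hr⟩ := hpre1.trans hpre2
    rw [fBr, ← hr]
    rw [List.getD_append _ _ _ _ (by simp)]
    rw [List.getD_eq_getElem _ _ (by simp)]
    exact List.getElem_concat_length rfl _
  have h1 := hcomp x rfl
  have h2 := hcomp y hbits.symm
  rw [hxy] at h1
  have heq : ch (nodeN H root (bits x k)) (x k) = ch (nodeN H root (bits x k)) (y k) := by
    rw [← h1, ← h2]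
  cases hx' : x k <;> cases hy' : y k
  · rw [hx', hy'] at hk; exact hk rfl
  · rw [hx', hy'] at heq; exact ch_ne _ heq.symm
  · rw [hx', hy'] at heq; exact ch_ne _ heq
  · rw [hx', hy'] at hk; exact hk rfl

lemma fBr_continuous : Continuous (fBr H root) := by
  apply continuous_pi
  intro n
  have h : (fun x => fBr H root x n) =
      (fun v : Fin (n+1) → Bool => (nodeN H root (List.ofFn v).reverse).t.getD n 0) ∘
        (fun x (i : Fin (n+1)) => x (i : ℕ)) := rfl
  rw [h]
  exact Continuous.comp continuous_of_discreteTopology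
    (continuous_pi fun i => continuous_apply _)

theorem miller_perfect {T : Set (List ℕ)} (hT : IsMiller T) :
    ∃ Q : Set (ℕ → ℕ), Perfect Q ∧ Q.Nonempty ∧ Q ⊆ branches T := by
  obtain ⟨htree, s, hs, H⟩ := hT
  let root : SNode T s := extSplit H s hs (List.prefix_refl s)
  refine ⟨Set.range (fBr H root), ⟨?_, ?_⟩, Set.range_nonempty _, ?_⟩
  · exact (isCompact_range (fBr_continuous H root)).isClosed
  · intro z hz
    obtain ⟨a, rfl⟩ := hz
    have key : fBr H root a ∈
        closure ({fBr H root a}ᶜ ∩ Set.range (fBr H root)) := by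
      apply mem_closure_of_tendsto
        (f := fun k => fBr H root (Function.update a k (!(a k)))) (b := atTop)
      · rw [tendsto_pi_nhds]
        intro n
        apply Tendsto.congr' ?_ (tendsto_const_nhds (x := fBr H root a n))
        filter_upwards [eventually_ge_atTop (n+1)] with k hk
        exact fBr_congr H root (fun i hi => (Function.update_of_ne (by omega) _ a).symm)
      · apply Eventually.of_forall
        intro k
        refine ⟨?_, Set.mem_range_self _⟩
        intro hmem
        rw [Set.mem_singleton_iff] at hmem
        have hupd := fBr_inj H root hmem
        have hk := congrFun hupd k
        rw [Function.update_self] at hk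
        exact (Bool.not_ne_self (a k)) hk
    rw [accPt_principal_iff_clusterPt, ← mem_closure_iff_clusterPt]
    refine closure_mono ?_ key
    intro w hw
    exact ⟨hw.2, hw.1⟩
  · rintro _ ⟨x, rfl⟩
    exact fBr_mem_branches H root htree x

end Scheme


section Bernstein

open Cardinal

lemma mem_closure_of_segs {Q : Set (ℕ → ℕ)} {x : ℕ → ℕ}
    (h : ∀ n, ∃ y ∈ Q, ∀ i < n, y i = x i) : x ∈ closure Q := by
  choose y hyQ hyx using h
  apply mem_closure_of_tendsto (f := y) (b := atTop)
  · rw [tendsto_pi_nhds]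
    intro i
    apply Tendsto.congr' ?_ (tendsto_const_nhds (x := x i))
    filter_upwards [eventually_ge_atTop (i + 1)] with n hn
    exact (hyx n i (by omega)).symm
  · exact Eventually.of_forall fun n => hyQ n

/-- set of initial segments of members of `Q`. -/
def segSet (Q : Set (ℕ → ℕ)) : Set (List ℕ) :=
  {l | ∃ x ∈ Q, ∀ i < l.length, l.getD i 0 = x i}

lemma subset_of_segSet_subset {Q Q' : Set (ℕ → ℕ)} (hQ' : IsClosed Q')
    (h : segSet Q ⊆ segSet Q') : Q ⊆ Q' := by
  intro x hx
  rw [← hQ'.closure_eq]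
  apply mem_closure_of_segs
  intro n
  have hmem : seg x n ∈ segSet Q := by
    refine ⟨x, hx, fun i hi => ?_⟩
    rw [List.getD_eq_getElem _ _ hi, getElem_seg]
  obtain ⟨y, hy, hseg⟩ := h hmem
  refine ⟨y, hy, fun i hi => ?_⟩
  have h1 := hseg i (by simpa using hi)
  rw [List.getD_eq_getElem _ _ (by simpa using hi), getElem_seg] at h1
  exact h1.symm

lemma segSet_injective {Q Q' : Set (ℕ → ℕ)} (hQ : IsClosed Q) (hQ' : IsClosed Q')
    (h : segSet Q = segSet Q') : Q = Q' :=
  Set.Subset.antisymm (subset_of_segSet_subset hQ' h.le)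
    (subset_of_segSet_subset hQ h.ge)

lemma mk_nat_bool : #(ℕ → Bool) = 2 ^ aleph0 := by
  rw [← Cardinal.power_def, Cardinal.mk_bool, Cardinal.mk_nat]

lemma aleph0_le_mk_nat_bool : ℵ₀ ≤ #(ℕ → Bool) := by
  rw [mk_nat_bool]
  exact (Cardinal.aleph0_le_continuum).trans_eq Cardinal.two_power_aleph0.symm

lemma mk_perfect_ge {Q : Set (ℕ → ℕ)} (hQ : Perfect Q) (hne : Q.Nonempty) :
    #(ℕ → Bool) ≤ #Q := by
  letI := TopologicalSpace.upgradeIsCompletelyMetrizable (ℕ → ℕ)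
  obtain ⟨f, hfQ, _, hfinj⟩ := hQ.exists_nat_bool_injection hne
  exact Cardinal.mk_le_of_injective
    (f := fun x => (⟨f x, hfQ (Set.mem_range_self x)⟩ : Q))
    (fun a b hab => hfinj (congrArg Subtype.val hab))

theorem bernstein (X : Set (ℕ → ℕ)) :
    ∃ B ⊆ X, ∀ Q : Set (ℕ → ℕ), Perfect Q → Q.Nonempty → Q ⊆ X →
      (Q ∩ B).Nonempty ∧ (Q \ B).Nonempty := by
  classical
  set P := {Q : Set (ℕ → ℕ) // Perfect Q ∧ Q.Nonempty ∧ Q ⊆ X} with hPdef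
  by_cases hP : Nonempty P
  swap
  · refine ⟨∅, Set.empty_subset X, fun Q h1 h2 h3 => absurd ⟨⟨Q, h1, h2, h3⟩⟩ hP⟩
  -- `P` has at most continuum many elements
  have hPsmall : #P ≤ #(ℕ → Bool) := by
    have h1 : #P ≤ #(Set (List ℕ)) :=
      Cardinal.mk_le_of_injective (f := fun Q : P => segSet Q.1)
        (fun Q Q' h => Subtype.ext (segSet_injective Q.2.1.closed Q'.2.1.closed h))
    have h2 : #(Set (List ℕ)) = 2 ^ aleph0 := by
      rw [Cardinal.mk_set, Cardinal.mk_list_eq_aleph0]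
    rw [mk_nat_bool]
    exact h1.trans_eq h2
  set κ := #P with hκdef
  set ι := κ.ord.ToType with hιdef
  have hκι : #ι = κ := Cardinal.mk_ord_toType κ
  obtain ⟨e⟩ : Nonempty (ι ≃ P) := Cardinal.eq.1 hκι
  -- the step existence
  have step : ∀ (i : ι) (f : {j : ι // j < i} → (ℕ → ℕ) × (ℕ → ℕ)),
      ∃ p : (ℕ → ℕ) × (ℕ → ℕ), p.1 ∈ (e i).1 ∧ p.2 ∈ (e i).1 ∧ p.1 ≠ p.2 ∧
        ∀ j : {j : ι // j < i}, p.1 ≠ (f j).1 ∧ p.1 ≠ (f j).2 ∧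
          p.2 ≠ (f j).1 ∧ p.2 ≠ (f j).2 := by
    intro i f
    set used : Set (ℕ → ℕ) :=
      Set.range (fun j => (f j).1) ∪ Set.range (fun j => (f j).2) with husedDef
    have hIio : #{j : ι // j < i} < #(ℕ → Bool) := by
      have h1 : #(Set.Iio i) < κ := Cardinal.mk_Iio_ord_toType i
      exact h1.trans_le (hκdef ▸ hPsmall)
    have hused : #used < #(ℕ → Bool) := by
      refine lt_of_le_of_lt (Cardinal.mk_union_le _ _) ?_
      exact Cardinal.add_lt_of_lt aleph0_le_mk_nat_bool
        (Cardinal.mk_range_le.trans_lt hIio) (Cardinal.mk_range_le.trans_lt hIio)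
    have hQ := (e i).2
    have hbig : #(ℕ → Bool) ≤ #((e i).1) := mk_perfect_ge hQ.1 hQ.2.1
    -- pick the first point
    have hx : ¬ ((e i).1 ⊆ used) := by
      intro hsub
      exact absurd (hbig.trans (Cardinal.mk_le_mk_of_subset hsub)) (not_le.2 hused)
    obtain ⟨a, haQ, hau⟩ := Set.not_subset.1 hx
    -- pick the second point
    have hused2 : #(used ∪ {a} : Set (ℕ → ℕ)) < #(ℕ → Bool) := by
      refine lt_of_le_of_lt (Cardinal.mk_union_le _ _) ?_
      refine Cardinal.add_lt_of_lt aleph0_le_mk_nat_bool hused ?_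
      rw [Cardinal.mk_singleton]
      exact lt_of_lt_of_le Cardinal.one_lt_aleph0 aleph0_le_mk_nat_bool
    have hy : ¬ ((e i).1 ⊆ used ∪ {a}) := by
      intro hsub
      exact absurd (hbig.trans (Cardinal.mk_le_mk_of_subset hsub)) (not_le.2 hused2)
    obtain ⟨b, hbQ, hbu⟩ := Set.not_subset.1 hy
    refine ⟨(a, b), haQ, hbQ, ?_, ?_⟩
    · intro hab
      have hab' : a = b := hab
      exact hbu (Set.mem_union_right _ (Set.mem_singleton_iff.2 hab'.symm))
    · intro j
      refine ⟨?_, ?_, ?_, ?_⟩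
      · exact fun h => hau (Set.mem_union_left _ ⟨j, h.symm⟩)
      · exact fun h => hau (Set.mem_union_right _ ⟨j, h.symm⟩)
      · exact fun h => hbu (Set.mem_union_left _ (Set.mem_union_left _ ⟨j, h.symm⟩))
      · exact fun h => hbu (Set.mem_union_left _ (Set.mem_union_right _ ⟨j, h.symm⟩))
  -- transfinite recursion
  let g : ι → (ℕ → ℕ) × (ℕ → ℕ) :=
    WellFoundedLT.fix (fun i rec => (step i (fun j => rec j j.2)).choose)
  have hg : ∀ i, g i = (step i (fun j : {j : ι // j < i} => g j)).choose :=
    WellFoundedLT.fix_eq _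
  have hspec : ∀ i, (g i).1 ∈ (e i).1 ∧ (g i).2 ∈ (e i).1 ∧ (g i).1 ≠ (g i).2 ∧
      ∀ j : {j : ι // j < i}, (g i).1 ≠ (g j).1 ∧ (g i).1 ≠ (g j).2 ∧
        (g i).2 ≠ (g j).1 ∧ (g i).2 ≠ (g j).2 := by
    intro i
    have h := (step i (fun j : {j : ι // j < i} => g j)).choose_spec
    rwa [← hg i] at h
  have hab : ∀ i j : ι, (g i).1 ≠ (g j).2 := by
    intro i j
    rcases lt_trichotomy i j with hij | rfl | hji
    · exact fun h => ((hspec j).2.2.2 ⟨i, hij⟩).2.2.1 h.symm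
    · exact (hspec i).2.2.1
    · exact ((hspec i).2.2.2 ⟨j, hji⟩).2.1
  refine ⟨Set.range (fun i => (g i).2), ?_, ?_⟩
  · rintro _ ⟨i, rfl⟩
    exact (e i).2.2.2 ((hspec i).2.1)
  · intro Q hQ hQne hQX
    set i := e.symm ⟨Q, hQ, hQne, hQX⟩ with hidef
    have hei : (e i).1 = Q := by rw [hidef, e.apply_symm_apply]
    constructor
    · exact ⟨(g i).2, hei ▸ (hspec i).2.1, Set.mem_range_self i⟩
    · refine ⟨(g i).1, hei ▸ (hspec i).1, ?_⟩
      rintro ⟨j, hj⟩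
      exact hab i j hj.symm

end Bernstein


section Assembly

lemma laver_isMiller {T : Set (List ℕ)} (h : IsLaver T) : IsMiller T := by
  obtain ⟨htree, s, hs, hsplit⟩ := h
  exact ⟨htree, s, hs, fun t ht hst => ⟨t, ht, List.prefix_refl t, hsplit t ht hst⟩⟩

theorem main_construction (D₀ : Set (ℕ → ℕ)) (hD₀ : Dominating D₀) :
    ∃ A : Set (ℕ → ℕ), MADFamily A ∧
      ¬ SMeasurable A ∧ ¬ LMeasurable A ∧ ¬ MMeasurable A ∧
      ∃ A' ⊆ A, Dominating A' ∧ Cardinal.mk ↥A' ≤ Cardinal.mk ↥D₀ := by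
  classical
  obtain ⟨B, hBsub, hB⟩ := bernstein (branches T0)
  set U : Set (ℕ → ℕ) := branches T0 \ B with hUdef
  set C : Set (ℕ → ℕ) := cov '' B with hCdef
  set A₀ : Set (ℕ → ℕ) := U ∪ C with hA₀def
  -- A₀ is AD
  have hA₀AD : ADFamily A₀ := by
    rintro f hf g hg hfg
    rcases hf with hf | ⟨b, hb, rfl⟩ <;> rcases hg with hg | ⟨b', hb', rfl⟩
    · exact branch_evdiff hf.1 hg.1 hfg
    · refine evdiff_branch_cov hf.1 (hBsub hb') ?_
      rintro rfl
      exact hf.2 hb'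
    · refine evdiff_symm (evdiff_branch_cov hg.1 (hBsub hb) ?_)
      rintro rfl
      exact hg.2 hb
    · rcases eq_or_ne b b' with rfl | hne
      · exact absurd rfl hfg
      · exact evdiff_cov_cov (hBsub hb) (hBsub hb') hne
  have hA₀B : A₀ ∩ B = ∅ := by
    apply Set.eq_empty_iff_forall_notMem.2
    rintro x ⟨hx | ⟨b, _, rfl⟩, hxB⟩
    · exact hx.2 hxB
    · exact cov_not_branch b (hBsub hxB)
  -- Zorn
  set 𝒜 : Set (Set (ℕ → ℕ)) := {A' | ADFamily A' ∧ A₀ ⊆ A' ∧ A' ∩ B = ∅} with h𝒜def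
  have hA₀mem : A₀ ∈ 𝒜 := ⟨hA₀AD, le_refl A₀, hA₀B⟩
  have hzorn : ∀ c ⊆ 𝒜, IsChain (· ⊆ ·) c → c.Nonempty →
      ∃ ub ∈ 𝒜, ∀ s ∈ c, s ⊆ ub := by
    rintro c hc𝒜 hchain ⟨w, hw⟩
    refine ⟨⋃₀ c, ⟨?_, ?_, ?_⟩, fun s hs => Set.subset_sUnion_of_mem hs⟩
    · rintro f ⟨s₁, hs₁, hf⟩ g ⟨s₂, hs₂, hg⟩ hfg
      rcases hchain.total hs₁ hs₂ with h | h
      · exact (hc𝒜 hs₂).1 (h hf) hg hfg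
      · exact (hc𝒜 hs₁).1 hf (h hg) hfg
    · exact (hc𝒜 hw).2.1.trans (Set.subset_sUnion_of_mem hw)
    · apply Set.eq_empty_iff_forall_notMem.2
      rintro x ⟨⟨s₁, hs₁, hx⟩, hxB⟩
      exact Set.eq_empty_iff_forall_notMem.1 (hc𝒜 hs₁).2.2 x ⟨hx, hxB⟩
  obtain ⟨A, hA₀A, hAmax⟩ := zorn_subset_nonempty 𝒜 hzorn A₀ hA₀mem
  have hAAD : ADFamily A := hAmax.prop.1
  have hAB : A ∩ B = ∅ := hAmax.prop.2.2
  have hUA : U ⊆ A := (Set.subset_union_left.trans hA₀A)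
  have hCA : C ⊆ A := (Set.subset_union_right.trans hA₀A)
  -- maximality
  have hMAD : MADFamily A := by
    refine ⟨hAAD, fun B' hB'AD hAB' => ?_⟩
    refine Set.Subset.antisymm (fun h hh => ?_) hAB'
    by_contra hhA
    by_cases hhB : h ∈ B
    · have hchB' : cov h ∈ B' := hAB' (hCA ⟨h, hhB, rfl⟩)
      have hne : h ≠ cov h := by
        intro he
        exact cov_not_branch h (he ▸ hBsub hhB)
      exact not_evdiff_cov h (hB'AD hh hchB' hne)
    · have hmem : A ∪ {h} ∈ 𝒜 := by
        refine ⟨hB'AD.mono ?_, hA₀A.trans Set.subset_union_left, ?_⟩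
        · rintro x (hx | rfl)
          · exact hAB' hx
          · exact hh
        · apply Set.eq_empty_iff_forall_notMem.2
          rintro x ⟨hx | rfl, hxB⟩
          · exact Set.eq_empty_iff_forall_notMem.1 hAB x ⟨hx, hxB⟩
          · exact hhB hxB
      have := hAmax.le_of_ge hmem Set.subset_union_left
      exact hhA (this (Set.mem_union_right _ rfl))
  -- the key non-measurability fact
  have key : ∀ Q : Set (ℕ → ℕ), Perfect Q → Q.Nonempty → Q ⊆ branches T0 →
      ¬ (Q ⊆ A) ∧ (Q ∩ A).Nonempty := by
    intro Q hQ hQne hQsub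
    obtain ⟨⟨q1, hq1Q, hq1B⟩, ⟨q2, hq2Q, hq2B⟩⟩ := hB Q hQ hQne hQsub
    constructor
    · intro hsub
      exact Set.eq_empty_iff_forall_notMem.1 hAB q1 ⟨hsub hq1Q, hq1B⟩
    · exact ⟨q2, hq2Q, hUA ⟨hQsub hq2Q, hq2B⟩⟩
  have hT0L : IsLaver T0 := isLaver_Td _
  have hT0M : IsMiller T0 := laver_isMiller hT0L
  refine ⟨A, hMAD, ?_, ?_, ?_, ?_⟩
  · -- not SMeasurable
    intro hS
    obtain ⟨P, hP, hPne, hPsub⟩ := miller_perfect hT0M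
    obtain ⟨Q, hQ, hQne, hQP, halt⟩ := hS P hP hPne
    obtain ⟨hk1, hk2⟩ := key Q hQ hQne (hQP.trans hPsub)
    rcases halt with h | h
    · exact hk1 h
    · exact Set.eq_empty_iff_forall_notMem.1 h hk2.choose hk2.choose_spec
  · -- not LMeasurable
    intro hL
    obtain ⟨S, hSL, hST, halt⟩ := hL T0 hT0L
    obtain ⟨Q, hQ, hQne, hQsub⟩ := miller_perfect (laver_isMiller hSL)
    obtain ⟨hk1, hk2⟩ := key Q hQ hQne (hQsub.trans (branches_mono hST))
    rcases halt with h | h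
    · exact hk1 (hQsub.trans h)
    · obtain ⟨q, hqQ, hqA⟩ := hk2
      exact Set.eq_empty_iff_forall_notMem.1 h q ⟨hQsub hqQ, hqA⟩
  · -- not MMeasurable
    intro hM
    obtain ⟨S, hSM, hST, halt⟩ := hM T0 hT0M
    obtain ⟨Q, hQ, hQne, hQsub⟩ := miller_perfect hSM
    obtain ⟨hk1, hk2⟩ := key Q hQ hQne (hQsub.trans (branches_mono hST))
    rcases halt with h | h
    · exact hk1 (hQsub.trans h)
    · obtain ⟨q, hqQ, hqA⟩ := hk2
      exact Set.eq_empty_iff_forall_notMem.1 h q ⟨hQsub hqQ, hqA⟩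
  · -- dominating subfamily
    have hdom : ∀ d : ℕ → ℕ, ∃ a, a ∈ A ∧ ∀ n, d n ≤ a n := by
      intro d
      obtain ⟨Q, hQ, hQne, hQsub⟩ := miller_perfect (laver_isMiller (isLaver_Td d))
      have hQsub0 : Q ⊆ branches T0 := hQsub.trans (branches_mono (Td_subset_T0 d))
      obtain ⟨-, ⟨q, hqQ, hqB⟩⟩ := hB Q hQ hQne hQsub0
      exact ⟨q, hUA ⟨hQsub0 hqQ, hqB⟩, branch_dominates (hQsub hqQ)⟩
    choose a ha hdomin using hdom
    refine ⟨a '' D₀, ?_, ?_, ?_⟩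
    · rintro _ ⟨d, _, rfl⟩
      exact ha d
    · intro x
      obtain ⟨d, hd, hxd⟩ := hD₀ x
      refine ⟨a d, Set.mem_image_of_mem a hd, ?_⟩
      filter_upwards [hxd] with n hn
      exact hn.trans (hdomin d n)
    · exact Cardinal.mk_image_le

end Assembly

end MadAux

theorem exists_mad_not_slm_measurable_with_dominating_subfamily :
    (∀ D₀ : Set (ℕ → ℕ), Dominating D₀ →
      ∃ A : Set (ℕ → ℕ), MADFamily A ∧
        ¬ SMeasurable A ∧ ¬ LMeasurable A ∧ ¬ MMeasurable A ∧
        ∃ A' ⊆ A, Dominating A' ∧ Cardinal.mk ↥A' ≤ Cardinal.mk ↥D₀) ∧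
    (∃ A : Set (ℕ → ℕ), MADFamily A ∧
        ¬ SMeasurable A ∧ ¬ LMeasurable A ∧ ¬ MMeasurable A ∧
        ∃ A' ⊆ A, Dominating A' ∧ Cardinal.mk ↥A' ≤ dominatingNumber) := by
  constructor
  · exact fun D₀ hD₀ => MadAux.main_construction D₀ hD₀
  · have hne : {c : Cardinal | ∃ D : Set (ℕ → ℕ),
        Dominating D ∧ Cardinal.mk ↥D = c}.Nonempty :=
      ⟨Cardinal.mk ↥(Set.univ : Set (ℕ → ℕ)), Set.univ,
        fun x => ⟨x, Set.mem_univ x, Filter.Eventually.of_forall fun n => le_rfl⟩, rfl⟩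
    obtain ⟨D₀, hD₀, hcard⟩ := csInf_mem hne
    obtain ⟨A, h1, h2, h3, h4, A', hA', h5, h6⟩ := MadAux.main_construction D₀ hD₀
    have hd : dominatingNumber = sInf {c : Cardinal | ∃ D : Set (ℕ → ℕ),
        Dominating D ∧ Cardinal.mk ↥D = c} := rfl
    exact ⟨A, h1, h2, h3, h4, A', hA', h5, hd ▸ hcard ▸ h6⟩
end

section
/- There exists a subset A of the Baire space ω^ω which is l-measurable but not s-measurable. -/
open Filter

section Aux
open Cardinal Set
attribute [local instance] Classical.propDecidable

/-- continuum -/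
noncomputable abbrev contc : Cardinal.{0} := 2 ^ (ℵ₀ : Cardinal)

lemma exists_pair_avoid {α : Type} {s t : Set α} (hs : contc ≤ #s) (ht : #t < contc) :
    ∃ a b : α, a ∈ s ∧ b ∈ s ∧ a ≠ b ∧ a ∉ t ∧ b ∉ t := by
  have hnt : (s \ t).Nontrivial := by
    by_contra h
    have hsub : s \ t ⊆ ∅ ∨ ∃ a, s \ t ⊆ {a} := by
      rcases Set.not_nontrivial_iff.mp h with hss
      rcases (s \ t).eq_empty_or_nonempty with he | ⟨a, ha⟩
      · exact Or.inl (by simp [he])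
      · exact Or.inr ⟨a, fun x hx => hss hx ha⟩
    have hcard : #(s \ t : Set α) ≤ 1 := by
      rcases hsub with h1 | ⟨a, h1⟩
      · exact le_trans (mk_le_mk_of_subset h1) (by simp)
      · exact le_trans (mk_le_mk_of_subset h1) (by simp)
    have : #s ≤ #t + 1 := by
      have : s ⊆ t ∪ (s \ t) := fun x hx => by
        by_cases hxt : x ∈ t
        · exact Or.inl hxt
        · exact Or.inr ⟨hx, hxt⟩
      calc #s ≤ #(t ∪ (s \ t) : Set α) := mk_le_mk_of_subset this
        _ ≤ #t + #(s \ t : Set α) := mk_union_le _ _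
        _ ≤ #t + 1 := by gcongr
    have hlt : #t + 1 < contc := by
      rcases lt_or_ge #t ℵ₀ with hfin | hinf
      · exact lt_of_lt_of_le (Cardinal.add_lt_aleph0 hfin one_lt_aleph0)
          (le_of_lt (Cardinal.cantor ℵ₀))
      · have : #t + 1 = #t := by
          apply le_antisymm _ (self_le_add_right _ _)
          calc #t + 1 ≤ #t + #t := by gcongr; exact le_trans (le_of_lt one_lt_aleph0) hinf
            _ = #t := Cardinal.add_eq_self hinf
        rw [this]; exact ht
    exact absurd (le_trans hs this) (not_le.mpr hlt)
  obtain ⟨a, ha, b, hb, hab⟩ := hnt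
  exact ⟨a, b, ha.1, hb.1, hab, ha.2, hb.2⟩

section Bern
variable {α : Type} [Nonempty α]

/-- transfinite pick of pairs -/
noncomputable def bPick (g : contc.ord.ToType → Set α) : contc.ord.ToType → α × α :=
  WellFounded.fix wellFounded_lt (fun i rec =>
    if h : ∃ p : α × α, p.1 ∈ g i ∧ p.2 ∈ g i ∧ p.1 ≠ p.2 ∧
        (∀ j (hj : j < i), p.1 ≠ (rec j hj).1 ∧ p.1 ≠ (rec j hj).2 ∧
          p.2 ≠ (rec j hj).1 ∧ p.2 ≠ (rec j hj).2)
    then h.choose else Classical.arbitrary _)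

lemma bPick_eq (g : contc.ord.ToType → Set α) (i : contc.ord.ToType) :
    bPick g i =
      if h : ∃ p : α × α, p.1 ∈ g i ∧ p.2 ∈ g i ∧ p.1 ≠ p.2 ∧
        (∀ j (_ : j < i), p.1 ≠ (bPick g j).1 ∧ p.1 ≠ (bPick g j).2 ∧
          p.2 ≠ (bPick g j).1 ∧ p.2 ≠ (bPick g j).2)
      then h.choose else Classical.arbitrary _ := by
  exact WellFounded.fix_eq _ _ i

lemma bPick_spec (g : contc.ord.ToType → Set α) (hg : ∀ i, contc ≤ #(g i))
    (i : contc.ord.ToType) :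
    (bPick g i).1 ∈ g i ∧ (bPick g i).2 ∈ g i ∧ (bPick g i).1 ≠ (bPick g i).2 ∧
      (∀ j (_ : j < i), (bPick g i).1 ≠ (bPick g j).1 ∧ (bPick g i).1 ≠ (bPick g j).2 ∧
        (bPick g i).2 ≠ (bPick g j).1 ∧ (bPick g i).2 ≠ (bPick g j).2) := by
  have hex : ∃ p : α × α, p.1 ∈ g i ∧ p.2 ∈ g i ∧ p.1 ≠ p.2 ∧
      (∀ j (_ : j < i), p.1 ≠ (bPick g j).1 ∧ p.1 ≠ (bPick g j).2 ∧
        p.2 ≠ (bPick g j).1 ∧ p.2 ≠ (bPick g j).2) := by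
    set t : Set α := (fun j => (bPick g j).1) '' (Set.Iio i) ∪
      (fun j => (bPick g j).2) '' (Set.Iio i) with ht
    have htc : #t < contc := by
      have h1 : #(Set.Iio i) < contc := Cardinal.mk_Iio_toType_ord_lt i
      have h2 : #t ≤ #(Set.Iio i) + #(Set.Iio i) :=
        le_trans (mk_union_le _ _) (by gcongr <;> exact mk_image_le)
      rcases lt_or_ge #(Set.Iio i) ℵ₀ with hfin | hinf
      · exact lt_of_le_of_lt h2 (lt_of_lt_of_le (Cardinal.add_lt_aleph0 hfin hfin)
          (le_of_lt (Cardinal.cantor ℵ₀)))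
      · exact lt_of_le_of_lt (le_trans h2 (le_of_eq (Cardinal.add_eq_self hinf))) h1
    obtain ⟨a, b, has, hbs, hab, hat, hbt⟩ := exists_pair_avoid (hg i) htc
    refine ⟨(a, b), has, hbs, hab, fun j hj => ?_⟩
    constructor
    · intro h; exact hat (Or.inl ⟨j, hj, h.symm⟩)
    constructor
    · intro h; exact hat (Or.inr ⟨j, hj, h.symm⟩)
    constructor
    · intro h; exact hbt (Or.inl ⟨j, hj, h.symm⟩)
    · intro h; exact hbt (Or.inr ⟨j, hj, h.symm⟩)
  have := bPick_eq g i
  rw [this, dif_pos hex]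
  exact hex.choose_spec

/-- Abstract Bernstein set lemma. -/
lemma exists_bernstein (F : Set (Set α)) (hF : #F ≤ contc) (hQ : ∀ Q ∈ F, contc ≤ #Q) :
    ∃ B : Set α, ∀ Q ∈ F, (Q ∩ B).Nonempty ∧ (Q \ B).Nonempty := by
  rcases F.eq_empty_or_nonempty with he | ⟨Q₀, hQ₀⟩
  · exact ⟨∅, by simp [he]⟩
  · have hfi : #F ≤ #contc.ord.ToType := by rw [Cardinal.mk_ord_toType]; exact hF
    obtain ⟨f⟩ := (Cardinal.le_def _ _).mp hfi
    set g : contc.ord.ToType → Set α := fun i =>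
      if h : ∃ Q : F, f Q = i then (h.choose : Set α) else Q₀ with hgdef
    have hgF : ∀ i, g i ∈ F := by
      intro i
      by_cases h : ∃ Q : F, f Q = i
      · simp only [hgdef, dif_pos h]; exact h.choose.2
      · simp only [hgdef, dif_neg h]; exact hQ₀
    have hgsurj : ∀ Q ∈ F, ∃ i, g i = Q := by
      intro Q hQm
      refine ⟨f ⟨Q, hQm⟩, ?_⟩
      have h : ∃ Q' : F, f Q' = f ⟨Q, hQm⟩ := ⟨⟨Q, hQm⟩, rfl⟩
      simp only [hgdef, dif_pos h]
      rw [show h.choose = (⟨Q, hQm⟩ : F) from f.injective h.choose_spec]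
    have hg : ∀ i, contc ≤ #(g i) := fun i => hQ _ (hgF i)
    refine ⟨{x | ∃ i, (bPick g i).1 = x}, fun Q hQm => ?_⟩
    obtain ⟨i, hi⟩ := hgsurj Q hQm
    obtain ⟨h1, h2, h3, h4⟩ := bPick_spec g hg i
    constructor
    · exact ⟨(bPick g i).1, hi ▸ h1, ⟨i, rfl⟩⟩
    · refine ⟨(bPick g i).2, hi ▸ h2, ?_⟩
      rintro ⟨j, hj⟩
      rcases lt_trichotomy j i with h | h | h
      · exact (h4 j h).2.2.1 hj.symm
      · subst h; exact h3 hj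
      · obtain ⟨_, _, _, h4'⟩ := bPick_spec g hg j
        exact (h4' i h).2.1 hj
end Bern


open TopologicalSpace in
/-- The number of closed subsets of a second countable space is at most the continuum. -/
lemma card_closeds_le (X : Type) [TopologicalSpace X] [SecondCountableTopology X]
    (F : Set (Set X)) (hF : ∀ C ∈ F, IsClosed C) : #F ≤ contc := by
  have hbasis := isBasis_countableBasis X
  have hcount : (countableBasis X).Countable := countable_countableBasis X
  set code : F → Set (countableBasis X) :=
    fun C => {U | ((U : Set X) ∩ (C : Set X)).Nonempty} with hcode
  have hinj : Function.Injective code := by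
    intro C₁ C₂ h
    have key : ∀ (D₁ D₂ : F), code D₁ = code D₂ → (D₁ : Set X) ⊆ (D₂ : Set X) := by
      intro D₁ D₂ hD x hx
      have : x ∈ closure (D₂ : Set X) := by
        rw [hbasis.mem_closure_iff]
        intro o ho hxo
        have h1 : (⟨o, ho⟩ : countableBasis X) ∈ code D₁ := ⟨x, hxo, hx⟩
        rw [hD] at h1
        exact h1
      rwa [(hF _ D₂.2).closure_eq] at this
    exact Subtype.ext (le_antisymm (key C₁ C₂ h) (key C₂ C₁ h.symm))
  calc #F ≤ #(Set (countableBasis X)) := mk_le_of_injective hinj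
    _ = 2 ^ #(countableBasis X) := mk_set
    _ ≤ 2 ^ (ℵ₀ : Cardinal) := by
        apply power_le_power_left (by norm_num)
        exact mk_le_aleph0_iff.mpr hcount

/-- Nonempty perfect subsets of Baire space have size at least continuum. -/
lemma contc_le_card_perfect {C : Set (ℕ → ℕ)} (hC : Perfect C) (hne : C.Nonempty) :
    contc ≤ #C := by
  letI := TopologicalSpace.upgradeIsCompletelyMetrizable (ℕ → ℕ)
  obtain ⟨f, hrange, _, hinj⟩ := hC.exists_nat_bool_injection hne
  have : #(ℕ → Bool) ≤ #C := by
    refine mk_le_of_injective (f := fun y => (⟨f y, hrange ⟨y, rfl⟩⟩ : C)) ?_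
    intro a b hab
    exact hinj (congrArg Subtype.val hab)
  refine le_trans (le_of_eq ?_) this
  simp [Cardinal.mk_arrow]

/-- the bad perfect set -/
def Pbad : Set (ℕ → ℕ) := {x | ∀ n, x (2 * n) = 0 ∧ x (2 * n + 1) ≤ 1}

lemma Pbad_nonempty : Pbad.Nonempty := ⟨fun _ => 0, fun n => ⟨rfl, by norm_num⟩⟩

lemma Pbad_closed : IsClosed Pbad := by
  have : Pbad = ⋂ n, ({x : ℕ → ℕ | x (2 * n) = 0} ∩ {x | x (2 * n + 1) ≤ 1}) := by
    ext x; simp [Pbad, forall_and]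
  rw [this]
  refine isClosed_iInter fun n => IsClosed.inter ?_ ?_
  · exact isClosed_eq (continuous_apply (2 * n)) continuous_const
  · exact IsClosed.preimage (continuous_apply (2 * n + 1)) (isClosed_discrete (Set.Iic 1))

lemma Pbad_perfect : Perfect Pbad := by
  refine ⟨Pbad_closed, fun x hx => ?_⟩
  rw [accPt_iff_nhds]
  intro U hU
  -- the sequence flipping coordinate 2j+1 converges to x
  set y : ℕ → (ℕ → ℕ) := fun j => Function.update x (2 * j + 1) (1 - x (2 * j + 1)) with hy
  have hyP : ∀ j, y j ∈ Pbad := by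
    intro j n
    have hupd : ∀ k, y j k = Function.update x (2 * j + 1) (1 - x (2 * j + 1)) k :=
      fun k => rfl
    constructor
    · rw [hupd, Function.update_of_ne (by omega)]
      exact (hx n).1
    · by_cases h : 2 * n + 1 = 2 * j + 1
      · rw [hupd, h, Function.update_self]; omega
      · rw [hupd, Function.update_of_ne h]
        exact (hx n).2
  have hyne : ∀ j, y j ≠ x := by
    intro j h
    have h1 : Function.update x (2 * j + 1) (1 - x (2 * j + 1)) (2 * j + 1) = x (2 * j + 1) :=
      congrFun h (2 * j + 1)
    rw [Function.update_self] at h1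
    have h2 := (hx j).2
    omega
  have htend : Filter.Tendsto y Filter.atTop (nhds x) := by
    rw [tendsto_pi_nhds]
    intro k
    apply Filter.Tendsto.congr' (f₁ := fun _ => x k)
    · filter_upwards [Filter.eventually_gt_atTop k] with j hj
      exact (Function.update_of_ne (a' := 2 * j + 1) (a := k) (by omega) _ x).symm
    · exact tendsto_const_nhds
  obtain ⟨j, hj⟩ := (htend.eventually_mem hU).exists
  exact ⟨y j, ⟨hj, hyP j⟩, hyne j⟩

/-- eventually strictly increasing functions -/
def IE : Set (ℕ → ℕ) := {x | ∃ m, ∀ k, m ≤ k → x k < x (k + 1)}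

/-- strictly increasing from position m on -/
def IncrFrom (m : ℕ) (t : List ℕ) : Prop :=
  ∀ i, m ≤ i → ∀ (h : i + 1 < t.length), t[i]'(by omega) < t[i + 1]'h

lemma laver_prune (T : Set (List ℕ)) (hT : IsLaver T) :
    ∃ S, IsLaver S ∧ S ⊆ T ∧ branches S ⊆ IE := by
  obtain ⟨hTree, s, hsT, hs⟩ := hT
  set S : Set (List ℕ) :=
    {t | t ∈ T ∧ (t <+: s ∨ (s <+: t ∧ IncrFrom s.length t))} with hSdef
  have hSsub : S ⊆ T := fun t ht => ht.1
  have hStree : IsTree S := by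
    intro t ht u hu
    refine ⟨hTree t ht.1 u hu, ?_⟩
    rcases ht.2 with h | ⟨hst, hinc⟩
    · exact Or.inl (hu.trans h)
    · rcases le_or_gt u.length s.length with hle | hlt
      · exact Or.inl (List.prefix_of_prefix_length_le hu hst hle)
      · refine Or.inr ⟨List.prefix_of_prefix_length_le hst hu (by omega), ?_⟩
        intro i hi h
        have hl : u.length ≤ t.length := hu.length_le
        have e1 : u[i]'(by omega) = t[i]'(by omega) := hu.getElem (by omega)
        have e2 : u[i+1]'h = t[i+1]'(by omega) := hu.getElem h
        rw [e1, e2]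
        exact hinc i hi (by omega)
  have hstemS : s ∈ S := by
    refine ⟨hsT, Or.inr ⟨List.prefix_refl s, ?_⟩⟩
    intro i hi h
    omega
  have hsplit : ∀ t ∈ S, s <+: t → InfSplitting S t := by
    intro t ht hst
    have htT : t ∈ T := ht.1
    rcases eq_or_lt_of_le hst.length_le with heq | hlt
    · -- t = s
      have hts : t = s := (List.IsPrefix.eq_of_length hst heq).symm
      subst hts
      apply (hs t htT (List.prefix_refl t)).mono
      intro n hn
      refine ⟨hn, Or.inr ⟨List.prefix_append _ _, ?_⟩⟩
      intro i hi h
      simp only [List.length_append, List.length_cons, List.length_nil] at h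
      omega
    · -- t is strictly longer than s
      have hinc : IncrFrom s.length t := by
        rcases ht.2 with h | ⟨_, hinc⟩
        · exact absurd h.length_le (by omega)
        · exact hinc
      have hLb : t.length - 1 < t.length := by omega
      set b : ℕ := t[t.length - 1]'hLb with hb
      have : ({n | t ++ [n] ∈ T} \ Set.Iic b).Infinite :=
        (hs t htT hst).diff (Set.finite_Iic b)
      apply this.mono
      rintro n ⟨hnT, hnb⟩
      simp only [Set.mem_Iic, not_le] at hnb
      refine ⟨hnT, Or.inr ⟨hst.trans (List.prefix_append _ _), ?_⟩⟩
      intro i hi h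
      have hlen : (t ++ [n]).length = t.length + 1 := by simp
      rcases lt_or_ge (i + 1) t.length with hlt2 | hge2
      · have e1 : (t ++ [n])[i]'(by omega) = t[i]'(by omega) :=
          List.getElem_append_left (by omega)
        have e2 : (t ++ [n])[i+1]'h = t[i+1]'hlt2 :=
          List.getElem_append_left (by omega)
        rw [e1, e2]
        exact hinc i hi hlt2
      · have hieq : i + 1 = t.length := by omega
        have e1 : (t ++ [n])[i]'(by omega) = t[i]'(by omega) :=
          List.getElem_append_left (by omega)
        have e2 : (t ++ [n])[i+1]'h = n := List.getElem_concat_length hieq _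
        rw [e1, e2]
        have : t[i]'(by omega) = b := by
          have : i = t.length - 1 := by omega
          subst this; rfl
        rw [this]
        exact hnb
  have hbr : branches S ⊆ IE := by
    intro x hx
    refine ⟨s.length, fun k hk => ?_⟩
    have ht := hx (k + 2)
    set t : List ℕ := List.ofFn fun i : Fin (k + 2) => x i with htdef
    have hlen : t.length = k + 2 := List.length_ofFn
    have hinc : IncrFrom s.length t := by
      rcases ht.2 with h | ⟨_, hinc⟩
      · exact absurd h.length_le (by omega)
      · exact hinc
    have h1 := hinc k hk (by omega)
    have e1 : t[k]'(by omega) = x k := by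
      simp only [htdef, List.getElem_ofFn]
    have e2 : t[k+1]'(by omega) = x (k + 1) := by
      simp only [htdef, List.getElem_ofFn]
    rwa [e1, e2] at h1
  exact ⟨S, ⟨hStree, s, hstemS, hsplit⟩, hSsub, hbr⟩

lemma Pbad_inter_IE : Pbad ∩ IE = ∅ := by
  ext x
  simp only [Set.mem_inter_iff, Set.mem_empty_iff_false, iff_false, not_and]
  rintro hx ⟨m, hm⟩
  have h1 := hm (2 * m + 1) (by omega)
  have h2 : x (2 * m + 1 + 1) = 0 := by
    have := (hx (m + 1)).1
    rwa [show 2 * (m + 1) = 2 * m + 1 + 1 by omega] at this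
  omega

end Aux

theorem exists_lMeasurable_not_sMeasurable :
    ∃ A : Set (ℕ → ℕ), LMeasurable A ∧ ¬ SMeasurable A := by
  classical
  set F : Set (Set (ℕ → ℕ)) := {Q | Perfect Q ∧ Q.Nonempty ∧ Q ⊆ Pbad} with hFdef
  have hFcard : Cardinal.mk F ≤ contc :=
    card_closeds_le _ F (fun C hC => hC.1.closed)
  have hQcard : ∀ Q ∈ F, contc ≤ Cardinal.mk Q :=
    fun Q hQ => contc_le_card_perfect hQ.1 hQ.2.1
  obtain ⟨B, hB⟩ := exists_bernstein F hFcard hQcard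
  refine ⟨IE ∪ (B ∩ Pbad), ?_, ?_⟩
  · -- l-measurable
    intro T hT
    obtain ⟨S, hSL, hSsub, hSbr⟩ := laver_prune T hT
    exact ⟨S, hSL, hSsub, Or.inl (fun x hx => Or.inl (hSbr hx))⟩
  · -- not s-measurable
    intro hS
    obtain ⟨Q, hQp, hQne, hQsub, hcase⟩ := hS Pbad Pbad_perfect Pbad_nonempty
    have hQF : Q ∈ F := ⟨hQp, hQne, hQsub⟩
    obtain ⟨⟨q1, hq1Q, hq1B⟩, ⟨q2, hq2Q, hq2B⟩⟩ := hB Q hQF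
    rcases hcase with hsub | hdisj
    · rcases hsub hq2Q with hIE | hBP
      · have : q2 ∈ Pbad ∩ IE := ⟨hQsub hq2Q, hIE⟩
        rw [Pbad_inter_IE] at this
        exact this
      · exact hq2B hBP.1
    · have : q1 ∈ Q ∩ (IE ∪ (B ∩ Pbad)) :=
        ⟨hq1Q, Or.inr ⟨hq1B, hQsub hq1Q⟩⟩
      rw [hdisj] at this
      exact this
end

section
/- There exists a subset B of the Baire space ω^ω which is m-measurable but not s-measurable. -/
open Filter

open Filter Set Cardinal

section AuxBernstein

/-- Fresh pair existence for the Bernstein construction. -/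
private lemma bern_fresh {α : Type*} {F : Set α} (hF : Cardinal.continuum ≤ #F)
    (S : Set α) (hS : #S < Cardinal.continuum) :
    ∃ p : α × α, p.1 ∈ F ∧ p.2 ∈ F ∧ p.1 ≠ p.2 ∧ p.1 ∉ S ∧ p.2 ∉ S := by
  have h1 : ∃ a ∈ F, a ∉ S := by
    by_contra h
    push_neg at h
    exact absurd (hF.trans (Cardinal.mk_le_mk_of_subset h)) (not_le.2 hS)
  obtain ⟨a, haF, haS⟩ := h1
  have hS' : #(insert a S : Set α) < Cardinal.continuum := by
    refine lt_of_le_of_lt (Cardinal.mk_insert_le) ?_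
    exact Cardinal.add_lt_of_lt Cardinal.aleph0_le_continuum hS
      (lt_of_lt_of_le Cardinal.one_lt_aleph0 Cardinal.aleph0_le_continuum)
  have h2 : ∃ b ∈ F, b ∉ (insert a S : Set α) := by
    by_contra h
    push_neg at h
    exact absurd (hF.trans (Cardinal.mk_le_mk_of_subset h)) (not_le.2 hS')
  obtain ⟨b, hbF, hbS⟩ := h2
  refine ⟨(a, b), haF, hbF, ?_, haS, fun h => hbS (Set.mem_insert_of_mem _ h)⟩
  intro h
  exact hbS (Set.mem_insert_iff.2 (Or.inl h.symm))

/-- Abstract Bernstein-set construction. -/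
lemma exists_bernstein_s3 {α : Type} {ι : Type} [Nonempty ι] (F : ι → Set α)
    (hι : #ι ≤ Cardinal.continuum) (hF : ∀ i, Cardinal.continuum ≤ #(F i)) :
    ∃ B : Set α, (∀ i, (F i ∩ B).Nonempty ∧ (F i \ B).Nonempty) ∧ B ⊆ ⋃ i, F i := by
  classical
  set O : Ordinal.{0} := Cardinal.continuum.ord with hO
  have hcard : #O.ToType = Cardinal.continuum := by
    rw [Cardinal.mk_toType, hO, Cardinal.card_ord]
  obtain ⟨emb⟩ := Cardinal.le_def ι O.ToType |>.1 (by rw [hcard]; exact hι)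
  set g : O.ToType → ι := Function.invFun emb with hg
  have hgsurj : Function.Surjective g := Function.invFun_surjective emb.injective
  haveI : IsWellOrder O.ToType (· < ·) := isWellOrder_lt
  have small : ∀ i : O.ToType, #{j : O.ToType // j < i} < Cardinal.continuum := by
    intro i
    have h1 : #{j : O.ToType // j < i} = (Ordinal.typein (α := O.ToType) (· < ·) i).card := rfl
    rw [h1]
    exact Cardinal.lt_ord.1 (Ordinal.typein_lt_self i)
  have priorSmall : ∀ (i : O.ToType) (h : ∀ j : O.ToType, j < i → α × α),
      #(↥((Set.range fun j : {j : O.ToType // j < i} => (h j j.2).1) ∪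
          (Set.range fun j : {j : O.ToType // j < i} => (h j j.2).2)))
        < Cardinal.continuum := by
    intro i h
    refine lt_of_le_of_lt (Cardinal.mk_union_le _ _) ?_
    refine Cardinal.add_lt_of_lt Cardinal.aleph0_le_continuum ?_ ?_ <;>
      exact lt_of_le_of_lt Cardinal.mk_range_le (small i)
  have wf : WellFounded ((· < ·) : O.ToType → O.ToType → Prop) := wellFounded_lt
  set f : O.ToType → α × α := wf.fix (C := fun _ => α × α)
      (fun i h => Classical.choose (bern_fresh (hF (g i)) _ (priorSmall i h))) with hfdef
  have hfix : ∀ i, f i = Classical.choose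
      (bern_fresh (hF (g i)) _ (priorSmall i (fun j _ => f j))) := by
    intro i
    rw [hfdef]
    exact WellFounded.fix_eq wf _ i
  have spec : ∀ i : O.ToType,
      (f i).1 ∈ F (g i) ∧ (f i).2 ∈ F (g i) ∧ (f i).1 ≠ (f i).2 ∧
      ((f i).1 ∉ ((Set.range fun j : {j : O.ToType // j < i} => (f j).1) ∪
          (Set.range fun j : {j : O.ToType // j < i} => (f j).2)) ∧
       (f i).2 ∉ ((Set.range fun j : {j : O.ToType // j < i} => (f j).1) ∪
          (Set.range fun j : {j : O.ToType // j < i} => (f j).2))) := by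
    intro i
    have h := Classical.choose_spec
      (bern_fresh (hF (g i)) _ (priorSmall i (fun j _ => f j)))
    rw [← hfix i] at h
    exact ⟨h.1, h.2.1, h.2.2.1, h.2.2.2.1, h.2.2.2.2⟩
  -- key: all the chosen points are distinct
  have distinct : ∀ i j : O.ToType, (f i).1 = (f j).2 → False := by
    intro i j hEq
    rcases lt_trichotomy i j with h | h | h
    · exact (spec j).2.2.2.2 (Or.inl ⟨⟨i, h⟩, hEq⟩)
    · exact (spec i).2.2.1 (h ▸ hEq)
    · exact (spec i).2.2.2.1 (Or.inr ⟨⟨j, h⟩, hEq.symm⟩)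
  refine ⟨Set.range fun i => (f i).1, fun k => ?_, ?_⟩
  · obtain ⟨i, rfl⟩ := hgsurj k
    constructor
    · exact ⟨(f i).1, (spec i).1, ⟨i, rfl⟩⟩
    · refine ⟨(f i).2, (spec i).2.1, ?_⟩
      rintro ⟨j, hj⟩
      exact distinct j i hj
  · rintro x ⟨i, rfl⟩
    exact Set.mem_iUnion.2 ⟨g i, (spec i).1⟩

end AuxBernstein


open Filter Set Cardinal

/-- The "binary" subset of Baire space. -/
def binSet : Set (ℕ → ℕ) := {x | ∀ n, x n ≤ 1}

lemma binSet_nonempty : binSet.Nonempty := ⟨fun _ => 0, fun _ => Nat.zero_le 1⟩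

lemma binSet_isClosed : IsClosed binSet := by
  have : binSet = ⋂ n : ℕ, (fun x : ℕ → ℕ => x n) ⁻¹' {k | k ≤ 1} := by
    ext x; simp [binSet, Set.mem_iInter]
  rw [this]
  exact isClosed_iInter fun n => (isClosed_discrete _).preimage (continuous_apply n)

lemma binSet_perfect : Perfect binSet := by
  refine ⟨binSet_isClosed, fun x hx => ?_⟩
  rw [accPt_iff_nhds]
  intro U hU
  obtain ⟨t, ⟨z, k, rfl⟩, hxt, htU⟩ :=
    (PiNat.isTopologicalBasis_cylinders (fun _ : ℕ => ℕ)).mem_nhds_iff.1 hU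
  set y : ℕ → ℕ := fun m => if m = k then 1 - x k else x m with hy
  have hyk : y k = 1 - x k := by simp [hy]
  have hyx : ∀ i, i ≠ k → y i = x i := fun i h => by simp [hy, h]
  refine ⟨y, ⟨htU ?_, fun n => ?_⟩, ?_⟩
  · intro i hik
    rw [hyx i (by omega)]
    exact hxt i hik
  · rcases eq_or_ne n k with rfl | h
    · rw [hyk]; omega
    · rw [hyx n h]; exact hx n
  · intro h
    have h1 := congrFun h k
    rw [hyk] at h1
    have := hx k
    omega

lemma continuum_le_mk_perfect {Q : Set (ℕ → ℕ)} (hQ : Perfect Q) (hne : Q.Nonempty) :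
    Cardinal.continuum ≤ #Q := by
  letI := TopologicalSpace.upgradeIsCompletelyMetrizable (ℕ → ℕ)
  obtain ⟨f, hfQ, -, hfinj⟩ := hQ.exists_nat_bool_injection hne
  have h1 : #(ℕ → Bool) ≤ #Q :=
    ⟨⟨fun y => ⟨f y, hfQ ⟨y, rfl⟩⟩, fun a b hab => hfinj (congrArg Subtype.val hab)⟩⟩
  have h2 : #(ℕ → Bool) = Cardinal.continuum := by
    rw [Cardinal.mk_arrow]
    simp [Cardinal.two_power_aleph0]
  rwa [h2] at h1

lemma mk_perfect_subsets_le :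
    #{Q : Set (ℕ → ℕ) // Perfect Q ∧ Q.Nonempty ∧ Q ⊆ binSet} ≤ Cardinal.continuum := by
  obtain ⟨b, hbcount, -, hb⟩ := TopologicalSpace.exists_countable_basis (ℕ → ℕ)
  haveI : Countable ↥b := hbcount.to_subtype
  have hinj : Function.Injective
      (fun Q : {Q : Set (ℕ → ℕ) // Perfect Q ∧ Q.Nonempty ∧ Q ⊆ binSet} =>
        ({s : ↥b | (s : Set (ℕ → ℕ)) ⊆ (↑Q : Set (ℕ → ℕ))ᶜ} : Set ↥b)) := by
    intro Q1 Q2 h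
    have hopen1 : IsOpen (↑Q1 : Set (ℕ → ℕ))ᶜ := Q1.2.1.closed.isOpen_compl
    have hopen2 : IsOpen (↑Q2 : Set (ℕ → ℕ))ᶜ := Q2.2.1.closed.isOpen_compl
    have e1 := hb.open_eq_sUnion' hopen1
    have e2 := hb.open_eq_sUnion' hopen2
    have hsets : {s | s ∈ b ∧ s ⊆ (↑Q1 : Set (ℕ → ℕ))ᶜ}
        = {s | s ∈ b ∧ s ⊆ (↑Q2 : Set (ℕ → ℕ))ᶜ} := by
      ext s
      constructor
      · rintro ⟨hsb, hsub⟩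
        exact ⟨hsb, (Set.ext_iff.1 h ⟨s, hsb⟩).1 hsub⟩
      · rintro ⟨hsb, hsub⟩
        exact ⟨hsb, (Set.ext_iff.1 h ⟨s, hsb⟩).2 hsub⟩
    have : (↑Q1 : Set (ℕ → ℕ))ᶜ = (↑Q2 : Set (ℕ → ℕ))ᶜ := by rw [e1, e2, hsets]
    exact Subtype.ext (compl_injective this)
  calc #{Q : Set (ℕ → ℕ) // Perfect Q ∧ Q.Nonempty ∧ Q ⊆ binSet}
      ≤ #(Set ↥b) := Cardinal.mk_le_of_injective hinj
    _ = 2 ^ #↥b := Cardinal.mk_set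
    _ ≤ 2 ^ Cardinal.aleph0 := by
        exact Cardinal.power_le_power_left (by norm_num) (Cardinal.mk_le_aleph0)
    _ = Cardinal.continuum := Cardinal.two_power_aleph0

lemma miller_avoid {T : Set (List ℕ)} (hT : IsMiller T) :
    ∃ S : Set (List ℕ), IsMiller S ∧ S ⊆ T ∧ branches S ∩ binSet = ∅ := by
  obtain ⟨htree, s, hsT, hs⟩ := hT
  obtain ⟨t', ht'T, hst', hsplit⟩ := hs s hsT List.prefix_rfl
  obtain ⟨n, hnT, hn⟩ := hsplit.exists_gt 1
  set t'' : List ℕ := t' ++ [n] with ht''def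
  have ht'' : t'' ∈ T := hnT
  have hlen'' : t''.length = t'.length + 1 := by simp [ht''def]
  refine ⟨{u | u ∈ T ∧ (u <+: t'' ∨ t'' <+: u)},
    ⟨?_, t'', ⟨ht'', Or.inr List.prefix_rfl⟩, ?_⟩, fun u hu => hu.1, ?_⟩
  · rintro u ⟨huT, hu⟩ v hvu
    refine ⟨htree u huT v hvu, ?_⟩
    rcases hu with h | h
    · exact Or.inl (hvu.trans h)
    · exact List.prefix_or_prefix_of_prefix hvu h
  · rintro t ⟨htT, -⟩ ht''t
    have hst : s <+: t := (hst'.trans (List.prefix_append t' [n])).trans ht''t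
    obtain ⟨u, huT, htu, husplit⟩ := hs t htT hst
    refine ⟨u, ⟨huT, Or.inr (ht''t.trans htu)⟩, htu, ?_⟩
    refine Set.Infinite.mono ?_ husplit
    intro m hm
    exact ⟨hm, Or.inr ((ht''t.trans htu).trans (List.prefix_append u [m]))⟩
  · rw [Set.eq_empty_iff_forall_notMem]
    rintro x ⟨hxS, hxbin⟩
    have hmem := hxS (t'.length + 1)
    have hlenL : (List.ofFn fun i : Fin (t'.length + 1) => x i).length = t''.length := by
      simp [hlen'']
    have hLt : (List.ofFn fun i : Fin (t'.length + 1) => x i) = t'' := by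
      rcases hmem.2 with h | h
      · exact h.eq_of_length hlenL
      · exact (h.eq_of_length hlenL.symm).symm
    have hlast : x t'.length = n := by
      have h1 : (List.ofFn fun i : Fin (t'.length + 1) => x i).getLast? = some (x t'.length) := by
        rw [List.ofFn_succ']
        simp
      have h2 : t''.getLast? = some n := by
        rw [ht''def]
        exact List.getLast?_concat
      rw [hLt, h2] at h1
      exact (Option.some.inj h1).symm
    have := hxbin t'.length
    omega

theorem exists_mMeasurable_not_sMeasurable :
    ∃ B : Set (ℕ → ℕ), MMeasurable B ∧ ¬ SMeasurable B := by
  classical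
  haveI : Nonempty {Q : Set (ℕ → ℕ) // Perfect Q ∧ Q.Nonempty ∧ Q ⊆ binSet} :=
    ⟨⟨binSet, binSet_perfect, binSet_nonempty, subset_rfl⟩⟩
  obtain ⟨B, hB1, hB2⟩ := exists_bernstein_s3
    (fun i : {Q : Set (ℕ → ℕ) // Perfect Q ∧ Q.Nonempty ∧ Q ⊆ binSet} => (i : Set (ℕ → ℕ)))
    mk_perfect_subsets_le (fun i => continuum_le_mk_perfect i.2.1 i.2.2.1)
  have hBP : B ⊆ binSet := hB2.trans (Set.iUnion_subset fun i => i.2.2.2)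
  refine ⟨B, ?_, ?_⟩
  · intro T hT
    obtain ⟨S, hS, hST, hdisj⟩ := miller_avoid hT
    refine ⟨S, hS, hST, Or.inr ?_⟩
    rw [Set.eq_empty_iff_forall_notMem]
    rintro x ⟨hxS, hxB⟩
    exact (Set.eq_empty_iff_forall_notMem.1 hdisj x) ⟨hxS, hBP hxB⟩
  · intro hS
    obtain ⟨Q, hQperf, hQne, hQP, hQcase⟩ := hS binSet binSet_perfect binSet_nonempty
    have h := hB1 ⟨Q, hQperf, hQne, hQP⟩
    rcases hQcase with hsub | hempty
    · obtain ⟨y, hyQ, hyB⟩ := h.2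
      exact hyB (hsub hyQ)
    · obtain ⟨y, hy⟩ := h.1
      exact (Set.eq_empty_iff_forall_notMem.1 hempty y) hy
end

section
/- There exists a subset C of the Baire space ω^ω which is l-measurable but not m-measurable. -/
open Filter

open Cardinal in
lemma bernstein_set {α ι : Type} (A : ι → Set α) (c : Cardinal)
    (hc : ℵ₀ ≤ c) (hι : #ι ≤ c) (hA : ∀ i, c ≤ #(A i)) :
    ∃ f g : ι → α, (∀ i, f i ∈ A i) ∧ (∀ i, g i ∈ A i) ∧ ∀ i j, f i ≠ g j := by
  classical
  have hdiff : ∀ {B Z : Set α}, #Z < #B → (B \ Z).Nonempty := by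
    intro B Z h
    rw [Set.nonempty_iff_ne_empty]; intro he
    have hsub : B ⊆ Z := by
      intro a ha; by_contra hz
      exact (Set.eq_empty_iff_forall_notMem.mp he a) ⟨ha, hz⟩
    exact absurd (Cardinal.mk_le_mk_of_subset hsub) (not_le.mpr h)
  rcases isEmpty_or_nonempty ι with hempty | hne
  · exact ⟨fun i => isEmptyElim i, fun i => isEmptyElim i,
      fun i => isEmptyElim i, fun i => isEmptyElim i, fun i => isEmptyElim i⟩
  obtain ⟨i0⟩ := hne
  have hα : Nonempty α := by
    have h0 : #(A i0) ≠ 0 := by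
      have : (0 : Cardinal) < #(A i0) :=
        lt_of_lt_of_le (lt_of_lt_of_le aleph0_pos hc) (hA i0)
      exact this.ne'
    obtain ⟨⟨a, _⟩⟩ := Cardinal.mk_ne_zero_iff.mp h0
    exact ⟨a⟩
  -- embed ι into the initial ordinal of c
  have hemb : Nonempty (ι ↪ c.ord.ToType) := by
    rw [← Cardinal.mk_ord_toType c] at hι
    exact hι
  obtain ⟨e⟩ := hemb
  set μ := c.ord.ToType with hμ
  -- a choice function
  let pick : Set α → α := fun W => if h : W.Nonempty then h.choose else Classical.arbitrary α
  have pick_mem : ∀ W : Set α, W.Nonempty → pick W ∈ W := by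
    intro W h; simp only [pick, dif_pos h]; exact h.choose_spec
  -- the recursion
  let step : ∀ m : μ, (∀ k, k < m → α × α) → α × α := fun m rec =>
    if h : ∃ i, e i = m then
      (pick (A h.choose \
          ((Set.range fun k : {k : μ // k < m} => (rec k.1 k.2).1) ∪
           (Set.range fun k : {k : μ // k < m} => (rec k.1 k.2).2))),
       pick (A h.choose \ insert
          (pick (A h.choose \
            ((Set.range fun k : {k : μ // k < m} => (rec k.1 k.2).1) ∪
             (Set.range fun k : {k : μ // k < m} => (rec k.1 k.2).2))))
          ((Set.range fun k : {k : μ // k < m} => (rec k.1 k.2).1) ∪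
           (Set.range fun k : {k : μ // k < m} => (rec k.1 k.2).2))))
    else (Classical.arbitrary α, Classical.arbitrary α)
  let F : μ → α × α := IsWellFounded.fix (· < ·) step
  have hF : ∀ m, F m = step m fun k _ => F k := fun m => IsWellFounded.fix_eq _ _ _
  set Z : μ → Set α := fun m =>
    (Set.range fun k : {k : μ // k < m} => (F k.1).1) ∪
    (Set.range fun k : {k : μ // k < m} => (F k.1).2) with hZdef
  have hZcard : ∀ m, #(Z m) < c := by
    intro m
    have hIio : #{k : μ // k < m} < c := Cardinal.mk_Iio_ord_toType m
    calc #(Z m) ≤ #(Set.range fun k : {k : μ // k < m} => (F k.1).1) +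
          #(Set.range fun k : {k : μ // k < m} => (F k.1).2) := Cardinal.mk_union_le _ _
      _ < c := Cardinal.add_lt_of_lt hc
          (lt_of_le_of_lt (Cardinal.mk_range_le) hIio)
          (lt_of_le_of_lt (Cardinal.mk_range_le) hIio)
  have key : ∀ (m : μ) (h : ∃ i, e i = m),
      (F m).1 ∈ A h.choose \ Z m ∧ (F m).2 ∈ A h.choose \ insert (F m).1 (Z m) := by
    intro m h
    have h1 : (A h.choose \ Z m).Nonempty :=
      hdiff (lt_of_lt_of_le (hZcard m) (hA _))
    have h2 : (A h.choose \ insert (pick (A h.choose \ Z m)) (Z m)).Nonempty := by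
      apply hdiff
      calc #(insert (pick (A h.choose \ Z m)) (Z m) : Set α) ≤ #(Z m) + 1 :=
            Cardinal.mk_insert_le
        _ < c := Cardinal.add_lt_of_lt hc (hZcard m) (lt_of_lt_of_le one_lt_aleph0 hc)
        _ ≤ #(A h.choose) := hA _
    have hFm : F m = (pick (A h.choose \ Z m),
        pick (A h.choose \ insert (pick (A h.choose \ Z m)) (Z m))) := by
      rw [hF m]; simp only [step, dif_pos h]; rfl
    rw [hFm]
    exact ⟨pick_mem _ h1, by
      have := pick_mem _ h2
      simpa using this⟩
  refine ⟨fun i => (F (e i)).1, fun i => (F (e i)).2, ?_, ?_, ?_⟩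
  · intro i
    have h : ∃ i', e i' = e i := ⟨i, rfl⟩
    have hch : h.choose = i := e.injective h.choose_spec
    have := (key (e i) h).1.1
    rwa [hch] at this
  · intro i
    have h : ∃ i', e i' = e i := ⟨i, rfl⟩
    have hch : h.choose = i := e.injective h.choose_spec
    have := (key (e i) h).2.1
    rwa [hch] at this
  · intro i j
    have hi : ∃ i', e i' = e i := ⟨i, rfl⟩
    have hj : ∃ i', e i' = e j := ⟨j, rfl⟩
    rcases lt_trichotomy (e i) (e j) with hlt | heq | hgt
    · -- g j chosen avoiding insert (F (e j)).1 (Z (e j)) ∋ (F (e i)).1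
      have h2 := (key (e j) hj).2.2
      intro hcon
      apply h2
      apply Set.mem_insert_iff.mpr
      right
      apply Set.mem_union_left
      exact ⟨⟨e i, hlt⟩, hcon⟩
    · -- same step: f i ≠ g j since g avoids insert (f)
      have h2 := (key (e j) hj).2.2
      intro hcon
      simp only at hcon
      rw [heq] at hcon
      exact h2 (Set.mem_insert_iff.mpr (Or.inl hcon.symm))
    · -- f i avoids Z (e i) ∋ (F (e j)).2
      have h1 := (key (e i) hi).1.2
      intro hcon
      apply h1
      apply Set.mem_union_right
      exact ⟨⟨e j, hgt⟩, hcon.symm⟩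


-- helper: getD along a prefix
lemma getD_of_prefix {l1 l2 : List ℕ} (h : l1 <+: l2) {i : ℕ} (hi : i < l1.length) :
    l1.getD i 0 = l2.getD i 0 := by
  rw [List.getD_eq_getElem _ _ hi, List.getD_eq_getElem _ _ (lt_of_lt_of_le hi h.length_le)]
  exact h.getElem hi

open Cardinal in
lemma miller_card {S : Set (List ℕ)} (hS : IsMiller S) :
    (2 : Cardinal) ^ ℵ₀ ≤ #(branches S) := by
  classical
  obtain ⟨htree, s, hsS, hsplit⟩ := hS
  -- choice of splitting extensions
  have hsplit' : ∀ t : List ℕ, t ∈ S → s <+: t →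
      ∃ t', (t' ∈ S ∧ s <+: t' ∧ t <+: t') ∧ InfSplitting S t' := by
    intro t ht hst
    obtain ⟨t', ht', htt', hinf⟩ := hsplit t ht hst
    exact ⟨t', ⟨ht', hst.trans htt', htt'⟩, hinf⟩
  choose sp hsp hinf using hsplit'
  -- two distinct successors of each splitting node
  have hpair : ∀ (t : List ℕ) (ht : t ∈ S) (hst : s <+: t),
      ∃ a, (sp t ht hst ++ [a] ∈ S) ∧ ∃ b, (sp t ht hst ++ [b] ∈ S) ∧ a ≠ b := by
    intro t ht hst
    obtain ⟨a, ha, b, hb, hab⟩ := (hinf t ht hst).nontrivial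
    exact ⟨a, ha, b, hb, hab⟩
  choose ca hca cb hcb hcab using hpair
  -- node type
  let N : Type := {t : List ℕ // t ∈ S ∧ s <+: t}
  let nb : N → Bool → ℕ := fun t b => bif b then cb t.1 t.2.1 t.2.2 else ca t.1 t.2.1 t.2.2
  have hnb_mem : ∀ (t : N) (b : Bool), sp t.1 t.2.1 t.2.2 ++ [nb t b] ∈ S := by
    intro t b; cases b
    · exact hca t.1 t.2.1 t.2.2
    · exact hcb t.1 t.2.1 t.2.2
  have hnb_ne : ∀ (t : N) (b b' : Bool), b ≠ b' → nb t b ≠ nb t b' := by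
    intro t b b' hbb
    cases b <;> cases b'
    · exact absurd rfl hbb
    · simp only [nb, Bool.cond_false, Bool.cond_true]
      exact hcab t.1 t.2.1 t.2.2
    · simp only [nb, Bool.cond_false, Bool.cond_true]
      exact fun h => hcab t.1 t.2.1 t.2.2 h.symm
    · exact absurd rfl hbb
  let child : N → Bool → N := fun t b =>
    ⟨sp t.1 t.2.1 t.2.2 ++ [nb t b],
      hnb_mem t b,
      ((hsp t.1 t.2.1 t.2.2).2.1).trans ⟨[nb t b], rfl⟩⟩
  have hchild_prefix : ∀ (t : N) (b : Bool), t.1 <+: (child t b).1 :=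
    fun t b => ((hsp t.1 t.2.1 t.2.2).2.2).trans ⟨[nb t b], rfl⟩
  have hchild_len : ∀ (t : N) (b : Bool),
      (child t b).1.length = (sp t.1 t.2.1 t.2.2).length + 1 := by
    intro t b; simp [child]
  -- the scheme
  let u : (ℕ → Bool) → ℕ → N := fun x =>
    fun m => Nat.rec (⟨s, hsS, List.prefix_refl s⟩ : N) (fun m prev => child prev (x m)) m
  have hu_succ : ∀ (x : ℕ → Bool) (m : ℕ), u x (m + 1) = child (u x m) (x m) := fun _ _ => rfl
  have hu_mono : ∀ (x : ℕ → Bool) (m m' : ℕ), m ≤ m' → (u x m).1 <+: (u x m').1 := by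
    intro x m m' h
    induction h with
    | refl => exact List.prefix_refl _
    | step _ ih => exact ih.trans (hchild_prefix _ _)
  have hu_len : ∀ (x : ℕ → Bool) (m : ℕ), m ≤ (u x m).1.length := by
    intro x m
    induction m with
    | zero => exact Nat.zero_le _
    | succ k ih =>
      have h1 : (u x k).1.length ≤ (sp (u x k).1 (u x k).2.1 (u x k).2.2).length :=
        ((hsp (u x k).1 (u x k).2.1 (u x k).2.2).2.2).length_le
      rw [hu_succ, hchild_len]
      omega
  have hu_congr : ∀ (x y : ℕ → Bool) (m : ℕ), (∀ i, i < m → x i = y i) → u x m = u y m := by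
    intro x y m h
    induction m with
    | zero => rfl
    | succ k ih =>
      have hk : u x k = u y k := ih fun i hi => h i (Nat.lt_succ_of_lt hi)
      rw [hu_succ, hu_succ, hk, h k (Nat.lt_succ_self k)]
  -- the branch map
  let β : (ℕ → Bool) → ℕ → ℕ := fun x n => (u x (n + 1)).1.getD n 0
  have hβ_getD : ∀ (x : ℕ → Bool) (n m : ℕ), n < m → (u x m).1.getD n 0 = β x n := by
    intro x n m h
    exact (getD_of_prefix (hu_mono x (n+1) m h) (lt_of_lt_of_le (Nat.lt_succ_self n) (hu_len x (n+1)))).symm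
  have hβ_mem : ∀ x : ℕ → Bool, β x ∈ branches S := by
    intro x n
    have hlen : n ≤ (u x n).1.length := hu_len x n
    have heq : (List.ofFn fun i : Fin n => β x i) = (u x n).1.take n := by
      apply List.ext_getElem
      · simp [Nat.min_eq_left hlen]
      · intro i h1 h2
        rw [List.getElem_ofFn, List.getElem_take]
        have hi : i < n := by simpa using h1
        have hilen : i < (u x n).1.length := lt_of_lt_of_le hi hlen
        rw [← List.getD_eq_getElem _ 0 hilen]
        exact (hβ_getD x i n hi).symm
    rw [heq]
    exact htree (u x n).1 (u x n).2.1 _ (List.take_prefix n (u x n).1)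
  have hβ_inj : Function.Injective β := by
    intro x y hxy
    by_contra hne
    have hex : ∃ m, x m ≠ y m := by
      by_contra hall
      push_neg at hall
      exact hne (funext hall)
    set m := Nat.find hex with hm
    have hxym : x m ≠ y m := Nat.find_spec hex
    have hmin : ∀ i, i < m → x i = y i := by
      intro i hi
      by_contra hcon
      exact Nat.find_min hex hi hcon
    have huxy : u x m = u y m := hu_congr x y m hmin
    set t : N := u x m with ht
    set K := (sp t.1 t.2.1 t.2.2).length with hK
    have hmK : m ≤ K := le_trans (hu_len x m) ((hsp t.1 t.2.1 t.2.2).2.2).length_le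
    -- values of β at K
    have hval : ∀ (z : ℕ → Bool), u z m = t → β z K = nb t (z m) := by
      intro z hz
      have h1 : u z (m+1) = child t (z m) := by rw [hu_succ, hz]
      have hlen1 : (u z (m+1)).1.length = K + 1 := by rw [h1]; exact hchild_len t (z m)
      have h2 : (u z (m+1)).1.getD K 0 = β z K := by
        have hpm : (u z (m+1)).1 <+: (u z (K+1)).1 := hu_mono z (m+1) (K+1) (by omega)
        have hKlen : K < (u z (m+1)).1.length := by rw [hlen1]; omega
        exact getD_of_prefix hpm hKlen
      rw [← h2, h1]
      show (sp t.1 t.2.1 t.2.2 ++ [nb t (z m)]).getD K 0 = nb t (z m)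
      rw [List.getD_append_right _ _ _ _ (le_refl K)]
      simp [hK]
    have hvx : β x K = nb t (x m) := hval x rfl
    have hvy : β y K = nb t (y m) := hval y huxy.symm
    have : nb t (x m) = nb t (y m) := by rw [← hvx, ← hvy, hxy]
    exact hnb_ne t (x m) (y m) hxym this
  -- conclude
  have : #(ℕ → Bool) ≤ #(branches S) := by
    apply Cardinal.mk_le_of_injective (f := fun x => (⟨β x, hβ_mem x⟩ : branches S))
    intro x y h
    exact hβ_inj (congrArg Subtype.val h)
  calc (2 : Cardinal) ^ ℵ₀ = #(ℕ → Bool) := by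
        rw [← Cardinal.power_def, Cardinal.mk_bool, Cardinal.mk_nat]
    _ ≤ #(branches S) := this


/-- The tree of sequences vanishing at odd coordinates. -/
def Tstar : Set (List ℕ) := {t : List ℕ | ∀ i : ℕ, Odd i → t.getD i 0 = 0}

lemma tstar_tree : IsTree Tstar := by
  intro t ht t' htt' i hi
  rcases lt_or_ge i t'.length with h | h
  · rw [getD_of_prefix htt' h]; exact ht i hi
  · exact List.getD_eq_default _ _ h

lemma tstar_split {t : List ℕ} (ht : t ∈ Tstar) (hev : Even t.length) :
    InfSplitting Tstar t := by
  have : {n : ℕ | t ++ [n] ∈ Tstar} = Set.univ := by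
    ext n
    simp only [Set.mem_setOf_eq, Set.mem_univ, iff_true]
    intro i hi
    rcases lt_or_ge i t.length with h | h
    · rw [List.getD_append _ _ _ _ h]; exact ht i hi
    · rcases eq_or_lt_of_le h with h' | h'
      · exact absurd (h' ▸ hi) (Nat.not_odd_iff_even.mpr hev)
      · apply List.getD_eq_default
        simp only [List.length_append, List.length_cons, List.length_nil]
        omega
  rw [InfSplitting, this]
  exact Set.infinite_univ

lemma tstar_append_zero {t : List ℕ} (ht : t ∈ Tstar) : t ++ [0] ∈ Tstar := by
  intro i hi
  rcases lt_or_ge i t.length with h | h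
  · rw [List.getD_append _ _ _ _ h]; exact ht i hi
  · rcases eq_or_lt_of_le h with h' | h'
    · rw [List.getD_append_right _ _ _ _ h]
      cases (i - t.length) <;> rfl
    · apply List.getD_eq_default
      simp only [List.length_append, List.length_cons, List.length_nil]
      omega

lemma tstar_miller : IsMiller Tstar := by
  refine ⟨tstar_tree, [], ?_, ?_⟩
  · intro i _; rfl
  · intro t ht _
    by_cases hev : Even t.length
    · exact ⟨t, ht, List.prefix_refl t, tstar_split ht hev⟩
    · refine ⟨t ++ [0], tstar_append_zero ht, ⟨[0], rfl⟩, ?_⟩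
      apply tstar_split (tstar_append_zero ht)
      simp only [List.length_append, List.length_cons, List.length_nil]
      rcases Nat.even_or_odd t.length with h | h
      · exact absurd h hev
      · obtain ⟨k, hk⟩ := h
        exact ⟨k + 1, by omega⟩

lemma branches_tstar {x : ℕ → ℕ} (hx : x ∈ branches Tstar) {i : ℕ} (hi : Odd i) : x i = 0 := by
  have h := hx (i + 1) i hi
  rwa [List.getD_eq_getElem _ _ (by simp), List.getElem_ofFn] at h

lemma branches_mono {S T : Set (List ℕ)} (h : S ⊆ T) : branches S ⊆ branches T :=
  fun _ hx n => h (hx n)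

/-- Laver pruning: every Laver tree has a Laver subtree avoiding `branches Tstar`. -/
lemma laver_avoid {T : Set (List ℕ)} (hT : IsLaver T) :
    ∃ S, IsLaver S ∧ S ⊆ T ∧ ∀ x ∈ branches S, ∃ i, Odd i ∧ x i ≠ 0 := by
  obtain ⟨htree, s, hsT, hstem⟩ := hT
  set S : Set (List ℕ) :=
    {t | t ∈ T ∧ (t <+: s ∨ (s <+: t ∧ ∀ i, s.length ≤ i → i < t.length → t.getD i 0 ≠ 0))}
    with hSdef
  have hSsub : S ⊆ T := fun t ht => ht.1
  have hStree : IsTree S := by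
    intro t ht t' htt'
    refine ⟨htree t ht.1 t' htt', ?_⟩
    rcases ht.2 with h | ⟨hst, hnz⟩
    · exact Or.inl (htt'.trans h)
    · rcases le_or_gt t'.length s.length with hle | hlt
      · exact Or.inl (List.prefix_of_prefix_length_le htt' hst hle)
      · refine Or.inr ⟨List.prefix_of_prefix_length_le hst htt' (le_of_lt hlt), fun i h1 h2 => ?_⟩
        rw [getD_of_prefix htt' h2]
        exact hnz i h1 (lt_of_lt_of_le h2 htt'.length_le)
  have hsS : s ∈ S := ⟨hsT, Or.inr ⟨List.prefix_refl s, fun i h1 h2 => absurd h2 (not_lt.mpr h1)⟩⟩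
  have hnz_of_mem : ∀ t ∈ S, s <+: t → ∀ i, s.length ≤ i → i < t.length → t.getD i 0 ≠ 0 := by
    intro t ht hst i h1 h2
    rcases ht.2 with h | ⟨_, hnz⟩
    · have : t = s := List.IsPrefix.eq_of_length h (Nat.le_antisymm h.length_le hst.length_le)
      rw [this] at h2
      exact absurd h2 (not_lt.mpr h1)
    · exact hnz i h1 h2
  have hlaver : IsLaver S := by
    refine ⟨hStree, s, hsS, ?_⟩
    intro t ht hst
    have hsubset : {n : ℕ | t ++ [n] ∈ T} \ {0} ⊆ {n : ℕ | t ++ [n] ∈ S} := by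
      intro n hn
      have hnT : t ++ [n] ∈ T := hn.1
      have hn0 : n ≠ 0 := hn.2
      refine ⟨hnT, Or.inr ⟨hst.trans ⟨[n], rfl⟩, fun i h1 h2 => ?_⟩⟩
      simp only [List.length_append, List.length_cons, List.length_nil] at h2
      rcases lt_or_ge i t.length with h | h
      · rw [List.getD_append _ _ _ _ h]
        exact hnz_of_mem t ht hst i h1 h
      · have hi : i = t.length := by omega
        rw [List.getD_append_right _ _ _ _ h, hi]
        simpa using hn0
    exact Set.Infinite.mono hsubset ((hstem t (hSsub ht) hst).diff (Set.finite_singleton 0))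
  refine ⟨S, hlaver, hSsub, ?_⟩
  intro x hx
  refine ⟨2 * s.length + 1, ⟨s.length, by ring⟩, ?_⟩
  set i := 2 * s.length + 1 with hi
  have hmem := hx (i + 1)
  have hlen : (List.ofFn fun j : Fin (i+1) => x j).length = i + 1 := by simp [hi]
  have hnotpre : ¬ (List.ofFn fun j : Fin (i+1) => x j) <+: s := by
    intro h
    have := h.length_le
    rw [hlen] at this
    omega
  rcases hmem.2 with h | ⟨_, hnz⟩
  · exact absurd h hnotpre
  · have := hnz i (by omega) (by rw [hlen]; omega)
    rwa [List.getD_eq_getElem _ _ (by rw [hlen]; omega), List.getElem_ofFn] at this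

theorem exists_lMeasurable_not_mMeasurable :
    ∃ C : Set (ℕ → ℕ), LMeasurable C ∧ ¬ MMeasurable C := by
  classical
  set ι := {S : Set (List ℕ) // IsMiller S ∧ S ⊆ Tstar} with hι
  have hιcard : Cardinal.mk ι ≤ (2 : Cardinal) ^ Cardinal.aleph0 := by
    calc Cardinal.mk ι ≤ Cardinal.mk (Set (List ℕ)) := Cardinal.mk_subtype_le _
      _ = (2 : Cardinal) ^ Cardinal.aleph0 := by rw [Cardinal.mk_set, Cardinal.mk_list_eq_aleph0]
  have hc : Cardinal.aleph0 ≤ (2 : Cardinal) ^ Cardinal.aleph0 := by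
    rw [Cardinal.two_power_aleph0]; exact Cardinal.aleph0_le_continuum
  obtain ⟨f, g, hf, hg, hfg⟩ := bernstein_set (fun i : ι => branches i.1) ((2 : Cardinal) ^ Cardinal.aleph0)
    hc hιcard (fun i => miller_card i.2.1)
  refine ⟨Set.range f, ?_, ?_⟩
  · -- l-measurability: every Laver tree has a subtree avoiding C ⊆ branches Tstar
    intro T hT
    obtain ⟨S, hLS, hsub, hav⟩ := laver_avoid hT
    refine ⟨S, hLS, hsub, Or.inr ?_⟩
    rw [Set.eq_empty_iff_forall_notMem]
    rintro x ⟨hxS, hxC⟩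
    obtain ⟨j, rfl⟩ := hxC
    have hxT : f j ∈ branches Tstar := branches_mono j.2.2 (hf j)
    obtain ⟨i, hodd, hne⟩ := hav (f j) hxS
    exact hne (branches_tstar hxT hodd)
  · -- not m-measurable: Tstar witnesses
    intro hM
    obtain ⟨S, hSM, hSsub, hdec⟩ := hM Tstar tstar_miller
    set i : ι := ⟨S, hSM, hSsub⟩ with hidef
    rcases hdec with hin | hout
    · obtain ⟨j, hj⟩ := hin (hg i)
      exact hfg j i hj
    · have hmem : f i ∈ branches S ∩ Set.range f := ⟨hf i, ⟨i, rfl⟩⟩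
      rw [hout] at hmem
      exact hmem
end

section
/- Assume 𝔟 = 𝔠, i.e. the least cardinality of an unbounded family in ω^ω equals the continuum. Then there exists a subset of the Baire space ω^ω which is s-measurable but not l-measurable. -/
open Filter


section SLAux
open Set Function Cardinal Topology


lemma perfect_cantor {C : Set (ℕ → ℕ)} (hC : Perfect C) (hne : C.Nonempty) :
    ∃ f : (ℕ → Bool) → (ℕ → ℕ), Set.range f ⊆ C ∧ Continuous f ∧ Function.Injective f := by
  letI := TopologicalSpace.upgradeIsCompletelyMetrizable (ℕ → ℕ)
  exact hC.exists_nat_bool_injection hne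

def ilv (z w : ℕ → Bool) : ℕ → Bool := fun n => if n % 2 = 0 then z (n / 2) else w (n / 2)

lemma ilv_inj {z w z' w' : ℕ → Bool} (h : ilv z w = ilv z' w') : z = z' ∧ w = w' := by
  constructor
  · funext k
    have := congrFun h (2 * k)
    simpa [ilv, Nat.mul_div_cancel_left] using this
  · funext k
    have := congrFun h (2 * k + 1)
    have h2 : (2 * k + 1) % 2 = 1 := by omega
    have h3 : (2 * k + 1) / 2 = k := by omega
    simpa [ilv, h2, h3] using this

lemma ilv_cont (z : ℕ → Bool) : Continuous (ilv z) := by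
  apply continuous_pi
  intro n
  unfold ilv
  by_cases h : n % 2 = 0 <;> simp [h]
  · exact continuous_const
  · exact continuous_apply _

lemma range_perfect {f : (ℕ → Bool) → (ℕ → ℕ)} (hc : Continuous f) (hi : Function.Injective f) :
    Perfect (Set.range f) ∧ (Set.range f).Nonempty ∧
      ∃ g : ℕ → ℕ, ∀ q ∈ Set.range f, ∀ n, q n ≤ g n := by
  have hcomp : IsCompact (Set.range f) := isCompact_range hc
  have hclosed : IsClosed (Set.range f) := hcomp.isClosed
  refine ⟨⟨hclosed, ?_⟩, ⟨f (fun _ => false), mem_range_self _⟩, ?_⟩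
  · rintro q ⟨w, rfl⟩
    set u : ℕ → (ℕ → ℕ) := fun k => f (Function.update w k (!(w k))) with hu
    have hwk : ∀ k, Function.update w k (!(w k)) ≠ w := by
      intro k h
      have := congrFun h k
      simp at this
    have htend : Tendsto u atTop (𝓝 (f w)) := by
      apply hc.continuousAt.tendsto.comp
      rw [tendsto_pi_nhds]
      intro i
      have heq : (fun k => Function.update w k (!(w k)) i) =ᶠ[atTop] fun _ => w i := by
        filter_upwards [eventually_gt_atTop i] with k hk
        exact Function.update_of_ne (by omega) _ _
      rw [tendsto_congr' heq]
      exact tendsto_const_nhds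
    have hne' : ∀ k, u k ≠ f w := fun k h => hwk k (hi h)
    have hle : map u atTop ≤ 𝓝[≠] (f w) ⊓ 𝓟 (Set.range f) := by
      refine le_inf (le_inf htend ?_) ?_
      · rw [le_principal_iff, mem_map]
        filter_upwards with k
        exact hne' k
      · rw [le_principal_iff, mem_map]
        filter_upwards with k
        exact mem_range_self _
    exact Filter.neBot_of_le hle
  · have : ∀ n : ℕ, ∃ b : ℕ, ∀ q ∈ Set.range f, q n ≤ b := by
      intro n
      have hfin : ((fun q : ℕ → ℕ => q n) '' Set.range f).Finite :=
        (hcomp.image (continuous_apply n)).finite_of_discrete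
      obtain ⟨b, hb⟩ := hfin.bddAbove
      exact ⟨b, fun q hq => hb (Set.mem_image_of_mem _ hq)⟩
    choose g hg using this
    exact ⟨g, fun q hq n => hg n q hq⟩

lemma exists_perfect_avoid {P Y : Set (ℕ → ℕ)} (hP : Perfect P) (hne : P.Nonempty)
    (hY : #Y < Cardinal.continuum) :
    ∃ Q : Set (ℕ → ℕ), ∃ g : ℕ → ℕ, Perfect Q ∧ Q.Nonempty ∧ Q ⊆ P ∧ Q ∩ Y = ∅ ∧
      ∀ q ∈ Q, ∀ n, q n ≤ g n := by
  obtain ⟨f, hrange, hc, hi⟩ := perfect_cantor hP hne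
  have key : ∃ z : ℕ → Bool, Set.range (f ∘ ilv z) ∩ Y = ∅ := by
    by_contra hcon
    push_neg at hcon
    have hcon' : ∀ z : ℕ → Bool, (Set.range (f ∘ ilv z) ∩ Y).Nonempty := hcon
    choose φ hφ using hcon'
    have hinj : Function.Injective φ := by
      intro z z' h
      obtain ⟨w, hw⟩ := (hφ z).1
      obtain ⟨w', hw'⟩ := (hφ z').1
      have : f (ilv z w) = f (ilv z' w') := by
        simp only [comp_apply] at hw hw'
        rw [hw, hw', h]
      exact (ilv_inj (hi this)).1
    have : Cardinal.continuum ≤ #Y := by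
      have := Cardinal.mk_le_of_injective (f := fun z => (⟨φ z, (hφ z).2⟩ : Y))
        (fun z z' h => hinj (congrArg Subtype.val h))
      rwa [show #(ℕ → Bool) = Cardinal.continuum by
        rw [Cardinal.mk_arrow, Cardinal.mk_bool, Cardinal.mk_nat, Cardinal.lift_id,
          Cardinal.lift_id, ← Cardinal.two_power_aleph0]] at this
    exact absurd hY (not_lt.mpr this)
  obtain ⟨z, hz⟩ := key
  have hci : Continuous (f ∘ ilv z) := hc.comp (ilv_cont z)
  have hii : Function.Injective (f ∘ ilv z) := fun w w' h => (ilv_inj (hi h)).2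
  obtain ⟨hperf, hne', g, hg⟩ := range_perfect hci hii
  have hsub : Set.range (f ∘ ilv z) ⊆ P := by
    rintro q ⟨w, rfl⟩
    exact hrange (mem_range_self _)
  exact ⟨_, g, hperf, hne', hsub, hz, hg⟩


-- prefix of ofFn
lemma ofFn_prefix_ofFn {α : Type*} (z : ℕ → α) {m n : ℕ} (h : m ≤ n) :
    (List.ofFn fun i : Fin m => z i) <+: (List.ofFn fun i : Fin n => z i) := by
  have : (List.ofFn fun i : Fin m => z i) = (List.ofFn fun i : Fin n => z i).take m := by
    apply List.ext_getElem
    · simp [Nat.min_eq_left h]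
    · intro i h1 h2
      simp [List.getElem_take]
  rw [this]
  exact List.take_prefix _ _

lemma laver_branch {T : Set (List ℕ)} (hT : IsLaver T) (h : ℕ → ℕ) {Y : Set (ℕ → ℕ)}
    (hY : #Y < Cardinal.continuum) :
    ∃ x ∈ branches T, x ∉ Y ∧ ∀ᶠ n in atTop, h n < x n := by
  obtain ⟨htree, s, hsT, hsplit⟩ := hT
  set N : List ℕ → Set ℕ := fun t => {n | t ++ [n] ∈ T ∧ h t.length < n} with hN
  have hNinf : ∀ t ∈ T, s <+: t → (N t).Infinite := by
    intro t ht hst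
    have h1 : {n : ℕ | t ++ [n] ∈ T}.Infinite := hsplit t ht hst
    have h2 : N t = {n : ℕ | t ++ [n] ∈ T} \ {n : ℕ | n ≤ h t.length} := by
      ext n; simp [hN]
    rw [h2]
    exact h1.diff (Set.finite_Iic (h t.length))
  classical
  set a : List ℕ → Bool → ℕ := fun t b =>
    if b then sInf (N t \ {sInf (N t)}) else sInf (N t) with ha
  have ha_mem : ∀ t ∈ T, s <+: t → ∀ b, a t b ∈ N t := by
    intro t ht hst b
    have hinf := hNinf t ht hst
    cases b
    · exact Nat.sInf_mem hinf.nonempty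
    · have : (N t \ {sInf (N t)}).Nonempty := (hinf.diff (Set.finite_singleton _)).nonempty
      have := Nat.sInf_mem this
      simp only [ha, if_true]
      exact this.1
  have ha_ne : ∀ t ∈ T, s <+: t → a t true ≠ a t false := by
    intro t ht hst
    have hinf := hNinf t ht hst
    have : (N t \ {sInf (N t)}).Nonempty := (hinf.diff (Set.finite_singleton _)).nonempty
    have hmem := Nat.sInf_mem this
    simp only [ha, if_true, if_false]
    exact fun hc => hmem.2 (by simp [hc])
  set step : List ℕ → Bool → List ℕ := fun t b => t ++ [a t b] with hstep
  set σ : List Bool → List ℕ := fun bs => bs.foldl step s with hσ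
  have hσsnoc : ∀ bs b, σ (bs ++ [b]) = σ bs ++ [a (σ bs) b] := by
    intro bs b
    simp [hσ, List.foldl_append, hstep]
  have hσT : ∀ bs, σ bs ∈ T ∧ s <+: σ bs ∧ (σ bs).length = s.length + bs.length := by
    intro bs
    induction bs using List.reverseRecOn with
    | nil => exact ⟨hsT, List.prefix_refl s, by simp [hσ]⟩
    | append_singleton bs b ih =>
      obtain ⟨h1, h2, h3⟩ := ih
      rw [hσsnoc]
      have hmem := ha_mem _ h1 h2 b
      refine ⟨hmem.1, h2.trans (List.prefix_append _ _), by simp [h3]; omega⟩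
  have hσpre : ∀ bs bs' : List Bool, bs <+: bs' → σ bs <+: σ bs' := by
    intro bs bs' hpre
    induction bs' using List.reverseRecOn with
    | nil => rw [List.prefix_nil] at hpre; subst hpre; exact List.prefix_refl _
    | append_singleton bs' b ih =>
      rcases List.prefix_concat_iff.mp hpre with h | h
      · subst h; exact List.prefix_refl _
      · exact (ih h).trans (by rw [hσsnoc]; exact List.prefix_append _ _)
  -- the branch function
  set x : (ℕ → Bool) → ℕ → ℕ := fun z n =>
    (σ (List.ofFn fun i : Fin (n + 1) => z i)).getD n 0 with hx
  -- coherence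
  have hcoh : ∀ (z : ℕ → Bool) (i m : ℕ), i < m →
      x z i = (σ (List.ofFn fun j : Fin m => z j)).getD i 0 := by
    intro z i m him
    have hpre : σ (List.ofFn fun j : Fin (i+1) => z j) <+: σ (List.ofFn fun j : Fin m => z j) := by
      apply hσpre
      exact ofFn_prefix_ofFn z (by omega)
    obtain ⟨t, htp⟩ := hpre
    rw [hx]
    simp only
    rw [← htp, List.getD_append]
    rw [(hσT _).2.2]
    simp only [List.length_ofFn]
    omega
  -- membership in branches
  have hbr : ∀ z, x z ∈ branches T := by
    intro z n
    have hlist : (List.ofFn fun i : Fin n => x z i) =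
        (σ (List.ofFn fun j : Fin n => z j)).take n := by
      apply List.ext_getElem
      · simp [(hσT _).2.2]
      · intro i h1 h2
        simp only [List.getElem_ofFn, List.getElem_take]
        have hin : i < n := by simpa using h1
        have := hcoh z i n hin
        rw [List.getD_eq_getElem _ 0 (by rw [(hσT _).2.2]; simp; omega)] at this
        simpa using this
    rw [hlist]
    exact htree _ (hσT _).1 _ (List.take_prefix _ _)
  -- domination
  have hdom : ∀ z n, s.length ≤ n → h n < x z n := by
    intro z n hn
    set m := n - s.length with hm
    have hmn : m + 1 ≤ n + 1 := by omega
    have hpre : σ (List.ofFn fun j : Fin (m+1) => z j) <+: σ (List.ofFn fun j : Fin (n+1) => z j) :=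
      hσpre _ _ (ofFn_prefix_ofFn z hmn)
    have hsnoc : (List.ofFn fun j : Fin (m+1) => z j) =
        (List.ofFn fun j : Fin m => z j) ++ [z m] := by
      rw [List.ofFn_succ']
      simp [List.concat_eq_append]
    have hlen : (σ (List.ofFn fun j : Fin m => z j)).length = n := by
      rw [(hσT _).2.2]; simp; omega
    have hval : (σ (List.ofFn fun j : Fin (m+1) => z j)).getD n 0
        = a (σ (List.ofFn fun j : Fin m => z j)) (z m) := by
      rw [hsnoc, hσsnoc]
      rw [List.getD_append_right _ _ _ _ (by omega)]
      rw [hlen]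
      simp
    have hxv : x z n = a (σ (List.ofFn fun j : Fin m => z j)) (z m) := by
      obtain ⟨t, htp⟩ := hpre
      rw [hx]
      simp only
      rw [← htp, List.getD_append _ _ _ _ (by rw [(hσT _).2.2]; simp; omega), ← hval]
    have hmem := (ha_mem _ (hσT (List.ofFn fun j : Fin m => z j)).1 (hσT _).2.1 (z m)).2
    rw [hlen] at hmem
    rw [hxv]
    exact hmem
  -- injectivity
  have hinj : Function.Injective x := by
    intro z z' hzz
    by_contra hne
    have hex : ∃ k, z k ≠ z' k := by
      by_contra hc
      push_neg at hc
      exact hne (funext hc)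
    classical
    set k := Nat.find hex with hk
    have hkne : z k ≠ z' k := Nat.find_spec hex
    have hklt : ∀ i < k, z i = z' i := by
      intro i hi
      by_contra hc
      exact absurd (Nat.find_le hc) (not_le.mpr hi)
    have hofn : (List.ofFn fun j : Fin k => z j) = (List.ofFn fun j : Fin k => z' j) := by
      apply List.ext_getElem (by simp)
      intro i h1 h2
      simp only [List.getElem_ofFn]
      exact hklt i (by simpa using h1)
    set t := σ (List.ofFn fun j : Fin k => z j) with htdef
    have hxk : ∀ w : ℕ → Bool, (List.ofFn fun j : Fin k => w j) = (List.ofFn fun j : Fin k => z j)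
        → x w (s.length + k) = a t (w k) := by
      intro w hw
      have hsnoc : (List.ofFn fun j : Fin (k+1) => w j) =
          (List.ofFn fun j : Fin k => w j) ++ [w k] := by
        rw [List.ofFn_succ']
        simp [List.concat_eq_append]
      have hlen : (σ (List.ofFn fun j : Fin k => w j)).length = s.length + k := by
        rw [(hσT _).2.2]; simp
      have hval : (σ (List.ofFn fun j : Fin (k+1) => w j)).getD (s.length + k) 0
          = a t (w k) := by
        rw [hsnoc, hσsnoc]
        rw [List.getD_append_right _ _ _ _ (by omega)]
        rw [hlen, hw, ← htdef]
        simp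
      have hpre : σ (List.ofFn fun j : Fin (k+1) => w j)
          <+: σ (List.ofFn fun j : Fin (s.length + k + 1) => w j) :=
        hσpre _ _ (ofFn_prefix_ofFn w (by omega))
      obtain ⟨t', htp⟩ := hpre
      rw [hx]
      simp only
      rw [← htp, List.getD_append _ _ _ _ (by rw [(hσT _).2.2]; simp only [List.length_ofFn]; omega),
        hval]
    have h1 := hxk z rfl
    have h2 := hxk z' hofn.symm
    have : a t (z k) = a t (z' k) := by rw [← h1, ← h2, hzz]
    have hane := ha_ne t (hσT _).1 (hσT _).2.1
    cases hb : z k <;> cases hb' : z' k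
    · exact hkne (hb.trans hb'.symm)
    · rw [hb, hb'] at this; exact hane this.symm
    · rw [hb, hb'] at this; exact hane this
    · exact hkne (hb.trans hb'.symm)
  -- selection avoiding Y
  have hsel : ∃ z : ℕ → Bool, x z ∉ Y := by
    by_contra hc
    push_neg at hc
    have : Cardinal.continuum ≤ #Y := by
      have := Cardinal.mk_le_of_injective (f := fun z => (⟨x z, hc z⟩ : Y))
        (fun z z' hzz => hinj (congrArg Subtype.val hzz))
      rwa [show #(ℕ → Bool) = Cardinal.continuum by
        rw [Cardinal.mk_arrow, Cardinal.mk_bool, Cardinal.mk_nat, Cardinal.lift_id,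
          Cardinal.lift_id, ← Cardinal.two_power_aleph0]] at this
    exact absurd hY (not_lt.mpr this)
  obtain ⟨z, hz⟩ := hsel
  refine ⟨x z, hbr z, hz, ?_⟩
  filter_upwards [eventually_ge_atTop s.length] with n hn
  exact hdom z n hn


lemma bounded_of_small (hb : boundingNumber = Cardinal.continuum) {G : Set (ℕ → ℕ)}
    (hG : #G < Cardinal.continuum) : ∃ h : ℕ → ℕ, ∀ g ∈ G, EvLE g h := by
  by_contra hc
  have hmem : #G ∈ {c : Cardinal | ∃ B : Set (ℕ → ℕ), UnboundedFamily B ∧ Cardinal.mk ↥B = c} :=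
    ⟨G, hc, rfl⟩
  have : boundingNumber ≤ #G := csInf_le' hmem
  rw [hb] at this
  exact absurd hG (not_lt.mpr this)

-- recursion helper
lemma exists_rec {ι : Type*} [LinearOrder ι] [WellFoundedLT ι] {Data : Type*}
    (Φ : (α : ι) → ((β : ι) → β < α → Data) → Data → Prop)
    (hex : ∀ α prev, ∃ d, Φ α prev d) :
    ∃ F : ι → Data, ∀ α, Φ α (fun β _ => F β) (F α) := by
  classical
  have wf : WellFounded ((· < ·) : ι → ι → Prop) := wellFounded_lt
  refine ⟨wf.fix (fun α prev => (hex α prev).choose), fun α => ?_⟩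
  have heq := wf.fix_eq (fun α prev => (hex α prev).choose) α
  rw [heq]
  exact (hex α _).choose_spec

-- wellfounded instance on toType?
example : WellFoundedLT (Cardinal.continuum.ord.ToType) := inferInstance
example (i : Cardinal.continuum.ord.ToType) : #{j // j < i} < Cardinal.continuum := by
  have := Cardinal.mk_Iio_ord_toType i
  exact this

-- perfect univ
lemma perfect_univ : Perfect (Set.univ : Set (ℕ → ℕ)) := by
  constructor
  · exact isClosed_univ
  · intro x _
    set u : ℕ → (ℕ → ℕ) := fun k => Function.update x k (x k + 1) with hu
    have htend : Tendsto u atTop (𝓝 x) := by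
      rw [tendsto_pi_nhds]
      intro i
      have heq : (fun k => u k i) =ᶠ[atTop] fun _ => x i := by
        filter_upwards [eventually_gt_atTop i] with k hk
        exact Function.update_of_ne (by omega) _ _
      rw [tendsto_congr' heq]
      exact tendsto_const_nhds
    have hne : ∀ k, u k ≠ x := by
      intro k hc
      have := congrFun hc k
      simp [hu] at this
    apply Filter.neBot_of_le (f := map u atTop)
    refine le_inf (le_inf htend ?_) ?_
    · rw [le_principal_iff, mem_map]
      filter_upwards with k
      exact hne k
    · rw [le_principal_iff, mem_map]
      filter_upwards with k
      trivial


def treeOf (C : Set (ℕ → ℕ)) : Set (List ℕ) :=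
  {l | ∃ x ∈ C, ∀ i < l.length, l.getD i 0 = x i}

lemma branches_treeOf {C : Set (ℕ → ℕ)} (hC : IsClosed C) : branches (treeOf C) = C := by
  ext x
  constructor
  · intro hx
    have hyn : ∀ n : ℕ, ∃ y ∈ C, ∀ i < n, x i = y i := by
      intro n
      obtain ⟨y, hy, hagree⟩ := hx n
      refine ⟨y, hy, fun i hi => ?_⟩
      have := hagree i (by simpa using hi)
      rw [List.getD_eq_getElem _ 0 (by simpa using hi)] at this
      simpa using this
    choose y hyC hyagree using hyn
    have htend : Tendsto y atTop (𝓝 x) := by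
      rw [tendsto_pi_nhds]
      intro i
      have heq : (fun n => y n i) =ᶠ[atTop] fun _ => x i := by
        filter_upwards [eventually_gt_atTop i] with n hn
        exact (hyagree n i hn).symm
      rw [tendsto_congr' heq]
      exact tendsto_const_nhds
    have : x ∈ closure C := mem_closure_of_tendsto htend (by filter_upwards with n; exact hyC n)
    rwa [hC.closure_eq] at this
  · intro hx n
    refine ⟨x, hx, fun i hi => ?_⟩
    rw [List.getD_eq_getElem _ 0 hi]
    simp

lemma mk_setListNat : #(Set (List ℕ)) = Cardinal.continuum := by
  rw [Cardinal.mk_set, Cardinal.mk_list_eq_aleph0, ← Cardinal.two_power_aleph0]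

lemma exists_enum {X : Type} [Nonempty X] (f : X → Set (List ℕ)) (hf : Function.Injective f) :
    ∃ e : Cardinal.continuum.{0}.ord.ToType → X, Function.Surjective e := by
  have h1 : #X ≤ Cardinal.continuum := by
    rw [← mk_setListNat]
    exact Cardinal.mk_le_of_injective hf
  have h2 : #X ≤ #(Cardinal.continuum.ord.ToType) := by
    rwa [Cardinal.mk_ord_toType]
  obtain ⟨g⟩ := h2
  classical
  refine ⟨fun i => if h : ∃ x, g x = i then h.choose else Classical.arbitrary X, fun x => ?_⟩
  refine ⟨g x, ?_⟩
  have hex : ∃ x' , g x' = g x := ⟨x, rfl⟩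
  simp only []
  rw [dif_pos hex]
  exact g.injective hex.choose_spec

end SLAux

lemma laver_univ : IsLaver (Set.univ : Set (List ℕ)) := by
  refine ⟨fun _ _ _ _ => trivial, [], trivial, fun t _ _ => ?_⟩
  have : {n : ℕ | t ++ [n] ∈ (Set.univ : Set (List ℕ))} = Set.univ := by
    ext n; simp
  rw [InfSplitting, this]
  exact Set.infinite_univ

theorem exists_sMeasurable_not_lMeasurable_of_b_eq_c
    (h : boundingNumber = Cardinal.continuum) :
    ∃ A : Set (ℕ → ℕ), SMeasurable A ∧ ¬ LMeasurable A := by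
  classical
  haveI hPne : Nonempty {P : Set (ℕ → ℕ) // Perfect P ∧ P.Nonempty} :=
    ⟨⟨Set.univ, perfect_univ, ⟨fun _ => 0, trivial⟩⟩⟩
  haveI hTne : Nonempty {T : Set (List ℕ) // IsLaver T} := ⟨⟨Set.univ, laver_univ⟩⟩
  have hinjP : Function.Injective
      (fun P : {P : Set (ℕ → ℕ) // Perfect P ∧ P.Nonempty} => treeOf P.1) := by
    intro P P' hPP
    have hPP' : treeOf P.1 = treeOf P'.1 := hPP
    apply Subtype.ext
    rw [← branches_treeOf P.2.1.closed, ← branches_treeOf P'.2.1.closed, hPP']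
  obtain ⟨eP, heP⟩ := exists_enum _ hinjP
  obtain ⟨eT, heT⟩ := exists_enum
    (fun T : {T : Set (List ℕ) // IsLaver T} => T.1) Subtype.val_injective
  have hIio : ∀ α : Cardinal.continuum.{0}.ord.ToType,
      Cardinal.mk {β : Cardinal.continuum.{0}.ord.ToType // β < α} < Cardinal.continuum := by
    intro α
    have := Cardinal.mk_Iio_ord_toType α
    exact this
  -- the recursion
  obtain ⟨F, hF⟩ := exists_rec
    (Data := (ℕ → ℕ) × (ℕ → ℕ) × Set (ℕ → ℕ) × (ℕ → ℕ))
    (fun α prev d =>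
      (d.2.2.1 ⊆ (eP α).1 ∧ Perfect d.2.2.1 ∧ d.2.2.1.Nonempty ∧
        (∀ β (hβ : β < α), (prev β hβ).2.1 ∉ d.2.2.1) ∧
        (∀ q ∈ d.2.2.1, ∀ n, q n ≤ d.2.2.2 n)) ∧
      (d.1 ∈ branches (eT α).1 ∧ ∀ β (hβ : β < α), d.1 ≠ (prev β hβ).2.1) ∧
      (d.2.1 ∈ branches (eT α).1 ∧
        (∀ β (hβ : β < α), ∀ᶠ n in atTop,
          (prev β hβ).2.2.2 n < d.2.1 n ∧ (prev β hβ).1 n < d.2.1 n) ∧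
        (∀ᶠ n in atTop, d.2.2.2 n < d.2.1 n ∧ d.1 n < d.2.1 n)))
    (by
      intro α prev
      set Y : Set (ℕ → ℕ) :=
        Set.range (fun β : {β // β < α} => (prev β.1 β.2).2.1) with hY
      have hYcard : Cardinal.mk Y < Cardinal.continuum :=
        lt_of_le_of_lt (Cardinal.mk_range_le) (hIio α)
      obtain ⟨Q, g, hQperf, hQne, hQsub, hQY, hQg⟩ :=
        exists_perfect_avoid (eP α).2.1 (eP α).2.2 hYcard
      obtain ⟨xx, hxbr, hxY, -⟩ := laver_branch (eT α).2 (fun _ => 0) hYcard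
      set R1 : Set (ℕ → ℕ) :=
        Set.range (fun β : {β // β < α} => (prev β.1 β.2).2.2.2) with hR1
      set R2 : Set (ℕ → ℕ) :=
        Set.range (fun β : {β // β < α} => (prev β.1 β.2).1) with hR2
      have hR1c : Cardinal.mk R1 < Cardinal.continuum :=
        lt_of_le_of_lt (Cardinal.mk_range_le) (hIio α)
      have hR2c : Cardinal.mk R2 < Cardinal.continuum :=
        lt_of_le_of_lt (Cardinal.mk_range_le) (hIio α)
      have h12 : Cardinal.mk ((R1 ∪ R2 : Set (ℕ → ℕ))) < Cardinal.continuum :=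
        lt_of_le_of_lt (Cardinal.mk_union_le _ _)
          (Cardinal.add_lt_of_lt Cardinal.aleph0_le_continuum hR1c hR2c)
      have hpair : Cardinal.mk (({g, xx} : Set (ℕ → ℕ))) < Cardinal.continuum :=
        lt_of_lt_of_le (((Set.finite_singleton xx).insert g).lt_aleph0)
          Cardinal.aleph0_le_continuum
      have hGcard : Cardinal.mk ((R1 ∪ R2 ∪ {g, xx} : Set (ℕ → ℕ))) < Cardinal.continuum :=
        lt_of_le_of_lt (Cardinal.mk_union_le _ _)
          (Cardinal.add_lt_of_lt Cardinal.aleph0_le_continuum h12 hpair)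
      obtain ⟨h0, hh0⟩ := bounded_of_small h hGcard
      have hemp : Cardinal.mk (∅ : Set (ℕ → ℕ)) < Cardinal.continuum := by
        rw [Cardinal.mk_emptyCollection]
        exact Cardinal.continuum_pos
      obtain ⟨yy, hybr, -, hyd⟩ := laver_branch (eT α).2 h0 hemp
      refine ⟨(xx, yy, Q, g), ⟨hQsub, hQperf, hQne, ?_, hQg⟩, ⟨hxbr, ?_⟩, hybr, ?_, ?_⟩
      · intro β hβ hmem
        exact Set.eq_empty_iff_forall_notMem.mp hQY _ ⟨hmem, ⟨⟨β, hβ⟩, rfl⟩⟩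
      · intro β hβ heq
        exact hxY ⟨⟨β, hβ⟩, heq.symm⟩
      · intro β hβ
        have hg : EvLE ((prev β hβ).2.2.2) h0 :=
          hh0 _ (Or.inl (Or.inl ⟨⟨β, hβ⟩, rfl⟩))
        have hx : EvLE ((prev β hβ).1) h0 :=
          hh0 _ (Or.inl (Or.inr ⟨⟨β, hβ⟩, rfl⟩))
        filter_upwards [hg, hx, hyd] with n h1 h2 h3
        exact ⟨by omega, by omega⟩
      · have hg : EvLE g h0 := hh0 _ (Or.inr (Or.inl rfl))
        have hx : EvLE xx h0 := hh0 _ (Or.inr (Or.inr rfl))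
        filter_upwards [hg, hx, hyd] with n h1 h2 h3
        exact ⟨by omega, by omega⟩)
  beta_reduce at hF
  -- the set A
  set A : Set (ℕ → ℕ) := {f | ∃ α, f ∈ (F α).2.2.1 ∨ f = (F α).1} with hA
  refine ⟨A, ?_, ?_⟩
  · -- s-measurable
    intro P hP hPn
    obtain ⟨α, hα⟩ := heP ⟨P, hP, hPn⟩
    have hα1 : (eP α).1 = P := by rw [hα]
    obtain ⟨⟨hQsub, hQperf, hQne, -, -⟩, -, -⟩ := hF α
    exact ⟨(F α).2.2.1, hQperf, hQne, hα1 ▸ hQsub,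
      Or.inl (fun f hf => ⟨α, Or.inl hf⟩)⟩
  · -- not l-measurable
    intro hL
    obtain ⟨S, hS, -, hSH⟩ := hL Set.univ laver_univ
    obtain ⟨α, hα⟩ := heT ⟨S, hS⟩
    have hα1 : (eT α).1 = S := by rw [hα]
    obtain ⟨-, ⟨hxbr, -⟩, ⟨hybr, hyev, hyev'⟩⟩ := hF α
    have hynotA : (F α).2.1 ∉ A := by
      rintro ⟨β, hcase⟩
      rcases lt_trichotomy β α with hβα | hβα | hβα
      · obtain ⟨-, -, ⟨-, hyevβ, -⟩⟩ := hF α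
        have hev := hyev β hβα
        obtain ⟨n, hn1, hn2⟩ := hev.exists
        rcases hcase with hmem | heq
        · obtain ⟨⟨-, -, -, -, hbd⟩, -, -⟩ := hF β
          exact absurd (hbd _ hmem n) (by omega)
        · rw [heq] at hn2
          omega
      · subst hβα
        obtain ⟨n, hn1, hn2⟩ := hyev'.exists
        rcases hcase with hmem | heq
        · obtain ⟨⟨-, -, -, -, hbd⟩, -, -⟩ := hF β
          exact absurd (hbd _ hmem n) (by omega)
        · rw [heq] at hn2
          omega
      · rcases hcase with hmem | heq
        · obtain ⟨⟨-, -, -, havoid, -⟩, -, -⟩ := hF β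
          exact havoid α hβα hmem
        · obtain ⟨-, ⟨-, hxne⟩, -⟩ := hF β
          exact hxne α hβα heq.symm
    rcases hSH with hsub | hdisj
    · apply hynotA
      have hyS : (F α).2.1 ∈ branches S := hα1 ▸ hybr
      exact hsub hyS
    · have : (F α).1 ∈ branches S ∩ A := ⟨hα1 ▸ hxbr, ⟨α, Or.inr rfl⟩⟩
      rw [hdisj] at this
      exact this
end

section
/- Assume 𝔟 = 𝔠, i.e. the least cardinality of an unbounded family in ω^ω equals the continuum. Then there exists a subset of the Baire space ω^ω which is s-measurable but not m-measurable. -/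
open Filter

lemma mk_cantor : (Cardinal.mk (ℕ → Bool)) = Cardinal.continuum := by
  rw [← Cardinal.power_def, Cardinal.mk_bool, Cardinal.mk_nat, Cardinal.two_power_aleph0]

lemma exists_avoid {γ : Type} (Φ : (ℕ → Bool) → γ) (hΦ : Function.Injective Φ)
    (S : Set γ) (hS : Cardinal.mk ↥S < Cardinal.continuum) : ∃ z, Φ z ∉ S := by
  by_contra hc
  push_neg at hc
  have hinj : Function.Injective (fun z => (⟨Φ z, hc z⟩ : S)) := by
    intro z z' e
    exact hΦ (congrArg Subtype.val e)
  have hle := Cardinal.mk_le_of_injective hinj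
  rw [mk_cantor] at hle
  exact absurd hle (not_le.mpr hS)

lemma compact_bound {K : Set (ℕ → ℕ)} (hK : IsCompact K) :
    ∃ g : ℕ → ℕ, ∀ x ∈ K, ∀ n, x n ≤ g n := by
  refine ⟨fun n => sSup ((fun x => x n) '' K), fun x hx n => ?_⟩
  have hcomp : IsCompact ((fun x : ℕ → ℕ => x n) '' K) := hK.image (continuous_apply n)
  have hfin : ((fun x : ℕ → ℕ => x n) '' K).Finite := hcomp.finite_of_discrete
  exact le_csSup hfin.bddAbove ⟨x, hx, rfl⟩

lemma perfect_image {f : (ℕ → Bool) → ℕ → ℕ} (hc : Continuous f) (hi : Function.Injective f)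
    {D : Set (ℕ → Bool)} (hDc : IsClosed D)
    (hD : ∀ y ∈ D, ∀ N : ℕ, ∃ y', y' ∈ D ∧ y' ≠ y ∧ ∀ i, i < N → y' i = y i) :
    Perfect (f '' D) := by
  constructor
  · exact (hDc.isCompact.image hc).isClosed
  · rintro x ⟨y, hy, rfl⟩
    rw [accPt_iff_nhds]
    intro U hU
    choose Y hY1 hY2 hY3 using hD y hy
    have hYt : Filter.Tendsto Y Filter.atTop (nhds y) := by
      rw [tendsto_pi_nhds]
      intro i
      have hev : ∀ᶠ N in Filter.atTop, Y N i = y i :=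
        Filter.eventually_atTop.mpr ⟨i + 1, fun N hN => hY3 N i (Nat.lt_of_lt_of_le (Nat.lt_succ_self i) hN)⟩
      exact Filter.Tendsto.congr' (hev.mono fun N hN => hN.symm) tendsto_const_nhds
    have htend : Filter.Tendsto (fun N => f (Y N)) Filter.atTop (nhds (f y)) :=
      (hc.tendsto y).comp hYt
    obtain ⟨N, hN⟩ := (htend.eventually hU).exists
    exact ⟨f (Y N), ⟨hN, Set.mem_image_of_mem f (hY1 N)⟩, fun e => hY2 N (hi e)⟩


lemma isMiller_univ : IsMiller Set.univ := by
  refine ⟨fun _ _ _ _ => Set.mem_univ _, [], Set.mem_univ _,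
    fun t _ _ => ⟨t, Set.mem_univ _, List.prefix_rfl, ?_⟩⟩
  unfold InfSplitting
  simp only [Set.mem_univ, Set.setOf_true]
  exact Set.infinite_univ

lemma miller_inj (T : Set (List ℕ)) (hT : IsMiller T) (h : ℕ → ℕ) :
    ∃ φ : (ℕ → Bool) → (ℕ → ℕ), Function.Injective φ ∧
      ∀ z, φ z ∈ branches T ∧ ∀ N : ℕ, ∃ n, N ≤ n ∧ h n < φ z n := by
  classical
  obtain ⟨htree, s, hsT, hext⟩ := hT
  have hroot : ∃ t, t ∈ T ∧ s <+: t ∧ InfSplitting T t := by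
    obtain ⟨t', ht', hpre, hsp⟩ := hext s hsT List.prefix_rfl
    exact ⟨t', ht', hpre, hsp⟩
  set Good : List ℕ → Prop := fun t => t ∈ T ∧ s <+: t ∧ InfSplitting T t with hGoodDef
  have hval : ∀ t, Good t → ∃ v : Bool → ℕ,
      (∀ i, t ++ [v i] ∈ T ∧ h t.length < v i) ∧ v false ≠ v true := by
    intro t ht
    obtain ⟨n0, hn0, hgt0⟩ := ht.2.2.exists_gt (h t.length)
    obtain ⟨n1, hn1, hgt1⟩ := ht.2.2.exists_gt (max n0 (h t.length))
    have hn01 : n0 < n1 := lt_of_le_of_lt (le_max_left _ _) hgt1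
    refine ⟨fun i => if i then n1 else n0, ?_, ?_⟩
    · intro i
      cases i
      · exact ⟨hn0, hgt0⟩
      · exact ⟨hn1, lt_of_le_of_lt (le_max_right _ _) hgt1⟩
    · simp only [if_true, if_false, Bool.false_eq_true]
      omega
  choose val hvalT hvalne using hval
  have hstep : ∀ t (ht : Good t) (i : Bool), ∃ t', Good t' ∧ (t ++ [val t ht i]) <+: t' := by
    intro t ht i
    have hmem : t ++ [val t ht i] ∈ T := (hvalT t ht i).1
    have hp : s <+: t ++ [val t ht i] := ht.2.1.trans (t.prefix_append [val t ht i])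
    obtain ⟨t', h1, h2, h3⟩ := hext _ hmem hp
    exact ⟨t', ⟨h1, hp.trans h2, h3⟩, h2⟩
  choose step hstepG hstepP using hstep
  let ψ : (ℕ → Bool) → ℕ → {t : List ℕ // Good t} := fun z m =>
    Nat.rec ⟨hroot.choose, hroot.choose_spec⟩
      (fun m p => ⟨step p.1 p.2 (z m), hstepG p.1 p.2 (z m)⟩) m
  have hψ_succ : ∀ z m, ψ z (m + 1) =
      ⟨step (ψ z m).1 (ψ z m).2 (z m), hstepG (ψ z m).1 (ψ z m).2 (z m)⟩ := fun z m => rfl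
  have hconcat : ∀ z m,
      ((ψ z m).1 ++ [val (ψ z m).1 (ψ z m).2 (z m)]) <+: (ψ z (m + 1)).1 :=
    fun z m => hstepP (ψ z m).1 (ψ z m).2 (z m)
  have hpref1 : ∀ z m, (ψ z m).1 <+: (ψ z (m + 1)).1 :=
    fun z m => (List.prefix_append _ _).trans (hconcat z m)
  have hlen1 : ∀ z m, (ψ z m).1.length < (ψ z (m + 1)).1.length := by
    intro z m
    have h1 := List.IsPrefix.length_le (hconcat z m)
    have h2 : ((ψ z m).1 ++ [val (ψ z m).1 (ψ z m).2 (z m)]).length = (ψ z m).1.length + 1 := by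
      rw [List.length_append]
      rfl
    omega
  have hpref : ∀ z {m m'}, m ≤ m' → (ψ z m).1 <+: (ψ z m').1 := by
    intro z m m' hle
    induction hle with
    | refl => exact List.prefix_rfl
    | step _ ih => exact ih.trans (hpref1 z _)
  have hlen_ge : ∀ z m, m ≤ (ψ z m).1.length := by
    intro z m
    induction m with
    | zero => exact Nat.zero_le _
    | succ m ih => exact Nat.lt_of_le_of_lt ih (hlen1 z m)
  have hagree : ∀ m (z z' : ℕ → Bool), (∀ k, k < m → z k = z' k) → ψ z m = ψ z' m := by
    intro m
    induction m with
    | zero => intro _ _ _; rfl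
    | succ m ih =>
      intro z z' hzz
      have h1 : ψ z m = ψ z' m := ih z z' (fun k hk => hzz k (Nat.lt_succ_of_lt hk))
      rw [hψ_succ z m, hψ_succ z' m]
      rw [hzz m (Nat.lt_succ_self m), h1]
  set φ : (ℕ → Bool) → ℕ → ℕ := fun z n => (ψ z (n + 1)).1.getD n 0 with hφdef
  have getD_pref : ∀ (l l' : List ℕ), l <+: l' → ∀ n, n < l.length →
      l.getD n 0 = l'.getD n 0 := by
    rintro l l' ⟨r, rfl⟩ n hn
    exact (List.getD_append l r 0 n hn).symm
  have hstable : ∀ z m n, n < (ψ z m).1.length → (ψ z m).1.getD n 0 = φ z n := by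
    intro z m n hn
    rcases le_total m (n + 1) with hc | hc
    · exact getD_pref _ _ (hpref z hc) n hn
    · exact (getD_pref _ _ (hpref z hc) n
        (lt_of_lt_of_le (Nat.lt_succ_self n) (hlen_ge z (n + 1)))).symm
  have hvalat : ∀ z m, φ z ((ψ z m).1.length) = val (ψ z m).1 (ψ z m).2 (z m) := by
    intro z m
    have hL : (ψ z m).1.length < ((ψ z m).1 ++ [val (ψ z m).1 (ψ z m).2 (z m)]).length := by
      simp
    have h1 : ((ψ z m).1 ++ [val (ψ z m).1 (ψ z m).2 (z m)]).getD (ψ z m).1.length 0 =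
        val (ψ z m).1 (ψ z m).2 (z m) := by
      rw [List.getD_eq_getElem _ _ hL, List.getElem_concat_length]
      rfl
    have h2 := getD_pref _ _ (hconcat z m) (ψ z m).1.length hL
    have h3 := hstable z (m + 1) (ψ z m).1.length
      (lt_of_lt_of_le hL (hconcat z m).length_le)
    rw [← h3, ← h2, h1]
  have htake : ∀ z n, (List.ofFn fun i : Fin n => φ z i) = (ψ z n).1.take n := by
    intro z n
    apply List.ext_getElem
    · simp [Nat.min_eq_left (hlen_ge z n)]
    · intro i h1 h2
      simp only [List.getElem_ofFn, List.getElem_take]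
      have hi : i < (ψ z n).1.length := by
        simp only [List.length_ofFn] at h1
        exact lt_of_lt_of_le h1 (hlen_ge z n)
      rw [← hstable z n i hi, List.getD_eq_getElem _ _ hi]
  have hbranch : ∀ z, φ z ∈ branches T := by
    intro z n
    rw [htake z n]
    exact htree _ (ψ z n).2.1 _ (List.take_prefix n _)
  have hescape : ∀ z N, ∃ n, N ≤ n ∧ h n < φ z n := by
    intro z N
    refine ⟨(ψ z N).1.length, hlen_ge z N, ?_⟩
    rw [hvalat z N]
    exact (hvalT _ _ (z N)).2
  have hinj : Function.Injective φ := by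
    intro z z' he
    by_contra hne
    have hex : ∃ k, z k ≠ z' k := by
      by_contra hk
      push_neg at hk
      exact hne (funext hk)
    have hm : z (Nat.find hex) ≠ z' (Nat.find hex) := Nat.find_spec hex
    have hmin : ∀ k, k < Nat.find hex → z k = z' k := by
      intro k hk
      by_contra hc
      exact absurd (Nat.find_min hex hk) (by simp [hc])
    have heq : ψ z (Nat.find hex) = ψ z' (Nat.find hex) := hagree _ z z' hmin
    have h1 := hvalat z (Nat.find hex)
    have h2 := hvalat z' (Nat.find hex)
    rw [← heq] at h2
    have h3 : φ z ((ψ z (Nat.find hex)).1.length) = φ z' ((ψ z (Nat.find hex)).1.length) := by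
      rw [he]
    rw [h1, h2] at h3
    have hne2 := hvalne (ψ z (Nat.find hex)).1 (ψ z (Nat.find hex)).2
    cases hzm : z (Nat.find hex) <;> cases hzm' : z' (Nat.find hex)
    · exact hm (hzm.trans hzm'.symm)
    · rw [hzm, hzm'] at h3; exact hne2 h3
    · rw [hzm, hzm'] at h3; exact hne2 h3.symm
    · exact hm (hzm.trans hzm'.symm)
  exact ⟨φ, hinj, fun z => ⟨hbranch z, hescape z⟩⟩

lemma small_bounded (h : boundingNumber = Cardinal.continuum) (F : Set (ℕ → ℕ))
    (hF : Cardinal.mk ↥F < Cardinal.continuum) : ∃ x, ∀ f ∈ F, EvLE f x := by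
  by_contra hc
  have hub : UnboundedFamily F := hc
  have hle : boundingNumber ≤ Cardinal.mk ↥F := csInf_le' ⟨F, hub, rfl⟩
  rw [h] at hle
  exact absurd hle (not_le.mpr hF)

lemma construction {ι : Type} [LinearOrder ι] [WellFoundedLT ι]
    (hmkι : Cardinal.mk ι = Cardinal.continuum)
    (hIio : ∀ α : ι, Cardinal.mk ↥(Set.Iio α) < Cardinal.continuum)
    (h : boundingNumber = Cardinal.continuum) :
    ∃ A : Set (ℕ → ℕ), SMeasurable A ∧ ¬ MMeasurable A := by
  classical
  have hIic : ∀ α : ι, Cardinal.mk ↥(Set.Iic α) < Cardinal.continuum := by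
    intro α
    have he : (Set.Iic α) = insert α (Set.Iio α) := (Set.Iio_insert).symm
    have h2 : Cardinal.mk ↥(Set.Iic α) ≤ Cardinal.mk ↥(Set.Iio α) + 1 := by
      rw [he]; exact Cardinal.mk_insert_le
    have h3 : Cardinal.mk ↥(Set.Iio α) < Cardinal.continuum := hIio α
    exact lt_of_le_of_lt h2 (Cardinal.add_lt_of_lt Cardinal.aleph0_le_continuum h3
      (lt_of_lt_of_le Cardinal.one_lt_aleph0 Cardinal.aleph0_le_continuum))
  obtain ⟨eqT⟩ : Nonempty (ι ≃ Set (List ℕ)) := by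
    refine Cardinal.eq.mp ?_
    rw [hmkι, Cardinal.mk_set, Cardinal.mk_list_eq_aleph0, Cardinal.two_power_aleph0]
  obtain ⟨eqg⟩ : Nonempty (ι ≃ (ℕ → ℕ)) := by
    refine Cardinal.eq.mp ?_
    rw [hmkι]
    symm
    rw [← Cardinal.power_def, Cardinal.mk_nat, Cardinal.power_self_eq le_rfl,
      Cardinal.two_power_aleph0]
  set Tr : ι → Set (List ℕ) := fun α => if IsMiller (eqT α) then eqT α else Set.univ
    with hTrDef
  have hTrMiller : ∀ α, IsMiller (Tr α) := by
    intro α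
    by_cases hm : IsMiller (eqT α)
    · show IsMiller (if _ then _ else _)
      rw [if_pos hm]; exact hm
    · show IsMiller (if _ then _ else _)
      rw [if_neg hm]; exact isMiller_univ
  have hTrSurj : ∀ S, IsMiller S → ∃ α, Tr α = S := by
    intro S hS
    refine ⟨eqT.symm S, ?_⟩
    show (if _ then _ else _) = S
    rw [eqT.apply_symm_apply, if_pos hS]
  have hBoundEx : ∀ α : ι, ∃ x : ℕ → ℕ, ∀ γ : ι, γ ≤ α → EvLE (eqg γ) x := by
    intro α
    obtain ⟨x, hx⟩ := small_bounded h (eqg '' Set.Iic α)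
      (lt_of_le_of_lt Cardinal.mk_image_le (hIic α))
    exact ⟨x, fun γ hγ => hx _ (Set.mem_image_of_mem _ hγ)⟩
  choose hB hBspec using hBoundEx
  choose Φ hΦinj hΦspec using fun α => miller_inj (Tr α) (hTrMiller α) (hB α)
  set Spec : ∀ α : ι, (∀ β, β < α → (ℕ → ℕ) × (ℕ → ℕ)) → (ℕ → ℕ) × (ℕ → ℕ) → Prop :=
    fun α p q =>
      (∃ z, q.1 = Φ α z) ∧ (∀ β (hb : β < α), q.1 ≠ (p β hb).2) ∧
      (∃ z, q.2 = Φ α z) ∧ (∀ β (hb : β < α), q.2 ≠ (p β hb).1) ∧ q.2 ≠ q.1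
    with hSpecDef
  have key : ∀ α (p : ∀ β, β < α → (ℕ → ℕ) × (ℕ → ℕ)), ∃ q, Spec α p q := by
    intro α p
    obtain ⟨z1, hz1⟩ := exists_avoid (Φ α) (hΦinj α)
      (Set.range fun β : ↥(Set.Iio α) => (p β.1 β.2).2)
      (lt_of_le_of_lt Cardinal.mk_range_le (hIio α))
    obtain ⟨z2, hz2⟩ := exists_avoid (Φ α) (hΦinj α)
      ((Set.range fun β : ↥(Set.Iio α) => (p β.1 β.2).1) ∪ {Φ α z1})
      (by
        refine lt_of_le_of_lt (Cardinal.mk_union_le _ _) ?_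
        refine Cardinal.add_lt_of_lt Cardinal.aleph0_le_continuum
          (lt_of_le_of_lt Cardinal.mk_range_le (hIio α)) ?_
        rw [Cardinal.mk_singleton]
        exact lt_of_lt_of_le Cardinal.one_lt_aleph0 Cardinal.aleph0_le_continuum)
    refine ⟨(Φ α z1, Φ α z2), ⟨z1, rfl⟩, ?_, ⟨z2, rfl⟩, ?_, ?_⟩
    · intro β hb he
      exact hz1 ⟨⟨β, hb⟩, he.symm⟩
    · intro β hb he
      exact hz2 (Set.mem_union_left _ ⟨⟨β, hb⟩, he.symm⟩)
    · intro he
      exact hz2 (Set.mem_union_right _ (Set.mem_singleton_iff.mpr he))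
  have wf : WellFounded ((· < ·) : ι → ι → Prop) := wellFounded_lt
  set pairF : ι → (ℕ → ℕ) × (ℕ → ℕ) :=
    WellFounded.fix wf (fun α p => (key α p).choose) with hpairFDef
  have pairF_eq : ∀ α, pairF α = (key α (fun β _ => pairF β)).choose := fun α =>
    WellFounded.fix_eq wf _ α
  have pspec : ∀ α, Spec α (fun β _ => pairF β) (pairF α) := by
    intro α
    have h1 := (key α (fun β _ => pairF β)).choose_spec
    rwa [← pairF_eq α] at h1
  set a : ι → ℕ → ℕ := fun α => (pairF α).1 with haDef
  set b : ι → ℕ → ℕ := fun α => (pairF α).2 with hbDef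
  have haz : ∀ α, ∃ z, a α = Φ α z := fun α => (pspec α).1
  have hab : ∀ α β, β < α → a α ≠ b β := fun α β hb => (pspec α).2.1 β hb
  have hbz : ∀ α, ∃ z, b α = Φ α z := fun α => (pspec α).2.2.1
  have hba : ∀ α β, β < α → b α ≠ a β := fun α β hb => (pspec α).2.2.2.1 β hb
  have hbaself : ∀ α, b α ≠ a α := fun α => (pspec α).2.2.2.2
  have hbne : ∀ α β, b α ≠ a β := by
    intro α β
    rcases lt_trichotomy β α with hc | hc | hc
    · exact hba α β hc
    · rw [hc]; exact hbaself α
    · exact fun e => hab β α hc e.symm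
  refine ⟨Set.range a, ?_, ?_⟩
  · -- SMeasurable
    intro P hP hPne
    letI := TopologicalSpace.upgradeIsCompletelyMetrizable (ℕ → ℕ)
    obtain ⟨f, hfP, hfc, hfi⟩ := hP.exists_nat_bool_injection hPne
    have hKcomp : IsCompact (Set.range f) := isCompact_range hfc
    obtain ⟨g, hg⟩ := compact_bound hKcomp
    obtain ⟨α, hα⟩ : ∃ α, eqg α = g := ⟨eqg.symm g, eqg.apply_symm_apply g⟩
    have hmem : ∀ β : ι, a β ∈ Set.range f → β ≤ α := by
      intro β hβ
      by_contra hc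
      push_neg at hc
      obtain ⟨z, hz⟩ := haz β
      have hev : EvLE (eqg α) (hB β) := hBspec β α (le_of_lt hc)
      rw [EvLE, Filter.eventually_atTop] at hev
      obtain ⟨N, hN⟩ := hev
      obtain ⟨n, hn1, hn2⟩ := (hΦspec β z).2 N
      have h1 : g n ≤ hB β n := by rw [← hα]; exact hN n hn1
      have h2 : a β n ≤ g n := hg _ hβ n
      rw [hz] at h2
      omega
    obtain ⟨z, hzav⟩ := exists_avoid (fun w : ℕ → Bool => w) Function.injective_id
      (Set.range fun β : ↥(Set.Iic α) => fun n => Function.invFun f (a β.1) (2 * n))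
      (lt_of_le_of_lt Cardinal.mk_range_le (hIic α))
    refine ⟨f '' {y | ∀ n, y (2 * n) = z n}, ?_, ?_, ?_, Or.inr ?_⟩
    · apply perfect_image hfc hfi
      · have he : {y : ℕ → Bool | ∀ n, y (2 * n) = z n} =
            ⋂ n, (fun y : ℕ → Bool => y (2 * n)) ⁻¹' {z n} := by
          ext y; simp [Set.mem_iInter]
        rw [he]
        exact isClosed_iInter fun n => (IsClosed.preimage (continuous_apply _) isClosed_singleton)
      · intro y hy N
        refine ⟨fun i => if i = 2 * N + 1 then !(y i) else y i, ?_, ?_, ?_⟩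
        · intro n
          have hne : (2 * n : ℕ) ≠ 2 * N + 1 := by omega
          show (if 2 * n = 2 * N + 1 then !(y (2 * n)) else y (2 * n)) = z n
          rw [if_neg hne]
          exact hy n
        · intro hcon
          have hc2 := congrFun hcon (2 * N + 1)
          simp at hc2
        · intro i hi
          have hne : i ≠ 2 * N + 1 := by omega
          show (if i = 2 * N + 1 then !(y i) else y i) = y i
          rw [if_neg hne]
    · refine ⟨f (fun i => z (i / 2)), Set.mem_image_of_mem f (fun n => ?_)⟩
      have hd : 2 * n / 2 = n := by omega
      simp [hd]
    · exact fun x hx => by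
        obtain ⟨y, _, rfl⟩ := hx
        exact hfP (Set.mem_range_self y)
    · apply Set.eq_empty_iff_forall_notMem.mpr
      rintro x ⟨⟨y, hyD, rfl⟩, ⟨β, hβ⟩⟩
      have hβα : β ≤ α := hmem β (by rw [hβ]; exact Set.mem_range_self y)
      apply hzav
      refine ⟨⟨β, hβα⟩, ?_⟩
      funext n
      show Function.invFun f (a β) (2 * n) = z n
      rw [hβ, Function.leftInverse_invFun hfi y]
      exact hyD n
  · -- not MMeasurable
    intro hM
    obtain ⟨S, hSM, hSsub, hScase⟩ := hM Set.univ isMiller_univ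
    obtain ⟨α, hα⟩ := hTrSurj S hSM
    obtain ⟨z1, hz1⟩ := haz α
    obtain ⟨z2, hz2⟩ := hbz α
    have haS : a α ∈ branches S := by
      rw [hz1, ← hα]; exact (hΦspec α z1).1
    have hbS : b α ∈ branches S := by
      rw [hz2, ← hα]; exact (hΦspec α z2).1
    rcases hScase with hsub | hdisj
    · obtain ⟨β, hβ⟩ := hsub hbS
      exact hbne α β hβ.symm
    · have hx : a α ∈ branches S ∩ Set.range a := ⟨haS, Set.mem_range_self α⟩
      rw [hdisj] at hx
      exact hx

theorem exists_sMeasurable_not_mMeasurable_of_b_eq_c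
    (h : boundingNumber = Cardinal.continuum) :
    ∃ A : Set (ℕ → ℕ), SMeasurable A ∧ ¬ MMeasurable A := by
  refine construction (ι := (Cardinal.continuum.ord).ToType) ?_ ?_ h
  · rw [Cardinal.mk_toType, Cardinal.card_ord]
  · intro α
    exact Cardinal.mk_Iio_ord_toType α
end

section
/- Let I be a σ-ideal on ℝ containing all singletons, with Borel base, translation invariant, and having the weaker Smital property. Then there exists a partition P ⊆ I of ℝ such that for every subfamily A ⊆ P, if ⋃A is I-nonmeasurable then ⋃A is completely I-nonmeasurable. -/
/-- A (proper) σ-ideal of subsets of ℝ. -/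
def SigmaIdeal (I : Set (Set ℝ)) : Prop :=
  ∅ ∈ I ∧ Set.univ ∉ I ∧ (∀ A B : Set ℝ, A ⊆ B → B ∈ I → A ∈ I) ∧
    ∀ f : ℕ → Set ℝ, (∀ n, f n ∈ I) → (⋃ n, f n) ∈ I

/-- The ideal contains all singletons. -/
def ContainsSingletons (I : Set (Set ℝ)) : Prop := ∀ x : ℝ, {x} ∈ I

/-- The ideal has a Borel base. -/
def BorelBase (I : Set (Set ℝ)) : Prop :=
  ∀ A ∈ I, ∃ B ∈ I, MeasurableSet B ∧ A ⊆ B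

/-- The ideal is translation invariant. -/
def TranslationInvariant (I : Set (Set ℝ)) : Prop :=
  ∀ A ∈ I, ∀ x : ℝ, (fun y => x + y) '' A ∈ I

/-- The σ-algebra Bor[I] generated by the Borel sets together with I. -/
def BorI (I : Set (Set ℝ)) : MeasurableSpace ℝ :=
  MeasurableSpace.generateFrom {s : Set ℝ | MeasurableSet s ∨ s ∈ I}

/-- A set is I-nonmeasurable if it is not in Bor[I]. -/
def INonmeasurable (I : Set (Set ℝ)) (A : Set ℝ) : Prop :=
  ¬ @MeasurableSet ℝ (BorI I) A

/-- A set is completely I-nonmeasurable if its intersection with every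
I-positive Borel set is I-nonmeasurable. -/
def CompletelyINonmeasurable (I : Set (Set ℝ)) (A : Set ℝ) : Prop :=
  ∀ B : Set ℝ, MeasurableSet B → B ∉ I → INonmeasurable I (A ∩ B)

/-- A partition of ℝ. -/
def IsPartitionOfReals (P : Set (Set ℝ)) : Prop :=
  (∀ p ∈ P, p ≠ ∅) ∧ ⋃₀ P = Set.univ ∧
    ∀ p ∈ P, ∀ q ∈ P, p ≠ q → p ∩ q = ∅

/-- The σ-ideal of countable subsets of ℝ. -/
def ctblIdeal : Set (Set ℝ) := {A : Set ℝ | A.Countable}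

/-- A Bernstein set: it and its complement meet every nonempty perfect set. -/
def BernsteinSet (A : Set ℝ) : Prop :=
  ∀ P : Set ℝ, Perfect P → P.Nonempty → (P ∩ A).Nonempty ∧ (P ∩ Aᶜ).Nonempty

/-- The weaker Smital property: there is a countable dense set `D` such that
for every I-positive Borel set `A`, the complement of `A + D` is in `I`. -/
def WeakerSmital (I : Set (Set ℝ)) : Prop :=
  ∃ D : Set ℝ, D.Countable ∧ Dense D ∧
    ∀ A : Set ℝ, MeasurableSet A → A ∉ I →
      (Set.image2 (· + ·) A D)ᶜ ∈ I


section Aux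

variable {I : Set (Set ℝ)}

lemma aux_union2 (hI : SigmaIdeal I) {A B : Set ℝ} (hA : A ∈ I) (hB : B ∈ I) :
    A ∪ B ∈ I := by
  have h := hI.2.2.2 (fun n => if n = 0 then A else B)
    (fun n => by by_cases hn : n = 0 <;> simp [hn, hA, hB])
  refine hI.2.2.1 _ _ ?_ h
  intro x hx
  rcases hx with hx | hx
  · exact Set.mem_iUnion.2 ⟨0, by simpa using hx⟩
  · exact Set.mem_iUnion.2 ⟨1, by simpa using hx⟩

lemma aux_countable_mem (hI : SigmaIdeal I) (hsing : ContainsSingletons I)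
    {A : Set ℝ} (hA : A.Countable) : A ∈ I := by
  rcases A.eq_empty_or_nonempty with rfl | hne
  · exact hI.1
  · obtain ⟨f, rfl⟩ := hA.exists_eq_range hne
    have : Set.range f = ⋃ n, {f n} := by
      ext x; simp [Set.mem_range, eq_comm]
    rw [this]
    exact hI.2.2.2 _ (fun n => hsing (f n))

private def auxMSpace (I : Set (Set ℝ)) (hI : SigmaIdeal I) : MeasurableSpace ℝ where
  MeasurableSet' := fun X => ∃ C : Set ℝ, MeasurableSet C ∧ X \ C ∈ I ∧ C \ X ∈ I
  measurableSet_empty := ⟨∅, MeasurableSet.empty, by simpa using hI.1, by simpa using hI.1⟩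
  measurableSet_compl := by
    rintro X ⟨C, hC, h1, h2⟩
    refine ⟨Cᶜ, hC.compl, ?_, ?_⟩
    · have h : Xᶜ \ Cᶜ = C \ X := by ext x; simp [Set.mem_diff]; tauto
      rwa [h]
    · have h : Cᶜ \ Xᶜ = X \ C := by ext x; simp [Set.mem_diff]; tauto
      rwa [h]
  measurableSet_iUnion := by
    intro f hf
    choose C hC h1 h2 using hf
    refine ⟨⋃ n, C n, MeasurableSet.iUnion hC, ?_, ?_⟩
    · refine hI.2.2.1 _ (⋃ n, f n \ C n) ?_ (hI.2.2.2 _ h1)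
      rintro x ⟨hx1, hx2⟩
      obtain ⟨n, hn⟩ := Set.mem_iUnion.1 hx1
      exact Set.mem_iUnion.2 ⟨n, hn, fun h => hx2 (Set.mem_iUnion.2 ⟨n, h⟩)⟩
    · refine hI.2.2.1 _ (⋃ n, C n \ f n) ?_ (hI.2.2.2 _ h2)
      rintro x ⟨hx1, hx2⟩
      obtain ⟨n, hn⟩ := Set.mem_iUnion.1 hx1
      exact Set.mem_iUnion.2 ⟨n, hn, fun h => hx2 (Set.mem_iUnion.2 ⟨n, h⟩)⟩

lemma aux_borI_repr (hI : SigmaIdeal I) {X : Set ℝ}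
    (hX : @MeasurableSet ℝ (BorI I) X) :
    ∃ C : Set ℝ, MeasurableSet C ∧ X \ C ∈ I ∧ C \ X ∈ I := by
  have hle : BorI I ≤ auxMSpace I hI := by
    refine MeasurableSpace.generateFrom_le ?_
    rintro t (ht | ht)
    · exact ⟨t, ht, by simpa using hI.1, by simpa using hI.1⟩
    · exact ⟨∅, MeasurableSet.empty, by simpa using ht, by simpa using hI.1⟩
  exact hle _ hX

lemma aux_borI_of_repr {X C : Set ℝ} (hC : MeasurableSet C)
    (h1 : X \ C ∈ I) (h2 : C \ X ∈ I) : @MeasurableSet ℝ (BorI I) X := by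
  have hC' : @MeasurableSet ℝ (BorI I) C :=
    MeasurableSpace.measurableSet_generateFrom (Or.inl hC)
  have h1' : @MeasurableSet ℝ (BorI I) (X \ C) :=
    MeasurableSpace.measurableSet_generateFrom (Or.inr h1)
  have h2' : @MeasurableSet ℝ (BorI I) (C \ X) :=
    MeasurableSpace.measurableSet_generateFrom (Or.inr h2)
  have hX : X = (C \ (C \ X)) ∪ (X \ C) := by
    ext x; by_cases hx : x ∈ C <;> simp [Set.mem_diff, hx] <;> tauto
  rw [hX]
  exact ((hC'.diff h2').union h1')

lemma aux_mem_of_mem_I {X : Set ℝ} (hI : SigmaIdeal I) (hX : X ∈ I) :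
    @MeasurableSet ℝ (BorI I) X :=
  aux_borI_of_repr MeasurableSet.empty (by simpa using hX) (by simpa using hI.1)

lemma aux_mem_of_compl_mem_I {X : Set ℝ} (hI : SigmaIdeal I) (hX : Xᶜ ∈ I) :
    @MeasurableSet ℝ (BorI I) X :=
  aux_borI_of_repr MeasurableSet.univ (by simpa using hI.1) (by rw [← Set.compl_eq_univ_diff]; exact hX)

lemma aux_image2_mem (hI : SigmaIdeal I) (htrans : TranslationInvariant I)
    {N D : Set ℝ} (hN : N ∈ I) (hD : D.Countable) :
    Set.image2 (· + ·) N D ∈ I := by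
  rcases D.eq_empty_or_nonempty with rfl | hne
  · simpa using hI.1
  obtain ⟨f, rfl⟩ := hD.exists_eq_range hne
  have heq : Set.image2 (· + ·) N (Set.range f) = ⋃ n, (fun y => f n + y) '' N := by
    ext x
    simp only [Set.mem_image2, Set.mem_iUnion, Set.mem_image, Set.mem_range]
    constructor
    · rintro ⟨a, ha, b, ⟨n, rfl⟩, rfl⟩; exact ⟨n, a, ha, by ring⟩
    · rintro ⟨n, a, ha, rfl⟩; exact ⟨a, ha, f n, ⟨n, rfl⟩, by ring⟩
  rw [heq]
  exact hI.2.2.2 _ (fun n => htrans N hN (f n))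

end Aux

theorem weakerSmital_partition_nonmeasurable_implies_completely
    (I : Set (Set ℝ)) (hI : SigmaIdeal I) (hsing : ContainsSingletons I)
    (hbase : BorelBase I) (htrans : TranslationInvariant I)
    (hsmital : WeakerSmital I) :
    ∃ P : Set (Set ℝ), P ⊆ I ∧ IsPartitionOfReals P ∧
      ∀ A ⊆ P, INonmeasurable I (⋃₀ A) →
        CompletelyINonmeasurable I (⋃₀ A) := by
  classical
  obtain ⟨D, hDc, hDd, hDsm⟩ := hsmital
  -- the countable subgroup (ℚ-span) generated by D
  set G : Set ℝ := ((Submodule.span ℚ D : Submodule ℚ ℝ) : Set ℝ) with hGdef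
  have hDG : D ⊆ G := Submodule.subset_span
  have hGc : G.Countable := by
    obtain ⟨f, hf⟩ := hDc.exists_eq_range (hDd.nonempty)
    have : Countable (Submodule.span ℚ (Set.range f)) := inferInstance
    rw [hGdef, hf]
    exact Set.countable_coe_iff.mp this
  have hG0 : (0 : ℝ) ∈ G := Submodule.zero_mem _
  have hGadd : ∀ x ∈ G, ∀ y ∈ G, x + y ∈ G := fun x hx y hy => Submodule.add_mem _ hx hy
  have hGneg : ∀ x ∈ G, -x ∈ G := fun x hx => Submodule.neg_mem _ hx
  -- cosets
  set cls : ℝ → Set ℝ := fun x => {y : ℝ | y - x ∈ G} with hcls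
  refine ⟨Set.range cls, ?_, ⟨?_, ?_, ?_⟩, ?_⟩
  · -- P ⊆ I
    rintro p ⟨x, rfl⟩
    have : cls x = (fun y => x + y) '' G := by
      ext y
      simp only [hcls, Set.mem_setOf_eq, Set.mem_image]
      constructor
      · intro h; exact ⟨y - x, h, by ring⟩
      · rintro ⟨g, hg, rfl⟩; simpa using hg
    rw [this]
    exact aux_countable_mem hI hsing (hGc.image _)
  · -- nonempty
    rintro p ⟨x, rfl⟩ hp
    exact (Set.eq_empty_iff_forall_notMem.1 hp x) (by simp [hcls, hG0])
  · -- covers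
    ext x
    simp only [Set.mem_sUnion, Set.mem_range, Set.mem_univ, iff_true]
    exact ⟨cls x, ⟨x, rfl⟩, by simp [hcls, hG0]⟩
  · -- pairwise disjoint
    rintro p ⟨x, rfl⟩ q ⟨y, rfl⟩ hne
    by_contra hcap
    obtain ⟨z, hzx, hzy⟩ := Set.nonempty_iff_ne_empty.2 hcap
    apply hne
    have hxy : y - x ∈ G := by
      have h := hGadd _ hzx _ (hGneg _ hzy)
      have heq : z - x + -(z - y) = y - x := by ring
      rwa [heq] at h
    ext w
    simp only [hcls, Set.mem_setOf_eq]
    constructor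
    · intro h
      have := hGadd _ h _ (hGneg _ hxy)
      have heq : w - x + -(y - x) = w - y := by ring
      rwa [heq] at this
    · intro h
      have := hGadd _ h _ hxy
      have heq : w - y + (y - x) = w - x := by ring
      rwa [heq] at this
  · -- main claim
    intro A hA hnon B hB hBI hmeas
    set S : Set ℝ := ⋃₀ A with hS
    -- S is invariant under adding elements of G
    have hSinv : ∀ s ∈ S, ∀ g ∈ G, s + g ∈ S := by
      intro s hs g hg
      obtain ⟨p, hpA, hsp⟩ := hs
      obtain ⟨x, rfl⟩ := hA hpA
      refine ⟨cls x, hpA, ?_⟩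
      have : s - x ∈ G := hsp
      have h2 := hGadd _ this _ hg
      have heq : s - x + g = s + g - x := by ring
      rw [heq] at h2
      exact h2
    have hScinv : ∀ s ∉ S, ∀ g ∈ G, s + g ∉ S := by
      intro s hs g hg hmem
      apply hs
      have := hSinv _ hmem _ (hGneg _ hg)
      simpa using this
    -- representation of S ∩ B
    obtain ⟨C, hC, h1, h2⟩ := aux_borI_repr hI hmeas
    apply hnon
    by_cases hCI : C ∈ I
    · -- then S ∩ B ∈ I, so Sᶜ contains a positive Borel set, hence S ∈ I
      have hSB : S ∩ B ∈ I := by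
        refine hI.2.2.1 _ (C ∪ ((S ∩ B) \ C)) ?_ (aux_union2 hI hCI h1)
        intro x hx
        by_cases hxC : x ∈ C
        · exact Or.inl hxC
        · exact Or.inr ⟨hx, hxC⟩
      obtain ⟨N, hNI, hNm, hSBN⟩ := hbase _ hSB
      have hBN : B \ N ∉ I := by
        intro h
        apply hBI
        refine hI.2.2.1 _ ((B \ N) ∪ N) ?_ (aux_union2 hI h hNI)
        intro x hx
        by_cases hxN : x ∈ N
        · exact Or.inr hxN
        · exact Or.inl ⟨hx, hxN⟩
      have hsm := hDsm (B \ N) (hB.diff hNm) hBN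
      have hsub : S ⊆ (Set.image2 (· + ·) (B \ N) D)ᶜ := by
        intro s hs hmem
        obtain ⟨c, hc, d, hd, hcd⟩ := hmem
        have hcS : c ∉ S := fun hcS => hc.2 (hSBN ⟨hcS, hc.1⟩)
        exact hScinv c hcS d (hDG hd) (by rw [show c + d = s from hcd]; exact hs)
      exact aux_mem_of_mem_I hI (hI.2.2.1 _ _ hsub hsm)
    · -- C is positive; S contains a positive Borel set modulo I, hence Sᶜ ∈ I
      obtain ⟨N', hN'I, hN'm, hcov⟩ := hbase _ h2
      have hpos : C \ N' ∉ I := by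
        intro h
        apply hCI
        refine hI.2.2.1 _ ((C \ N') ∪ N') ?_ (aux_union2 hI h hN'I)
        intro x hx
        by_cases hxN : x ∈ N'
        · exact Or.inr hxN
        · exact Or.inl ⟨hx, hxN⟩
      have hsm := hDsm (C \ N') (hC.diff hN'm) hpos
      have hsub : Sᶜ ⊆ (Set.image2 (· + ·) (C \ N') D)ᶜ := by
        intro s hs hmem
        obtain ⟨c, hc, d, hd, hcd⟩ := hmem
        have hcS : c ∈ S := by
          have : c ∉ C \ (S ∩ B) := fun h => hc.2 (hcov h)
          have hcSB : c ∈ S ∩ B := by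
            by_contra h
            exact this ⟨hc.1, h⟩
          exact hcSB.1
        exact hs (by rw [← show c + d = s from hcd]; exact hSinv c hcS d (hDG hd))
      exact aux_mem_of_compl_mem_I hI (hI.2.2.1 _ _ hsub hsm)
end
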